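/- arXiv:2306.05015 — 4 statements merged into one kernel-verified Lean document; each statement's English description precedes it below -/
import Mathlib

section
/- Let 0 < ε < c < 1, set β = 1 − log c / log ε, and for each n = 0, 1, 2, … let F_n be a family of pairwise disjoint squares in D satisfying: (a) F_0 = {Q_0}; (b) if Q ∈ F_{n+1} then there exists Q̃ ∈ F_n with Q ⊂ Q̃ and μ(Q) ≤ ε μ(Q̃); (c) if Q ∈ F_n then Σ_{R ⊂ Q, R ∈ F_{n+1}} μ(R) ≥ c μ(Q). Let E = ∩_n ∪_{Q ∈ F_n} Q. Then there exist a Borel probability measure ν with ν(E) = 1 and a constant C such that ν(B(x,r)) ≤ C r^β for all x ∈ E and 0 < r ≤ 1. -/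
open MeasureTheory Filter Set Topology
open scoped ENNReal

noncomputable section

/-- Side length of generation-`n` squares: `s n = λ₁ ⋯ λₙ` (here `Λ k` is `λ_{k+1}`). -/
def sideLen (Λ : ℕ → ℝ) (n : ℕ) : ℝ := ∏ k ∈ Finset.range n, Λ k

/-- Lower-left corner of the generation-`n` square encoded by the word `w`. -/
def cornerPt (Λ : ℕ → ℝ) (w : ℕ → Bool × Bool) (n : ℕ) : ℂ :=
  ∑ k ∈ Finset.range n,
    (((if (w k).1 then sideLen Λ k - sideLen Λ (k + 1) else 0 : ℝ) : ℂ) +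
      ((if (w k).2 then sideLen Λ k - sideLen Λ (k + 1) else 0 : ℝ) : ℂ) * Complex.I)

/-- The (closed) generation-`n` square encoded by the word `w`. -/
def cSquare (Λ : ℕ → ℝ) (w : ℕ → Bool × Bool) (n : ℕ) : Set ℂ :=
  {z : ℂ | (cornerPt Λ w n).re ≤ z.re ∧ z.re ≤ (cornerPt Λ w n).re + sideLen Λ n ∧
    (cornerPt Λ w n).im ≤ z.im ∧ z.im ≤ (cornerPt Λ w n).im + sideLen Λ n}

/-- The family `𝒟_n` of generation-`n` squares. -/
def genSq (Λ : ℕ → ℝ) (n : ℕ) : Set (Set ℂ) := {Q | ∃ w, Q = cSquare Λ w n}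

/-- The planar Cantor set `K = ⋂ₙ ⋃ⱼ Qⱼⁿ`. -/
def cantorK (Λ : ℕ → ℝ) : Set ℂ := ⋂ n, ⋃ w : ℕ → Bool × Bool, cSquare Λ w n

/-- The linear density `a_n = 4^{-n}/s_n` at generation `n`. -/
def linDensity (Λ : ℕ → ℝ) (n : ℕ) : ℝ := 1 / (4 ^ n * sideLen Λ n)

set_option linter.unusedSectionVars false
set_option linter.unusedVariables false
set_option maxHeartbeats 1000000

namespace Hung

variable {Λ : ℕ → ℝ} {lam : ℝ}

def cor1 (Λ : ℕ → ℝ) (u : ℕ → Bool) (n : ℕ) : ℝ :=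
  ∑ k ∈ Finset.range n, (if u k then sideLen Λ k - sideLen Λ (k + 1) else 0)

def iv (Λ : ℕ → ℝ) (u : ℕ → Bool) (n : ℕ) : Set ℝ :=
  Icc (cor1 Λ u n) (cor1 Λ u n + sideLen Λ n)

section basic

variable (hΛ : ∀ n, 1 / 4 ≤ Λ n ∧ Λ n ≤ lam) (hlam : lam < 1 / 2)

omit hlam in
include hΛ in
theorem sideLen_pos (n : ℕ) : 0 < sideLen Λ n := by
  apply Finset.prod_pos
  intro k _
  linarith [(hΛ k).1]

omit hΛ hlam in
theorem sideLen_succ (n : ℕ) : sideLen Λ (n + 1) = sideLen Λ n * Λ n := by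
  simp [sideLen, Finset.prod_range_succ]

include hΛ hlam in
theorem sideLen_succ_le (n : ℕ) : sideLen Λ (n + 1) ≤ lam * sideLen Λ n := by
  rw [sideLen_succ]
  rw [mul_comm]
  exact mul_le_mul_of_nonneg_right (hΛ n).2 (le_of_lt (sideLen_pos hΛ n))

include hΛ hlam in
theorem sideLen_anti {m n : ℕ} (h : m ≤ n) : sideLen Λ n ≤ sideLen Λ m := by
  induction n with
  | zero => simp at h; simp [h]
  | succ k ih =>
    rcases Nat.lt_or_ge m (k+1) with h'|h'
    · have := ih (Nat.lt_succ_iff.mp h')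
      calc sideLen Λ (k+1) ≤ lam * sideLen Λ k := sideLen_succ_le hΛ hlam k
        _ ≤ (1/2) * sideLen Λ k := by
            apply mul_le_mul_of_nonneg_right (le_of_lt hlam) (le_of_lt (sideLen_pos hΛ k))
        _ ≤ sideLen Λ k := by linarith [sideLen_pos hΛ k]
        _ ≤ sideLen Λ m := this
    · have : m = k + 1 := le_antisymm h h'
      simp [this]

include hΛ hlam in
theorem sideLen_le_pow (n : ℕ) : sideLen Λ n ≤ (1/2) ^ n := by
  induction n with
  | zero => simp [sideLen]
  | succ k ih =>
    calc sideLen Λ (k+1) ≤ lam * sideLen Λ k := sideLen_succ_le hΛ hlam k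
      _ ≤ (1/2) * (1/2)^k := by
          apply mul_le_mul (le_of_lt hlam) ih (le_of_lt (sideLen_pos hΛ k))
          norm_num
      _ = (1/2)^(k+1) := by ring

omit hlam in
include hΛ in
theorem pow_le_sideLen (n : ℕ) : (1/4 : ℝ) ^ n ≤ sideLen Λ n := by
  induction n with
  | zero => simp [sideLen]
  | succ k ih =>
    rw [sideLen_succ, pow_succ]
    apply mul_le_mul ih (hΛ k).1 (by norm_num) (le_of_lt (sideLen_pos hΛ k))

end basic

theorem cornerPt_re (Λ : ℕ → ℝ) (w : ℕ → Bool × Bool) (n : ℕ) :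
    (cornerPt Λ w n).re = cor1 Λ (fun k => (w k).1) n := by
  simp [cornerPt, cor1, Complex.re_sum]

theorem cornerPt_im (Λ : ℕ → ℝ) (w : ℕ → Bool × Bool) (n : ℕ) :
    (cornerPt Λ w n).im = cor1 Λ (fun k => (w k).2) n := by
  simp [cornerPt, cor1, Complex.im_sum]

theorem mem_cSquare (Λ : ℕ → ℝ) (w : ℕ → Bool × Bool) (n : ℕ) (z : ℂ) :
    z ∈ cSquare Λ w n ↔
      z.re ∈ iv Λ (fun k => (w k).1) n ∧ z.im ∈ iv Λ (fun k => (w k).2) n := by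
  simp [cSquare, iv, cornerPt_re, cornerPt_im, Set.mem_Icc]
  tauto

theorem cor1_congr {u v : ℕ → Bool} {n : ℕ} (h : ∀ k < n, u k = v k) :
    cor1 Λ u n = cor1 Λ v n := by
  unfold cor1
  apply Finset.sum_congr rfl
  intro k hk
  rw [h k (Finset.mem_range.mp hk)]

theorem iv_congr {u v : ℕ → Bool} {n : ℕ} (h : ∀ k < n, u k = v k) :
    iv Λ u n = iv Λ v n := by
  unfold iv; rw [cor1_congr h]

section geom

variable (hΛ : ∀ n, 1 / 4 ≤ Λ n ∧ Λ n ≤ lam) (hlam : lam < 1 / 2)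
include hΛ hlam

theorem iv_succ_subset (u : ℕ → Bool) (n : ℕ) : iv Λ u (n + 1) ⊆ iv Λ u n := by
  have h1 : cor1 Λ u (n+1) = cor1 Λ u n + (if u n then sideLen Λ n - sideLen Λ (n+1) else 0) := by
    simp [cor1, Finset.sum_range_succ]
  have hs : sideLen Λ (n+1) ≤ sideLen Λ n := sideLen_anti hΛ hlam (Nat.le_succ n)
  have hs' : 0 ≤ sideLen Λ n - sideLen Λ (n+1) := by linarith
  apply Set.Icc_subset_Icc
  · rw [h1]; split <;> linarith
  · rw [h1]; split <;> linarith

theorem iv_subset {u : ℕ → Bool} {n m : ℕ} (h : n ≤ m) : iv Λ u m ⊆ iv Λ u n := by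
  induction m with
  | zero => simp at h; simp [h]
  | succ k ih =>
    rcases Nat.lt_or_ge n (k+1) with h'|h'
    · exact (iv_succ_subset hΛ hlam u k).trans (ih (Nat.lt_succ_iff.mp h'))
    · have : n = k + 1 := le_antisymm h h'
      simp [this]

/-- Separation: if the words first disagree at `j`, points in the respective intervals
(of generations `> j`) are at distance `≥ (1-2λ)·s_j`. -/
theorem iv_sep {u v : ℕ → Bool} {j n m : ℕ} (hn : j < n) (hm : j < m)
    (hj : u j ≠ v j) (hmin : ∀ k < j, u k = v k) :
    ∀ x ∈ iv Λ u n, ∀ z ∈ iv Λ v m, (1 - 2 * lam) * sideLen Λ j ≤ |x - z| := by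
  have key : ∀ (u v : ℕ → Bool) (n m : ℕ), j < n → j < m → u j = true → v j = false →
      (∀ k < j, u k = v k) →
      ∀ x ∈ iv Λ u n, ∀ z ∈ iv Λ v m, (1 - 2*lam) * sideLen Λ j ≤ x - z := by
    intro u v n m hn hm huj hvj hmin x hx z hz
    have hx' : x ∈ iv Λ u (j+1) := iv_subset hΛ hlam hn hx
    have hz' : z ∈ iv Λ v (j+1) := iv_subset hΛ hlam hm hz
    have hcu : cor1 Λ u (j+1) = cor1 Λ u j + (sideLen Λ j - sideLen Λ (j+1)) := by
      simp [cor1, Finset.sum_range_succ, huj]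
    have hcv : cor1 Λ v (j+1) = cor1 Λ v j := by
      simp [cor1, Finset.sum_range_succ, hvj]
    have hcc : cor1 Λ u j = cor1 Λ v j := cor1_congr hmin
    have h1 : cor1 Λ u (j+1) ≤ x := hx'.1
    have h2 : z ≤ cor1 Λ v (j+1) + sideLen Λ (j+1) := hz'.2
    have hss : sideLen Λ (j+1) ≤ lam * sideLen Λ j := sideLen_succ_le hΛ hlam j
    have : (1 - 2*lam) * sideLen Λ j = sideLen Λ j - 2 * (lam * sideLen Λ j) := by ring
    rw [this]
    have := sideLen_pos hΛ j
    nlinarith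
  cases hu : u j with
  | true =>
    have hv : v j = false := by
      cases hv' : v j
      · rfl
      · exact absurd (hu.trans hv'.symm) hj
    intro x hx z hz
    have := key u v n m hn hm hu hv hmin x hx z hz
    exact this.trans (le_abs_self _)
  | false =>
    have hv : v j = true := by
      cases hv' : v j
      · exact absurd (hu.trans hv'.symm) hj
      · rfl
    intro x hx z hz
    have := key v u m n hm hn hv hu (fun k hk => (hmin k hk).symm) z hz x hx
    calc (1-2*lam) * sideLen Λ j ≤ z - x := this
      _ ≤ |x - z| := by rw [abs_sub_comm]; exact le_abs_self _

theorem iv_tri {u v : ℕ → Bool} {n m : ℕ} (h : n ≤ m)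
    (hne : (iv Λ u n ∩ iv Λ v m).Nonempty) : iv Λ v m ⊆ iv Λ u n := by
  by_cases hall : ∀ k < n, v k = u k
  · rw [← iv_congr hall]
    exact iv_subset hΛ hlam h
  · exfalso
    push_neg at hall
    obtain ⟨j0, hj0, hne0⟩ := hall
    have hex : ∃ j, v j ≠ u j := ⟨j0, hne0⟩
    classical
    have hj : v (Nat.find hex) ≠ u (Nat.find hex) := Nat.find_spec hex
    have hjmin : ∀ k < Nat.find hex, v k = u k := fun k hk => by
      have := Nat.find_min hex hk
      simpa using this
    have hjle : Nat.find hex ≤ j0 := Nat.find_min' hex hne0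
    have hjn : Nat.find hex < n := lt_of_le_of_lt hjle hj0
    obtain ⟨x, hx1, hx2⟩ := hne
    have hsep := iv_sep hΛ hlam (n := m) (m := n) (lt_of_lt_of_le hjn h) hjn hj hjmin x hx2 x hx1
    simp only [sub_self, abs_zero] at hsep
    have h1 : 0 < (1 - 2*lam) * sideLen Λ (Nat.find hex) := by
      have hs := sideLen_pos hΛ (Nat.find hex)
      nlinarith
    linarith

end geom

end Hung

namespace Hung
variable {Λ : ℕ → ℝ} {lam : ℝ}

section sq
variable (hΛ : ∀ n, 1 / 4 ≤ Λ n ∧ Λ n ≤ lam) (hlam : lam < 1 / 2)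
include hΛ hlam

omit hlam in
theorem cSquare_nonempty (w : ℕ → Bool × Bool) (n : ℕ) : (cSquare Λ w n).Nonempty := by
  refine ⟨cornerPt Λ w n, ?_⟩
  have := (sideLen_pos hΛ n).le
  exact ⟨le_refl _, by linarith, le_refl _, by linarith⟩

omit hΛ hlam in
theorem isClosed_cSquare (w : ℕ → Bool × Bool) (n : ℕ) : IsClosed (cSquare Λ w n) := by
  have : cSquare Λ w n =
      (Complex.reCLM ⁻¹' Icc (cornerPt Λ w n).re ((cornerPt Λ w n).re + sideLen Λ n)) ∩
      (Complex.imCLM ⁻¹' Icc (cornerPt Λ w n).im ((cornerPt Λ w n).im + sideLen Λ n)) := by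
    ext z
    simp [cSquare, Set.mem_Icc]
    tauto
  rw [this]
  exact (isClosed_Icc.preimage Complex.reCLM.continuous).inter
    (isClosed_Icc.preimage Complex.imCLM.continuous)

omit hΛ hlam in
theorem measurableSet_cSquare (w : ℕ → Bool × Bool) (n : ℕ) :
    MeasurableSet (cSquare Λ w n) := (isClosed_cSquare w n).measurableSet

omit hΛ hlam in
theorem cSquare_congr {w v : ℕ → Bool × Bool} {n : ℕ} (h : ∀ k < n, w k = v k) :
    cSquare Λ w n = cSquare Λ v n := by
  ext z
  have h1 : iv Λ (fun k => (w k).1) n = iv Λ (fun k => (v k).1) n :=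
    iv_congr (fun k hk => by rw [h k hk])
  have h2 : iv Λ (fun k => (w k).2) n = iv Λ (fun k => (v k).2) n :=
    iv_congr (fun k hk => by rw [h k hk])
  rw [mem_cSquare, mem_cSquare, h1, h2]

theorem cSquare_mono {w : ℕ → Bool × Bool} {n m : ℕ} (h : n ≤ m) :
    cSquare Λ w m ⊆ cSquare Λ w n := by
  intro z hz
  rw [mem_cSquare] at hz ⊢
  exact ⟨iv_subset hΛ hlam h hz.1, iv_subset hΛ hlam h hz.2⟩

theorem cSquare_tri {w v : ℕ → Bool × Bool} {n m : ℕ} (h : n ≤ m)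
    (hne : (cSquare Λ v m ∩ cSquare Λ w n).Nonempty) :
    cSquare Λ v m ⊆ cSquare Λ w n := by
  obtain ⟨z, hz1, hz2⟩ := hne
  rw [mem_cSquare] at hz1 hz2
  have h1 := iv_tri hΛ hlam h ⟨z.re, hz2.1, hz1.1⟩
  have h2 := iv_tri hΛ hlam h ⟨z.im, hz2.2, hz1.2⟩
  intro y hy
  rw [mem_cSquare] at hy ⊢
  exact ⟨h1 hy.1, h2 hy.2⟩

/-- General trichotomy for squares of any generations. -/
theorem cSquare_tri' {w v : ℕ → Bool × Bool} {n m : ℕ}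
    (hne : (cSquare Λ v m ∩ cSquare Λ w n).Nonempty) :
    cSquare Λ v m ⊆ cSquare Λ w n ∨ cSquare Λ w n ⊆ cSquare Λ v m := by
  rcases le_total n m with h|h
  · exact Or.inl (cSquare_tri hΛ hlam h hne)
  · exact Or.inr (cSquare_tri hΛ hlam h (by rwa [Set.inter_comm] at hne))

/-- Separation of distinct generation-(k+1) squares. -/
theorem cSquare_sep {w v : ℕ → Bool × Bool} {k : ℕ}
    (hne : cSquare Λ w (k+1) ≠ cSquare Λ v (k+1)) {x z : ℂ}
    (hx : x ∈ cSquare Λ w (k+1)) (hz : z ∈ cSquare Λ v (k+1)) :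
    (1 - 2 * lam) * sideLen Λ k ≤ dist x z := by
  have hwv : ¬ (∀ j < k + 1, w j = v j) := fun h => hne (cSquare_congr h)
  push_neg at hwv
  obtain ⟨j0, hj0, hne0⟩ := hwv
  rw [mem_cSquare] at hx hz
  have hcoord : ((w j0).1 ≠ (v j0).1) ∨ ((w j0).2 ≠ (v j0).2) := by
    by_contra hcon
    push_neg at hcon
    exact hne0 (Prod.ext hcon.1 hcon.2)
  -- helper applying 1-D separation for given coordinate words
  have key : ∀ (a b : ℕ → Bool) (xr zr : ℝ), a j0 ≠ b j0 →
      xr ∈ iv Λ a (k+1) → zr ∈ iv Λ b (k+1) →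
      (1 - 2*lam) * sideLen Λ k ≤ |xr - zr| := by
    intro a b xr zr hab hxr hzr
    classical
    have hex : ∃ j, a j ≠ b j := ⟨j0, hab⟩
    let j := Nat.find hex
    have hj : a j ≠ b j := Nat.find_spec hex
    have hjmin : ∀ i < j, a i = b i := fun i hi => by simpa using Nat.find_min hex hi
    have hjle : j ≤ j0 := Nat.find_min' hex hab
    have hjk : j < k + 1 := lt_of_le_of_lt hjle hj0
    have := iv_sep hΛ hlam hjk hjk hj hjmin xr hxr zr hzr
    calc (1 - 2*lam) * sideLen Λ k ≤ (1-2*lam) * sideLen Λ j := by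
          apply mul_le_mul_of_nonneg_left (sideLen_anti hΛ hlam (Nat.lt_succ_iff.mp hjk))
          linarith
      _ ≤ |xr - zr| := this
  have hdist_re : |x.re - z.re| ≤ dist x z := by
    rw [Complex.dist_eq]
    have : x.re - z.re = (x - z).re := by simp
    rw [this]
    exact Complex.abs_re_le_norm _
  have hdist_im : |x.im - z.im| ≤ dist x z := by
    rw [Complex.dist_eq]
    have : x.im - z.im = (x - z).im := by simp
    rw [this]
    exact Complex.abs_im_le_norm _
  rcases hcoord with h|h
  · exact (key _ _ _ _ h hx.1 hz.1).trans hdist_re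
  · exact (key _ _ _ _ h hx.2 hz.2).trans hdist_im

omit hΛ hlam in
/-- All generation-`n` squares: a finite union suffices. -/
theorem iUnion_cSquare_eq (n : ℕ) :
    (⋃ w : ℕ → Bool × Bool, cSquare Λ w n) =
      ⋃ v : Fin n → Bool × Bool,
        cSquare Λ (fun k => if h : k < n then v ⟨k, h⟩ else (false, false)) n := by
  ext z
  simp only [Set.mem_iUnion]
  constructor
  · rintro ⟨w, hw⟩
    refine ⟨fun i => w i, ?_⟩
    have heq : cSquare Λ
        (fun k => if h : k < n then (fun i : Fin n => w i.1) ⟨k, h⟩ else (false, false)) n =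
        cSquare Λ w n := cSquare_congr (fun k hk => by simp [hk])
    rw [heq]; exact hw
  · rintro ⟨v, hv⟩
    exact ⟨_, hv⟩

omit hΛ hlam in
theorem measurableSet_unionSquares (n : ℕ) :
    MeasurableSet (⋃ w : ℕ → Bool × Bool, cSquare Λ w n) := by
  rw [iUnion_cSquare_eq]
  exact MeasurableSet.iUnion (fun v => measurableSet_cSquare _ _)

omit hΛ hlam in
theorem countable_squares : Set.Countable {S : Set ℂ | ∃ m w, S = cSquare Λ w m} := by
  have : {S : Set ℂ | ∃ m w, S = cSquare Λ w m} =
      ⋃ m : ℕ, Set.range (fun v : Fin m → Bool × Bool =>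
        cSquare Λ (fun k => if h : k < m then v ⟨k, h⟩ else (false, false)) m) := by
    ext S
    simp only [Set.mem_setOf_eq, Set.mem_iUnion, Set.mem_range]
    constructor
    · rintro ⟨m, w, rfl⟩
      exact ⟨m, fun i => w i, (cSquare_congr (fun k hk => by simp [hk]))⟩
    · rintro ⟨m, v, rfl⟩
      exact ⟨m, _, rfl⟩
  rw [this]
  exact Set.countable_iUnion (fun m => Set.countable_range _)

omit hlam in
/-- crude diameter bound -/
theorem cSquare_dist_le {w : ℕ → Bool × Bool} {n : ℕ} {x z : ℂ}
    (hx : x ∈ cSquare Λ w n) (hz : z ∈ cSquare Λ w n) :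
    dist x z ≤ 2 * sideLen Λ n := by
  obtain ⟨h1, h2, h3, h4⟩ := hx
  obtain ⟨h5, h6, h7, h8⟩ := hz
  rw [Complex.dist_eq]
  calc ‖x - z‖ ≤ |(x-z).re| + |(x-z).im| := Complex.norm_le_abs_re_add_abs_im _
    _ ≤ sideLen Λ n + sideLen Λ n := by
        apply add_le_add
        · rw [Complex.sub_re, abs_le]; constructor <;> linarith
        · rw [Complex.sub_im, abs_le]; constructor <;> linarith
    _ = 2 * sideLen Λ n := by ring

end sq
end Hung

namespace Hung

attribute [local instance] Classical.propDecidable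

def parF (F : ℕ → Set (Set ℂ)) (n : ℕ) (R : Set ℂ) : Set ℂ :=
  if h : ∃ Q ∈ F n, R ⊆ Q then h.choose else ∅

def childSet (F : ℕ → Set (Set ℂ)) (n : ℕ) (Q : Set ℂ) : Set (Set ℂ) :=
  {R | R ∈ F (n + 1) ∧ R ⊆ Q}

def Wt (μ : Measure ℂ) (F : ℕ → Set (Set ℂ)) (n : ℕ) (Q : Set ℂ) : ℝ≥0∞ :=
  ∑' R : {R : Set ℂ // R ∈ F (n + 1) ∧ R ⊆ Q}, μ R

def nuVal (μ : Measure ℂ) (F : ℕ → Set (Set ℂ)) : ℕ → Set ℂ → ℝ≥0∞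
  | 0, Q => if Q ∈ F 0 then 1 else 0
  | n+1, R => if R ∈ F (n+1) then
      nuVal μ F n (parF F n R) * μ R / Wt μ F n (parF F n R) else 0

section tree

variable {Λ : ℕ → ℝ} {lam : ℝ} {μ : Measure ℂ} {F : ℕ → Set (Set ℂ)} {ε c : ℝ}
variable (hΛ : ∀ n, 1 / 4 ≤ Λ n ∧ Λ n ≤ lam) (hlam : lam < 1 / 2)
variable (hFD : ∀ n, ∀ Q ∈ F n, ∃ (m : ℕ) (w : ℕ → Bool × Bool), Q = cSquare Λ w m)
variable (hμQ : ∀ (w : ℕ → Bool × Bool) (n : ℕ), μ (cSquare Λ w n) = (4 : ℝ≥0∞)⁻¹ ^ n)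
variable (hdisj : ∀ n, (F n).PairwiseDisjoint id)
variable (hF0 : F 0 = {cSquare Λ (fun _ => (false, false)) 0})
variable (hb : ∀ n, ∀ Q ∈ F (n + 1), ∃ Q' ∈ F n, Q ⊆ Q' ∧ μ Q ≤ ENNReal.ofReal ε * μ Q')
variable (hc' : ∀ n, ∀ Q ∈ F n,
      ENNReal.ofReal c * μ Q ≤ ∑' R : {R : Set ℂ // R ∈ F (n + 1) ∧ R ⊆ Q}, μ R)
variable (hε : 0 < ε) (hεc : ε < c) (hcc : c < 1)

include hFD

theorem hQmeas {n : ℕ} {Q : Set ℂ} (hQ : Q ∈ F n) : MeasurableSet Q := by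
  obtain ⟨m, w, rfl⟩ := hFD n Q hQ
  exact measurableSet_cSquare w m

theorem hQclosed {n : ℕ} {Q : Set ℂ} (hQ : Q ∈ F n) : IsClosed Q := by
  obtain ⟨m, w, rfl⟩ := hFD n Q hQ
  exact isClosed_cSquare w m

include hΛ in
theorem hQne {n : ℕ} {Q : Set ℂ} (hQ : Q ∈ F n) : Q.Nonempty := by
  obtain ⟨m, w, rfl⟩ := hFD n Q hQ
  exact cSquare_nonempty hΛ w m

include hμQ in
theorem hQpos {n : ℕ} {Q : Set ℂ} (hQ : Q ∈ F n) : 0 < μ Q := by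
  obtain ⟨m, w, rfl⟩ := hFD n Q hQ
  rw [hμQ]
  exact ENNReal.pow_pos (by norm_num) m

include hμQ in
theorem hQle1 {n : ℕ} {Q : Set ℂ} (hQ : Q ∈ F n) : μ Q ≤ 1 := by
  obtain ⟨m, w, rfl⟩ := hFD n Q hQ
  rw [hμQ]
  exact pow_le_one₀ (by norm_num) (by norm_num)

include hμQ in
theorem hQfin {n : ℕ} {Q : Set ℂ} (hQ : Q ∈ F n) : μ Q ≠ ⊤ :=
  fun h => by simpa [h] using hQle1 hFD hμQ hQ

theorem hcnt (n : ℕ) : (F n).Countable :=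
  Set.Countable.mono (fun Q hQ => hFD n Q hQ) countable_squares

include hb in
theorem par_spec {n : ℕ} {R : Set ℂ} (hR : R ∈ F (n + 1)) :
    parF F n R ∈ F n ∧ R ⊆ parF F n R := by
  obtain ⟨Q', hQ', hsub, _⟩ := hb n R hR
  have hex : ∃ Q ∈ F n, R ⊆ Q := ⟨Q', hQ', hsub⟩
  rw [parF, dif_pos hex]
  exact ⟨hex.choose_spec.1, hex.choose_spec.2⟩

include hΛ hb hdisj in
theorem par_eq {n : ℕ} {R Q : Set ℂ} (hR : R ∈ F (n + 1)) (hQ : Q ∈ F n) (hsub : R ⊆ Q) :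
    parF F n R = Q := by
  obtain ⟨hm, hs⟩ := par_spec (hFD := hFD) (hb := hb) hR
  by_contra hne
  have hd := (hdisj n) hm hQ hne
  have hRne := hQne hΛ hFD hR
  obtain ⟨x, hx⟩ := hRne
  exact (Set.disjoint_left.mp hd (hs hx)) (hsub hx)

include hμQ hdisj in
theorem Wt_le {n : ℕ} {Q : Set ℂ} (hQ : Q ∈ F n) : Wt μ F n Q ≤ μ Q := by
  have hsub : (⋃ R ∈ childSet F n Q, R) ⊆ Q := by
    rintro x hx
    simp only [Set.mem_iUnion] at hx
    obtain ⟨R, hR, hxR⟩ := hx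
    exact hR.2 hxR
  have hcnt' : (childSet F n Q).Countable :=
    Set.Countable.mono (fun R hR => hR.1) (hcnt hFD (n+1))
  have hmeas : ∀ R ∈ childSet F n Q, MeasurableSet (id R) :=
    fun R hR => hQmeas hFD hR.1
  have hdisj' : (childSet F n Q).PairwiseDisjoint id :=
    fun R hR R' hR' hne => (hdisj (n+1)) hR.1 hR'.1 hne
  have := measure_biUnion (μ := μ) hcnt' hdisj' hmeas
  calc Wt μ F n Q = μ (⋃ R ∈ childSet F n Q, id R) := this.symm
    _ ≤ μ Q := measure_mono (by simpa using hsub)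

include hc' hμQ in
theorem Wt_pos {n : ℕ} {Q : Set ℂ} (hQ : Q ∈ F n) (hc0 : 0 < c) : 0 < Wt μ F n Q := by
  have h1 := hc' n Q hQ
  have h2 : (0:ℝ≥0∞) < ENNReal.ofReal c * μ Q :=
    ENNReal.mul_pos (ENNReal.ofReal_pos.mpr hc0).ne' (hQpos hFD hμQ hQ).ne'
  exact lt_of_lt_of_le h2 h1

include hμQ hdisj in
theorem Wt_fin {n : ℕ} {Q : Set ℂ} (hQ : Q ∈ F n) : Wt μ F n Q ≠ ⊤ :=
  fun h => by
    have := Wt_le hFD hμQ hdisj hQ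
    rw [h] at this
    exact hQfin hFD hμQ hQ (top_le_iff.mp this)

omit hFD in
theorem nuVal_zero {Q : Set ℂ} (hQ : Q ∈ F 0) : nuVal μ F 0 Q = 1 := by
  simp [nuVal, hQ]

omit hFD in
theorem nuVal_succ {n : ℕ} {R : Set ℂ} (hR : R ∈ F (n + 1)) :
    nuVal μ F (n + 1) R = nuVal μ F n (parF F n R) * μ R / Wt μ F n (parF F n R) := by
  simp [nuVal, hR]

omit hFD in
theorem nuVal_not {n : ℕ} {Q : Set ℂ} (hQ : Q ∉ F n) : nuVal μ F n Q = 0 := by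
  cases n <;> simp [nuVal, hQ]

include hΛ hb hdisj in
theorem nuVal_child {n : ℕ} {R Q : Set ℂ} (hR : R ∈ F (n + 1)) (hQ : Q ∈ F n) (hsub : R ⊆ Q) :
    nuVal μ F (n + 1) R = nuVal μ F n Q * μ R / Wt μ F n Q := by
  rw [nuVal_succ hR, par_eq (hΛ := hΛ) (hFD := hFD) (hdisj := hdisj) (hb := hb) hR hQ hsub]

include hΛ hμQ hb hdisj hc' in
theorem sum_children (hc0 : 0 < c) {n : ℕ} {Q : Set ℂ} (hQ : Q ∈ F n) :
    ∑' R : {R : Set ℂ // R ∈ F (n + 1) ∧ R ⊆ Q}, nuVal μ F (n + 1) R = nuVal μ F n Q := by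
  have heach : ∀ R : {R : Set ℂ // R ∈ F (n + 1) ∧ R ⊆ Q},
      nuVal μ F (n + 1) R = nuVal μ F n Q / Wt μ F n Q * μ R := by
    intro R
    rw [nuVal_child (hΛ := hΛ) (hFD := hFD) (hdisj := hdisj) (hb := hb) R.2.1 hQ R.2.2]
    rw [div_eq_mul_inv, div_eq_mul_inv]
    ring
  rw [tsum_congr heach, ENNReal.tsum_mul_left]
  have : (∑' R : {R : Set ℂ // R ∈ F (n + 1) ∧ R ⊆ Q}, μ R) = Wt μ F n Q := rfl
  rw [this, ENNReal.div_mul_cancel (Wt_pos (hFD := hFD) (hμQ := hμQ) (hc' := hc') hQ hc0).ne' (Wt_fin (hFD := hFD) (hμQ := hμQ) (hdisj := hdisj) hQ)]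

end tree
end Hung

namespace Hung

section tree2

variable {Λ : ℕ → ℝ} {lam : ℝ} {μ : Measure ℂ} {F : ℕ → Set (Set ℂ)} {ε c : ℝ}
variable (hΛ : ∀ n, 1 / 4 ≤ Λ n ∧ Λ n ≤ lam) (hlam : lam < 1 / 2)
variable (hFD : ∀ n, ∀ Q ∈ F n, ∃ (m : ℕ) (w : ℕ → Bool × Bool), Q = cSquare Λ w m)
variable (hμQ : ∀ (w : ℕ → Bool × Bool) (n : ℕ), μ (cSquare Λ w n) = (4 : ℝ≥0∞)⁻¹ ^ n)
variable (hdisj : ∀ n, (F n).PairwiseDisjoint id)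
variable (hF0 : F 0 = {cSquare Λ (fun _ => (false, false)) 0})
variable (hb : ∀ n, ∀ Q ∈ F (n + 1), ∃ Q' ∈ F n, Q ⊆ Q' ∧ μ Q ≤ ENNReal.ofReal ε * μ Q')
variable (hc' : ∀ n, ∀ Q ∈ F n,
      ENNReal.ofReal c * μ Q ≤ ∑' R : {R : Set ℂ // R ∈ F (n + 1) ∧ R ⊆ Q}, μ R)
variable (hε : 0 < ε) (hεc : ε < c) (hcc : c < 1)

include hΛ hFD hdisj hb in
theorem regroup {n : ℕ} (f : Set ℂ → ℝ≥0∞) (hf : ∀ S, S ∉ F (n + 1) → f S = 0) :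
    ∑' R : ↥(F (n + 1)), f R.1 =
      ∑' Q : ↥(F n), ∑' R : {R : Set ℂ // R ∈ F (n + 1) ∧ R ⊆ Q.1}, f R.1 := by
  have h1 : ∑' R : ↥(F (n + 1)), f R.1 = ∑' S : Set ℂ, (F (n + 1)).indicator f S :=
    tsum_subtype _ f
  have h2 : ∀ Q : ↥(F n),
      (∑' R : {R : Set ℂ // R ∈ F (n + 1) ∧ R ⊆ Q.1}, f R.1) =
        ∑' S : Set ℂ, ({R | R ∈ F (n + 1) ∧ R ⊆ Q.1}).indicator f S := by
    intro Q
    exact tsum_subtype _ f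
  rw [h1, tsum_congr h2, ENNReal.tsum_comm]
  apply tsum_congr
  intro S
  by_cases hS : S ∈ F (n + 1)
  · have hP := par_spec (hFD := hFD) (hb := hb) hS
    rw [Set.indicator_of_mem hS]
    rw [tsum_eq_single (⟨parF F n S, hP.1⟩ : ↥(F n))]
    · rw [Set.indicator_of_mem (show S ∈ {R | R ∈ F (n+1) ∧ R ⊆ parF F n S} from ⟨hS, hP.2⟩)]
    · intro Q hQ
      apply Set.indicator_of_notMem
      rintro ⟨h1', h2'⟩
      apply hQ
      apply Subtype.ext
      exact (par_eq (hΛ := hΛ) (hFD := hFD) (hdisj := hdisj) (hb := hb) hS Q.2 h2').symm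
  · rw [Set.indicator_of_notMem hS]
    symm
    rw [ENNReal.tsum_eq_zero]
    intro Q
    rcases Set.indicator_eq_zero_or_self {R | R ∈ F (n+1) ∧ R ⊆ Q.1} f S with h|h
    · exact h
    · rw [h]; exact hf S hS

include hΛ hFD hμQ hdisj hF0 hb hc' hε hεc in
theorem total_sum (n : ℕ) : ∑' Q : ↥(F n), nuVal μ F n Q.1 = 1 := by
  have hc0 : 0 < c := hε.trans hεc
  induction n with
  | zero =>
    have huniq : ∀ Q : ↥(F 0), nuVal μ F 0 Q.1 = 1 := fun Q => nuVal_zero Q.2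
    rw [tsum_congr huniq]
    rw [hF0]
    haveI : Unique ↥({cSquare Λ (fun _ => (false, false)) 0} : Set (Set ℂ)) :=
      Set.uniqueSingleton _
    rw [tsum_eq_single default (fun b hb' => absurd (Unique.eq_default b) hb')]
  | succ n ih =>
    rw [regroup (hΛ := hΛ) (hFD := hFD) (hdisj := hdisj) (hb := hb)
      (fun S => nuVal μ F (n+1) S) (fun S hS => nuVal_not hS)]
    rw [tsum_congr (fun Q : ↥(F n) =>
      sum_children (hΛ := hΛ) (hFD := hFD) (hμQ := hμQ) (hdisj := hdisj) (hb := hb)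
        (hc' := hc') hc0 Q.2)]
    exact ih

include hΛ hFD hμQ hdisj hF0 hb hc' hε hεc in
theorem nuVal_le_one {n : ℕ} {Q : Set ℂ} (hQ : Q ∈ F n) : nuVal μ F n Q ≤ 1 := by
  have := ENNReal.le_tsum (f := fun Q' : ↥(F n) => nuVal μ F n Q'.1) ⟨Q, hQ⟩
  rw [total_sum (hΛ := hΛ) (hFD := hFD) (hμQ := hμQ) (hdisj := hdisj) (hF0 := hF0)
    (hb := hb) (hc' := hc') (hε := hε) (hεc := hεc) n] at this
  exact this

include hFD hμQ hb in
theorem mu_le_pow {n : ℕ} {Q : Set ℂ} (hQ : Q ∈ F n) : μ Q ≤ (ENNReal.ofReal ε) ^ n := by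
  induction n generalizing Q with
  | zero => simpa using hQle1 hFD hμQ hQ
  | succ n ih =>
    obtain ⟨Q', hQ', hsub, hle⟩ := hb n Q hQ
    calc μ Q ≤ ENNReal.ofReal ε * μ Q' := hle
      _ ≤ ENNReal.ofReal ε * (ENNReal.ofReal ε) ^ n :=
          mul_le_mul_right (ih hQ') _
      _ = (ENNReal.ofReal ε) ^ (n+1) := (pow_succ' _ _).symm

include hΛ hFD hμQ hdisj hF0 hb hc' hε hεc in
theorem nuVal_le_pow {n : ℕ} {Q : Set ℂ} (hQ : Q ∈ F n) :
    nuVal μ F n Q ≤ ((ENNReal.ofReal c)⁻¹) ^ n * μ Q := by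
  have hc0 : 0 < c := hε.trans hεc
  induction n generalizing Q with
  | zero =>
    rw [nuVal_zero hQ]
    rw [hF0] at hQ
    rw [Set.mem_singleton_iff] at hQ
    subst hQ
    rw [hμQ]
    simp
  | succ n ih =>
    have hP := par_spec (hFD := hFD) (hb := hb) hQ
    have hPpos := hQpos hFD hμQ hP.1
    have hPfin := hQfin hFD hμQ hP.1
    rw [nuVal_succ hQ]
    calc nuVal μ F n (parF F n Q) * μ Q / Wt μ F n (parF F n Q)
        ≤ ((ENNReal.ofReal c)⁻¹ ^ n * μ (parF F n Q)) * μ Q /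
            (ENNReal.ofReal c * μ (parF F n Q)) := by
          apply ENNReal.div_le_div
          · exact mul_le_mul_left (ih hP.1) _
          · exact hc' n _ hP.1
      _ = (ENNReal.ofReal c)⁻¹ ^ (n+1) * μ Q := by
          rw [show ((ENNReal.ofReal c)⁻¹ ^ n * μ (parF F n Q)) * μ Q =
              μ (parF F n Q) * ((ENNReal.ofReal c)⁻¹ ^ n * μ Q) by ring,
            show ENNReal.ofReal c * μ (parF F n Q) = μ (parF F n Q) * ENNReal.ofReal c by ring,
            ENNReal.mul_div_mul_left _ _ hPpos.ne' hPfin]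
          rw [ENNReal.div_eq_inv_mul, pow_succ]
          ring

end tree2
end Hung

namespace Hung

def lftF (μ : Measure ℂ) (F : ℕ → Set (Set ℂ)) (idx : ℕ → Set ℂ → ℕ) :
    ℕ → Set ℂ → ℝ≥0∞
  | 0, _ => 0
  | n+1, R => lftF μ F idx n (parF F n R) +
      ∑' T : {T : Set ℂ // T ∈ F (n + 1) ∧ T ⊆ parF F n R ∧ idx (n+1) T < idx (n+1) R},
        nuVal μ F (n+1) T

def IvT (μ : Measure ℂ) (F : ℕ → Set (Set ℂ)) (idx : ℕ → Set ℂ → ℕ) (n : ℕ) (Q : Set ℂ) :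
    Set ℝ :=
  Set.Ico ((lftF μ F idx n Q).toReal)
    ((lftF μ F idx n Q).toReal + (nuVal μ F n Q).toReal)

def lvlSet (μ : Measure ℂ) (F : ℕ → Set (Set ℂ)) (idx : ℕ → Set ℂ → ℕ) (n : ℕ) : Set ℝ :=
  ⋃ Q : ↥(F n), IvT μ F idx n Q.1

def DSet (μ : Measure ℂ) (F : ℕ → Set (Set ℂ)) (idx : ℕ → Set ℂ → ℕ) : Set ℝ :=
  ⋂ n, lvlSet μ F idx n

theorem tsum_set_mono {s t : Set (Set ℂ)} (hst : s ⊆ t) (f : Set ℂ → ℝ≥0∞) :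
    ∑' x : ↥s, f x ≤ ∑' x : ↥t, f x := by
  rw [tsum_subtype s f, tsum_subtype t f]
  exact ENNReal.tsum_le_tsum (fun S => Set.indicator_le_indicator_of_subset hst (fun _ => zero_le) S)

theorem tsum_set_union_disj {s t : Set (Set ℂ)} (hst : Disjoint s t) (f : Set ℂ → ℝ≥0∞) :
    ∑' x : ↥(s ∪ t), f x = (∑' x : ↥s, f x) + ∑' x : ↥t, f x := by
  rw [tsum_subtype s f, tsum_subtype t f, tsum_subtype (s ∪ t) f,
    Set.indicator_union_of_disjoint hst]
  exact ENNReal.tsum_add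

theorem tsum_set_singleton (Q : Set ℂ) (f : Set ℂ → ℝ≥0∞) :
    ∑' x : ↥({Q} : Set (Set ℂ)), f x = f Q := by
  haveI : Unique ↥({Q} : Set (Set ℂ)) := Set.uniqueSingleton _
  rw [tsum_eq_single default (fun b hb' => absurd (Unique.eq_default b) hb')]
  exact congrArg f (Set.mem_singleton_iff.mp (Subtype.mem _))

theorem Ico_disj {a b c d : ℝ} (h : b ≤ c) : Disjoint (Set.Ico a b) (Set.Ico c d) := by
  rw [Set.disjoint_left]
  rintro x ⟨_, h2⟩ ⟨h3, _⟩
  linarith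

section tree3

variable {Λ : ℕ → ℝ} {lam : ℝ} {μ : Measure ℂ} {F : ℕ → Set (Set ℂ)} {ε c : ℝ}
  {idx : ℕ → Set ℂ → ℕ}
variable (hΛ : ∀ n, 1 / 4 ≤ Λ n ∧ Λ n ≤ lam) (hlam : lam < 1 / 2)
variable (hFD : ∀ n, ∀ Q ∈ F n, ∃ (m : ℕ) (w : ℕ → Bool × Bool), Q = cSquare Λ w m)
variable (hμQ : ∀ (w : ℕ → Bool × Bool) (n : ℕ), μ (cSquare Λ w n) = (4 : ℝ≥0∞)⁻¹ ^ n)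
variable (hdisj : ∀ n, (F n).PairwiseDisjoint id)
variable (hF0 : F 0 = {cSquare Λ (fun _ => (false, false)) 0})
variable (hb : ∀ n, ∀ Q ∈ F (n + 1), ∃ Q' ∈ F n, Q ⊆ Q' ∧ μ Q ≤ ENNReal.ofReal ε * μ Q')
variable (hc' : ∀ n, ∀ Q ∈ F n,
      ENNReal.ofReal c * μ Q ≤ ∑' R : {R : Set ℂ // R ∈ F (n + 1) ∧ R ⊆ Q}, μ R)
variable (hε : 0 < ε) (hεc : ε < c) (hcc : c < 1)
variable (hidx : ∀ n, Set.InjOn (idx n) (F n))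

omit hΛ hFD hμQ hdisj hb hc' hε hεc in
theorem lftF_succ (n : ℕ) (R : Set ℂ) :
    lftF μ F idx (n+1) R = lftF μ F idx n (parF F n R) +
      ∑' T : {T : Set ℂ // T ∈ F (n + 1) ∧ T ⊆ parF F n R ∧ idx (n+1) T < idx (n+1) R},
        nuVal μ F (n+1) T := by
  simp [lftF]

include hΛ hFD hμQ hdisj hb hc' hε hεc

theorem lt_fill {n : ℕ} {R : Set ℂ} (hR : R ∈ F (n + 1)) :
    (∑' T : {T : Set ℂ // T ∈ F (n + 1) ∧ T ⊆ parF F n R ∧ idx (n+1) T < idx (n+1) R},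
        nuVal μ F (n+1) T) + nuVal μ F (n+1) R ≤ nuVal μ F n (parF F n R) := by
  have hc0 : 0 < c := hε.trans hεc
  have hP := par_spec (hFD := hFD) (hb := hb) hR
  set P := parF F n R
  set s : Set (Set ℂ) := {T | T ∈ F (n + 1) ∧ T ⊆ P ∧ idx (n+1) T < idx (n+1) R} with hs
  have hdisjRs : Disjoint s {R} := by
    rw [Set.disjoint_right]
    rintro T rfl
    rintro ⟨_, _, hlt⟩
    exact lt_irrefl _ hlt
  have hsub : s ∪ {R} ⊆ {T | T ∈ F (n + 1) ∧ T ⊆ P} := by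
    rintro T (⟨h1, h2, _⟩ | rfl)
    · exact ⟨h1, h2⟩
    · exact ⟨hR, hP.2⟩
  calc (∑' T : ↥s, nuVal μ F (n+1) T.1) + nuVal μ F (n+1) R
      = ∑' T : ↥(s ∪ {R}), nuVal μ F (n+1) T.1 := by
        rw [tsum_set_union_disj hdisjRs, tsum_set_singleton]
    _ ≤ ∑' T : ↥({T | T ∈ F (n + 1) ∧ T ⊆ P}), nuVal μ F (n+1) T.1 :=
        tsum_set_mono hsub _
    _ = nuVal μ F n P :=
        sum_children (hΛ := hΛ) (hFD := hFD) (hμQ := hμQ) (hdisj := hdisj) (hb := hb)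
          (hc' := hc') hc0 hP.1

theorem right_end_le {n : ℕ} {R : Set ℂ} (hR : R ∈ F (n + 1)) :
    lftF μ F idx (n+1) R + nuVal μ F (n+1) R ≤
      lftF μ F idx n (parF F n R) + nuVal μ F n (parF F n R) := by
  have := lt_fill (hΛ := hΛ) (hFD := hFD) (hμQ := hμQ) (hdisj := hdisj) (hb := hb)
    (hc' := hc') (hε := hε) (hεc := hεc) (idx := idx) hR
  calc lftF μ F idx (n+1) R + nuVal μ F (n+1) R
      = lftF μ F idx n (parF F n R) +
        ((∑' T : {T : Set ℂ // T ∈ F (n + 1) ∧ T ⊆ parF F n R ∧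
            idx (n+1) T < idx (n+1) R}, nuVal μ F (n+1) T) + nuVal μ F (n+1) R) := by
        rw [lftF_succ, add_assoc]
    _ ≤ _ := add_le_add_right this _

include hF0 in
theorem end_le_one {n : ℕ} {Q : Set ℂ} (hQ : Q ∈ F n) :
    lftF μ F idx n Q + nuVal μ F n Q ≤ 1 := by
  induction n generalizing Q with
  | zero => rw [lftF, nuVal_zero hQ]; simp
  | succ n ih =>
    have hP := par_spec (hFD := hFD) (hb := hb) hQ
    exact le_trans (right_end_le (hΛ := hΛ) (hFD := hFD) (hμQ := hμQ) (hdisj := hdisj)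
      (hb := hb) (hc' := hc') (hε := hε) (hεc := hεc) hQ) (ih hP.1)

include hF0 in
theorem lft_fin {n : ℕ} {Q : Set ℂ} (hQ : Q ∈ F n) : lftF μ F idx n Q ≠ ⊤ := by
  have := end_le_one (hΛ := hΛ) (hFD := hFD) (hμQ := hμQ) (hdisj := hdisj) (hF0 := hF0)
    (hb := hb) (hc' := hc') (hε := hε) (hεc := hεc) (idx := idx) hQ
  intro h
  rw [h] at this
  simp at this

include hF0 in
theorem nuVal_fin {n : ℕ} {Q : Set ℂ} (hQ : Q ∈ F n) : nuVal μ F n Q ≠ ⊤ := by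
  have := end_le_one (hΛ := hΛ) (hFD := hFD) (hμQ := hμQ) (hdisj := hdisj) (hF0 := hF0)
    (hb := hb) (hc' := hc') (hε := hε) (hεc := hεc) (idx := fun _ _ => 0) hQ
  intro h
  rw [h] at this
  simp at this

include hF0 in
theorem Iv_subset_parent {n : ℕ} {R : Set ℂ} (hR : R ∈ F (n + 1)) :
    IvT μ F idx (n+1) R ⊆ IvT μ F idx n (parF F n R) := by
  have hP := par_spec (hFD := hFD) (hb := hb) hR
  have hfinR := lft_fin (hΛ := hΛ) (hFD := hFD) (hμQ := hμQ) (hdisj := hdisj) (hF0 := hF0)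
    (hb := hb) (hc' := hc') (hε := hε) (hεc := hεc) (idx := idx) hR
  have hfinP := lft_fin (hΛ := hΛ) (hFD := hFD) (hμQ := hμQ) (hdisj := hdisj) (hF0 := hF0)
    (hb := hb) (hc' := hc') (hε := hε) (hεc := hεc) (idx := idx) hP.1
  have hnfinR := nuVal_fin (hΛ := hΛ) (hFD := hFD) (hμQ := hμQ) (hdisj := hdisj) (hF0 := hF0)
    (hb := hb) (hc' := hc') (hε := hε) (hεc := hεc) hR
  have hnfinP := nuVal_fin (hΛ := hΛ) (hFD := hFD) (hμQ := hμQ) (hdisj := hdisj) (hF0 := hF0)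
    (hb := hb) (hc' := hc') (hε := hε) (hεc := hεc) hP.1
  apply Set.Ico_subset_Ico
  · rw [ENNReal.toReal_le_toReal hfinP hfinR, lftF_succ]
    exact le_self_add
  · have h1 := right_end_le (hΛ := hΛ) (hFD := hFD) (hμQ := hμQ) (hdisj := hdisj)
      (hb := hb) (hc' := hc') (hε := hε) (hεc := hεc) (idx := idx) hR
    rw [← ENNReal.toReal_add hfinR hnfinR, ← ENNReal.toReal_add hfinP hnfinP]
    rw [ENNReal.toReal_le_toReal (by simp [ENNReal.add_eq_top, hfinR, hnfinR])
      (by simp [ENNReal.add_eq_top, hfinP, hnfinP])]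
    exact h1

theorem sibling_le {n : ℕ} {R R' : Set ℂ} (hR : R ∈ F (n + 1)) (hR' : R' ∈ F (n + 1))
    (hpp : parF F n R = parF F n R') (hlt : idx (n+1) R < idx (n+1) R') :
    lftF μ F idx (n+1) R + nuVal μ F (n+1) R ≤ lftF μ F idx (n+1) R' := by
  have hP := par_spec (hFD := hFD) (hb := hb) hR
  set P := parF F n R
  set s : Set (Set ℂ) := {T | T ∈ F (n + 1) ∧ T ⊆ P ∧ idx (n+1) T < idx (n+1) R} with hs
  have hdisjRs : Disjoint s {R} := by
    rw [Set.disjoint_right]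
    rintro T rfl ⟨_, _, h⟩
    exact lt_irrefl _ h
  have hsub : s ∪ {R} ⊆
      {T | T ∈ F (n + 1) ∧ T ⊆ parF F n R' ∧ idx (n+1) T < idx (n+1) R'} := by
    rintro T (⟨h1, h2, h3⟩ | rfl)
    · exact ⟨h1, hpp ▸ h2, h3.trans hlt⟩
    · exact ⟨hR, hpp ▸ hP.2, hlt⟩
  calc lftF μ F idx (n+1) R + nuVal μ F (n+1) R
      = lftF μ F idx n P + ((∑' T : ↥s, nuVal μ F (n+1) T.1) + nuVal μ F (n+1) R) := by
        rw [lftF_succ, add_assoc]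
        rfl
    _ = lftF μ F idx n P + ∑' T : ↥(s ∪ {R}), nuVal μ F (n+1) T.1 := by
        rw [tsum_set_union_disj hdisjRs, tsum_set_singleton]
    _ ≤ lftF μ F idx n (parF F n R') +
        ∑' T : ↥{T | T ∈ F (n + 1) ∧ T ⊆ parF F n R' ∧ idx (n+1) T < idx (n+1) R'},
          nuVal μ F (n+1) T.1 := by
        rw [hpp]
        exact add_le_add_right (tsum_set_mono hsub _) _
    _ = lftF μ F idx (n+1) R' := (lftF_succ _ _).symm

include hF0 hidx in
theorem Iv_disjoint : ∀ {n : ℕ} {Q Q' : Set ℂ}, Q ∈ F n → Q' ∈ F n → Q ≠ Q' →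
    Disjoint (IvT μ F idx n Q) (IvT μ F idx n Q') := by
  intro n
  induction n with
  | zero =>
    intro Q Q' hQ hQ' hne
    rw [hF0, Set.mem_singleton_iff] at hQ hQ'
    exact absurd (hQ.trans hQ'.symm) hne
  | succ n ih =>
    intro Q Q' hQ hQ' hne
    by_cases hpp : parF F n Q = parF F n Q'
    · have hij : idx (n+1) Q ≠ idx (n+1) Q' := fun h => hne (hidx (n+1) hQ hQ' h)
      have key : ∀ {R R' : Set ℂ}, R ∈ F (n+1) → R' ∈ F (n+1) → parF F n R = parF F n R' →
          idx (n+1) R < idx (n+1) R' →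
          Disjoint (IvT μ F idx (n+1) R) (IvT μ F idx (n+1) R') := by
        intro R R' hR hR' hp hlt
        have hle := sibling_le (hΛ := hΛ) (hFD := hFD) (hμQ := hμQ) (hdisj := hdisj)
          (hb := hb) (hc' := hc') (hε := hε) (hεc := hεc) hR hR' hp hlt
        have hfinR := lft_fin (hΛ := hΛ) (hFD := hFD) (hμQ := hμQ) (hdisj := hdisj)
          (hF0 := hF0) (hb := hb) (hc' := hc') (hε := hε) (hεc := hεc) (idx := idx) hR
        have hnfinR := nuVal_fin (hΛ := hΛ) (hFD := hFD) (hμQ := hμQ) (hdisj := hdisj)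
          (hF0 := hF0) (hb := hb) (hc' := hc') (hε := hε) (hεc := hεc) hR
        have hfinR' := lft_fin (hΛ := hΛ) (hFD := hFD) (hμQ := hμQ) (hdisj := hdisj)
          (hF0 := hF0) (hb := hb) (hc' := hc') (hε := hε) (hεc := hεc) (idx := idx) hR'
        apply Ico_disj
        rw [← ENNReal.toReal_add hfinR hnfinR]
        rw [ENNReal.toReal_le_toReal (by simp [ENNReal.add_eq_top, hfinR, hnfinR]) hfinR']
        exact hle
      rcases lt_or_gt_of_ne hij with h|h
      · exact key hQ hQ' hpp h
      · exact (key hQ' hQ hpp.symm h).symm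
    · have hPQ := par_spec (hFD := hFD) (hb := hb) hQ
      have hPQ' := par_spec (hFD := hFD) (hb := hb) hQ'
      have := ih hPQ.1 hPQ'.1 hpp
      exact this.mono
        (Iv_subset_parent (hΛ := hΛ) (hFD := hFD) (hμQ := hμQ) (hdisj := hdisj)
          (hF0 := hF0) (hb := hb) (hc' := hc') (hε := hε) (hεc := hεc) hQ)
        (Iv_subset_parent (hΛ := hΛ) (hFD := hFD) (hμQ := hμQ) (hdisj := hdisj)
          (hF0 := hF0) (hb := hb) (hc' := hc') (hε := hε) (hεc := hεc) hQ')

include hF0 in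
theorem vol_Iv {n : ℕ} {Q : Set ℂ} (hQ : Q ∈ F n) :
    volume (IvT μ F idx n Q) = nuVal μ F n Q := by
  rw [IvT, Real.volume_Ico]
  rw [show (lftF μ F idx n Q).toReal + (nuVal μ F n Q).toReal - (lftF μ F idx n Q).toReal
    = (nuVal μ F n Q).toReal by ring]
  exact ENNReal.ofReal_toReal (nuVal_fin (hΛ := hΛ) (hFD := hFD) (hμQ := hμQ)
    (hdisj := hdisj) (hF0 := hF0) (hb := hb) (hc' := hc') (hε := hε) (hεc := hεc)
    hQ)

include hF0 in
theorem Iv_sub01 {n : ℕ} {Q : Set ℂ} (hQ : Q ∈ F n) :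
    IvT μ F idx n Q ⊆ Set.Ico (0:ℝ) 1 := by
  have h1 := end_le_one (hΛ := hΛ) (hFD := hFD) (hμQ := hμQ) (hdisj := hdisj) (hF0 := hF0)
    (hb := hb) (hc' := hc') (hε := hε) (hεc := hεc) (idx := idx) hQ
  have hfin := lft_fin (hΛ := hΛ) (hFD := hFD) (hμQ := hμQ) (hdisj := hdisj) (hF0 := hF0)
    (hb := hb) (hc' := hc') (hε := hε) (hεc := hεc) (idx := idx) hQ
  have hnfin := nuVal_fin (hΛ := hΛ) (hFD := hFD) (hμQ := hμQ) (hdisj := hdisj) (hF0 := hF0)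
    (hb := hb) (hc' := hc') (hε := hε) (hεc := hεc) hQ
  apply Set.Ico_subset_Ico
  · exact ENNReal.toReal_nonneg
  · rw [← ENNReal.toReal_add hfin hnfin]
    calc (lftF μ F idx n Q + nuVal μ F n Q).toReal ≤ (1 : ℝ≥0∞).toReal := by
          rw [ENNReal.toReal_le_toReal (by simp [ENNReal.add_eq_top, hfin, hnfin]) (by simp)]
          exact h1
      _ = 1 := by simp

include hF0 in
theorem lvl_meas (n : ℕ) : MeasurableSet (lvlSet μ F idx n) := by
  haveI := (hcnt hFD n).to_subtype
  exact MeasurableSet.iUnion (fun Q => measurableSet_Ico)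

include hF0 in
theorem lvl_anti (n : ℕ) : lvlSet μ F idx (n+1) ⊆ lvlSet μ F idx n := by
  rintro t ht
  rw [lvlSet, Set.mem_iUnion] at ht ⊢
  obtain ⟨R, hR⟩ := ht
  have hP := par_spec (hFD := hFD) (hb := hb) R.2
  exact ⟨⟨parF F n R.1, hP.1⟩,
    Iv_subset_parent (hΛ := hΛ) (hFD := hFD) (hμQ := hμQ) (hdisj := hdisj) (hF0 := hF0)
      (hb := hb) (hc' := hc') (hε := hε) (hεc := hεc) R.2 hR⟩

include hF0 hidx in
theorem vol_lvl (n : ℕ) : volume (lvlSet μ F idx n) = 1 := by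
  haveI := (hcnt hFD n).to_subtype
  rw [lvlSet, measure_iUnion]
  · rw [tsum_congr (fun Q : ↥(F n) => vol_Iv (hΛ := hΛ) (hFD := hFD) (hμQ := hμQ)
      (hdisj := hdisj) (hF0 := hF0) (hb := hb) (hc' := hc') (hε := hε) (hεc := hεc)
      (idx := idx) Q.2)]
    exact total_sum (hΛ := hΛ) (hFD := hFD) (hμQ := hμQ) (hdisj := hdisj) (hF0 := hF0)
      (hb := hb) (hc' := hc') (hε := hε) (hεc := hεc) n
  · intro Q Q' hne
    exact Iv_disjoint (hΛ := hΛ) (hFD := hFD) (hμQ := hμQ) (hdisj := hdisj) (hF0 := hF0)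
      (hb := hb) (hc' := hc') (hε := hε) (hεc := hεc) (hidx := hidx) Q.2 Q'.2
      (fun h => hne (Subtype.ext h))
  · exact fun _ => measurableSet_Ico

include hF0 hidx in
theorem vol_DSet : volume (DSet μ F idx) = 1 := by
  have hsub : DSet μ F idx ⊆ Set.Ico (0:ℝ) 1 := by
    intro t ht
    have h0 := Set.mem_iInter.mp ht 0
    rw [lvlSet, Set.mem_iUnion] at h0
    obtain ⟨Q, hQ⟩ := h0
    exact Iv_sub01 (hΛ := hΛ) (hFD := hFD) (hμQ := hμQ) (hdisj := hdisj) (hF0 := hF0)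
      (hb := hb) (hc' := hc') (hε := hε) (hεc := hεc) (idx := idx) Q.2 hQ
  have hnull : volume (Set.Ico (0:ℝ) 1 \ DSet μ F idx) = 0 := by
    have hdiff : Set.Ico (0:ℝ) 1 \ DSet μ F idx ⊆
        ⋃ n, (Set.Ico (0:ℝ) 1 \ lvlSet μ F idx n) := by
      rintro t ⟨ht1, ht2⟩
      rw [DSet, Set.mem_iInter] at ht2
      push_neg at ht2
      obtain ⟨n, hn⟩ := ht2
      exact Set.mem_iUnion.mpr ⟨n, ht1, hn⟩
    refine le_antisymm (le_trans (measure_mono hdiff) ?_) zero_le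
    refine le_trans (measure_iUnion_le _) ?_
    have : ∀ n : ℕ, volume (Set.Ico (0:ℝ) 1 \ lvlSet μ F idx n) = 0 := by
      intro n
      have hsubl : lvlSet μ F idx n ⊆ Set.Ico (0:ℝ) 1 := by
        rintro t ht
        rw [lvlSet, Set.mem_iUnion] at ht
        obtain ⟨Q, hQ⟩ := ht
        exact Iv_sub01 (hΛ := hΛ) (hFD := hFD) (hμQ := hμQ) (hdisj := hdisj) (hF0 := hF0)
          (hb := hb) (hc' := hc') (hε := hε) (hεc := hεc) (idx := idx) Q.2 hQ
      rw [measure_diff hsubl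
        ((lvl_meas (hΛ := hΛ) (hFD := hFD) (hμQ := hμQ) (hdisj := hdisj) (hF0 := hF0)
          (hb := hb) (hc' := hc') (hε := hε) (hεc := hεc) (idx := idx) n)).nullMeasurableSet
        (by rw [vol_lvl (hΛ := hΛ) (hFD := hFD) (hμQ := hμQ) (hdisj := hdisj) (hF0 := hF0)
          (hb := hb) (hc' := hc') (hε := hε) (hεc := hεc) (hidx := hidx) n]; simp)]
      rw [vol_lvl (hΛ := hΛ) (hFD := hFD) (hμQ := hμQ) (hdisj := hdisj) (hF0 := hF0)
        (hb := hb) (hc' := hc') (hε := hε) (hεc := hεc) (hidx := hidx) n,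
        Real.volume_Ico]
      simp
    simp [this]
  have h1 : (1:ℝ≥0∞) = volume (Set.Ico (0:ℝ) 1) := by rw [Real.volume_Ico]; simp
  have hle : volume (Set.Ico (0:ℝ) 1) ≤ volume (DSet μ F idx) +
      volume (Set.Ico (0:ℝ) 1 \ DSet μ F idx) := by
    refine le_trans (measure_mono (fun t ht => ?_)) (measure_union_le _ _)
    by_cases h : t ∈ DSet μ F idx
    · exact Set.mem_union_left _ h
    · exact Set.mem_union_right _ ⟨ht, h⟩
  rw [hnull, add_zero, ← h1] at hle
  refine le_antisymm ?_ hle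
  calc volume (DSet μ F idx) ≤ volume (lvlSet μ F idx 0) :=
        measure_mono (Set.iInter_subset _ 0)
    _ = 1 := vol_lvl (hΛ := hΛ) (hFD := hFD) (hμQ := hμQ) (hdisj := hdisj) (hF0 := hF0)
        (hb := hb) (hc' := hc') (hε := hε) (hεc := hεc) (hidx := hidx) 0

end tree3
end Hung

namespace Hung

attribute [local instance] Classical.propDecidable

def ptOf (S : Set ℂ) : ℂ := if h : S.Nonempty then h.choose else 0

def sqAt (μ : Measure ℂ) (F : ℕ → Set (Set ℂ)) (idx : ℕ → Set ℂ → ℕ) (n : ℕ) (t : ℝ) :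
    Set ℂ :=
  if h : ∃ Q, Q ∈ F n ∧ t ∈ IvT μ F idx n Q then h.choose else ∅

def gApp (μ : Measure ℂ) (F : ℕ → Set (Set ℂ)) (idx : ℕ → Set ℂ → ℕ) (n : ℕ) (t : ℝ) : ℂ :=
  ptOf (sqAt μ F idx n t)

theorem ptOf_mem {S : Set ℂ} (h : S.Nonempty) : ptOf S ∈ S := by
  rw [ptOf, dif_pos h]
  exact h.choose_spec

theorem ptOf_empty : ptOf (∅ : Set ℂ) = 0 := by
  rw [ptOf, dif_neg (by simp)]

section tree4

variable {Λ : ℕ → ℝ} {lam : ℝ} {μ : Measure ℂ} {F : ℕ → Set (Set ℂ)} {ε c : ℝ}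
  {idx : ℕ → Set ℂ → ℕ}
variable (hΛ : ∀ n, 1 / 4 ≤ Λ n ∧ Λ n ≤ lam) (hlam : lam < 1 / 2)
variable (hFD : ∀ n, ∀ Q ∈ F n, ∃ (m : ℕ) (w : ℕ → Bool × Bool), Q = cSquare Λ w m)
variable (hμQ : ∀ (w : ℕ → Bool × Bool) (n : ℕ), μ (cSquare Λ w n) = (4 : ℝ≥0∞)⁻¹ ^ n)
variable (hdisj : ∀ n, (F n).PairwiseDisjoint id)
variable (hF0 : F 0 = {cSquare Λ (fun _ => (false, false)) 0})
variable (hb : ∀ n, ∀ Q ∈ F (n + 1), ∃ Q' ∈ F n, Q ⊆ Q' ∧ μ Q ≤ ENNReal.ofReal ε * μ Q')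
variable (hc' : ∀ n, ∀ Q ∈ F n,
      ENNReal.ofReal c * μ Q ≤ ∑' R : {R : Set ℂ // R ∈ F (n + 1) ∧ R ⊆ Q}, μ R)
variable (hε : 0 < ε) (hεc : ε < c) (hcc : c < 1)
variable (hidx : ∀ n, Set.InjOn (idx n) (F n))

theorem mem_lvl_iff {n : ℕ} {t : ℝ} :
    t ∈ lvlSet μ F idx n ↔ ∃ Q, Q ∈ F n ∧ t ∈ IvT μ F idx n Q := by
  rw [lvlSet, Set.mem_iUnion]
  constructor
  · rintro ⟨Q, hQ⟩; exact ⟨Q.1, Q.2, hQ⟩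
  · rintro ⟨Q, hQ1, hQ2⟩; exact ⟨⟨Q, hQ1⟩, hQ2⟩

theorem sqAt_spec {n : ℕ} {t : ℝ} (ht : t ∈ lvlSet μ F idx n) :
    sqAt μ F idx n t ∈ F n ∧ t ∈ IvT μ F idx n (sqAt μ F idx n t) := by
  have h := mem_lvl_iff.mp ht
  rw [sqAt, dif_pos h]
  exact h.choose_spec

theorem sqAt_empty {n : ℕ} {t : ℝ} (ht : t ∉ lvlSet μ F idx n) : sqAt μ F idx n t = ∅ := by
  rw [sqAt, dif_neg]
  intro h
  exact ht (mem_lvl_iff.mpr h)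

include hΛ hFD hμQ hdisj hF0 hb hc' hε hεc hidx in
theorem sqAt_eq {n : ℕ} {t : ℝ} {Q : Set ℂ} (hQ : Q ∈ F n) (ht : t ∈ IvT μ F idx n Q) :
    sqAt μ F idx n t = Q := by
  have hlvl : t ∈ lvlSet μ F idx n := mem_lvl_iff.mpr ⟨Q, hQ, ht⟩
  obtain ⟨h1, h2⟩ := sqAt_spec (μ := μ) (F := F) (idx := idx) hlvl
  by_contra hne
  have := Iv_disjoint (hΛ := hΛ) (hFD := hFD) (hμQ := hμQ) (hdisj := hdisj) (hF0 := hF0)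
    (hb := hb) (hc' := hc') (hε := hε) (hεc := hεc) (hidx := hidx) h1 hQ hne
  exact Set.disjoint_left.mp this h2 ht

include hΛ hFD in
theorem gApp_mem {n : ℕ} {t : ℝ} (ht : t ∈ lvlSet μ F idx n) :
    gApp μ F idx n t ∈ sqAt μ F idx n t := by
  obtain ⟨h1, _⟩ := sqAt_spec (μ := μ) (F := F) (idx := idx) ht
  exact ptOf_mem (hQne hΛ hFD h1)

theorem gApp_zero {n : ℕ} {t : ℝ} (ht : t ∉ lvlSet μ F idx n) : gApp μ F idx n t = 0 := by
  rw [gApp, sqAt_empty (μ := μ) (F := F) (idx := idx) ht, ptOf_empty]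

include hΛ hFD hμQ hdisj hF0 hb hc' hε hεc hidx in
theorem measurable_gApp (n : ℕ) : Measurable (gApp μ F idx n) := by
  haveI := (hcnt hFD n).to_subtype
  apply measurable_of_isOpen
  intro U hU
  have heq : gApp μ F idx n ⁻¹' U =
      (⋃ Q : ↥(F n), if ptOf Q.1 ∈ U then IvT μ F idx n Q.1 else ∅) ∪
        (if (0:ℂ) ∈ U then (lvlSet μ F idx n)ᶜ else ∅) := by
    ext t
    constructor
    · intro htU
      by_cases ht : t ∈ lvlSet μ F idx n
      · obtain ⟨h1, h2⟩ := sqAt_spec (μ := μ) (F := F) (idx := idx) ht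
        apply Set.mem_union_left
        refine Set.mem_iUnion.mpr ⟨⟨sqAt μ F idx n t, h1⟩, ?_⟩
        rw [if_pos (show ptOf (sqAt μ F idx n t) ∈ U from htU)]
        exact h2
      · apply Set.mem_union_right
        have htU' : gApp μ F idx n t ∈ U := htU
        rw [gApp_zero (μ := μ) (F := F) (idx := idx) ht] at htU'
        rw [if_pos htU']
        exact ht
    · intro ht
      rcases ht with ht | ht
      · obtain ⟨Q, hQ⟩ := Set.mem_iUnion.mp ht
        by_cases hcond : ptOf Q.1 ∈ U
        · rw [if_pos hcond] at hQ
          have := sqAt_eq (hΛ := hΛ) (hFD := hFD) (hμQ := hμQ) (hdisj := hdisj)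
            (hF0 := hF0) (hb := hb) (hc' := hc') (hε := hε) (hεc := hεc) (hidx := hidx)
            Q.2 hQ
          show gApp μ F idx n t ∈ U
          rw [gApp, this]
          exact hcond
        · rw [if_neg hcond] at hQ
          exact absurd hQ (Set.notMem_empty t)
      · by_cases hcond : (0:ℂ) ∈ U
        · rw [if_pos hcond] at ht
          show gApp μ F idx n t ∈ U
          rw [gApp_zero (μ := μ) (F := F) (idx := idx) ht]
          exact hcond
        · rw [if_neg hcond] at ht
          exact absurd ht (Set.notMem_empty t)
  rw [heq]
  apply MeasurableSet.union
  · exact MeasurableSet.iUnion (fun Q => by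
      split
      · exact measurableSet_Ico
      · exact MeasurableSet.empty)
  · split
    · exact (lvl_meas (hΛ := hΛ) (hFD := hFD) (hμQ := hμQ) (hdisj := hdisj) (hF0 := hF0)
        (hb := hb) (hc' := hc') (hε := hε) (hεc := hεc) (idx := idx) n).compl
    · exact MeasurableSet.empty

include hΛ hFD hμQ hdisj hF0 hb hc' hε hεc hidx in
theorem sqAt_chain {n : ℕ} {t : ℝ} (ht : t ∈ DSet μ F idx) :
    sqAt μ F idx (n+1) t ⊆ sqAt μ F idx n t := by
  have ht1 : t ∈ lvlSet μ F idx (n+1) := Set.mem_iInter.mp ht (n+1)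
  obtain ⟨h1, h2⟩ := sqAt_spec (μ := μ) (F := F) (idx := idx) ht1
  have hP := par_spec (hFD := hFD) (hb := hb) h1
  have hsub := Iv_subset_parent (hΛ := hΛ) (hFD := hFD) (hμQ := hμQ) (hdisj := hdisj)
    (hF0 := hF0) (hb := hb) (hc' := hc') (hε := hε) (hεc := hεc) (idx := idx) h1
  have := sqAt_eq (hΛ := hΛ) (hFD := hFD) (hμQ := hμQ) (hdisj := hdisj) (hF0 := hF0)
    (hb := hb) (hc' := hc') (hε := hε) (hεc := hεc) (hidx := hidx) hP.1 (hsub h2)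
  rw [this]
  exact hP.2

include hΛ hFD hμQ hdisj hF0 hb hc' hε hεc hidx in
theorem sqAt_mono {t : ℝ} (ht : t ∈ DSet μ F idx) {n m : ℕ} (h : n ≤ m) :
    sqAt μ F idx m t ⊆ sqAt μ F idx n t := by
  induction m with
  | zero => simp at h; simp [h]
  | succ k ih =>
    rcases Nat.lt_or_ge n (k+1) with h'|h'
    · exact (sqAt_chain (hΛ := hΛ) (hFD := hFD) (hμQ := hμQ) (hdisj := hdisj) (hF0 := hF0)
        (hb := hb) (hc' := hc') (hε := hε) (hεc := hεc) (hidx := hidx) ht).trans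
        (ih (Nat.lt_succ_iff.mp h'))
    · have : n = k + 1 := le_antisymm h h'
      simp [this]

include hΛ hlam hFD hμQ hb hε hεc hcc in
theorem F_small {δ : ℝ} (hδ : 0 < δ) :
    ∃ N : ℕ, ∀ n, N ≤ n → ∀ Q ∈ F n, ∀ x ∈ Q, ∀ z ∈ Q, dist x z ≤ δ := by
  have hε1 : ε < 1 := hεc.trans hcc
  obtain ⟨k, hk⟩ : ∃ k : ℕ, (1/2:ℝ)^k < δ/2 :=
    exists_pow_lt_of_lt_one (by linarith) (by norm_num)
  obtain ⟨N, hN⟩ : ∃ N : ℕ, ε^N < (1/4:ℝ)^k :=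
    exists_pow_lt_of_lt_one (by positivity) hε1
  refine ⟨N, fun n hn Q hQ x hx z hz => ?_⟩
  obtain ⟨m, w, rfl⟩ := hFD n Q hQ
  -- show k ≤ m
  have hμm : μ (cSquare Λ w m) ≤ ENNReal.ofReal ε ^ n := mu_le_pow hFD hμQ hb hQ
  have h2 : ((4:ℝ≥0∞)⁻¹ ^ m).toReal ≤ (ENNReal.ofReal ε ^ n).toReal := by
    apply ENNReal.toReal_mono
    · exact ENNReal.pow_ne_top ENNReal.ofReal_ne_top
    · rw [← hμQ w m]; exact hμm
  have h3 : ((4:ℝ≥0∞)⁻¹ ^ m).toReal = (1/4:ℝ)^m := by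
    rw [ENNReal.toReal_pow, ENNReal.toReal_inv]
    norm_num
  have h4 : (ENNReal.ofReal ε ^ n).toReal = ε ^ n := by
    rw [ENNReal.toReal_pow, ENNReal.toReal_ofReal hε.le]
  rw [h3, h4] at h2
  have h5 : ε ^ n ≤ ε ^ N := pow_le_pow_of_le_one hε.le hε1.le hn
  have h6 : (1/4:ℝ)^m < (1/4:ℝ)^k := lt_of_le_of_lt (h2.trans h5) hN
  have hkm : k ≤ m := by
    by_contra hcon
    push_neg at hcon
    have := pow_le_pow_of_le_one (by norm_num : (0:ℝ) ≤ 1/4) (by norm_num) hcon.le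
    linarith
  calc dist x z ≤ 2 * sideLen Λ m := cSquare_dist_le hΛ hx hz
    _ ≤ 2 * (1/2:ℝ)^m := by linarith [sideLen_le_pow hΛ hlam m]
    _ ≤ 2 * (1/2:ℝ)^k := by
        have := pow_le_pow_of_le_one (by norm_num : (0:ℝ) ≤ 1/2) (by norm_num) hkm
        linarith
    _ ≤ δ := by linarith

include hΛ hlam hFD hμQ hdisj hF0 hb hc' hε hεc hcc hidx in
theorem gApp_conv (t : ℝ) :
    ∃ z : ℂ, Tendsto (fun n => gApp μ F idx n t) atTop (nhds z) := by
  by_cases ht : t ∈ DSet μ F idx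
  · -- Cauchy
    have hcauchy : CauchySeq (fun n => gApp μ F idx n t) := by
      rw [Metric.cauchySeq_iff']
      intro δ hδ
      obtain ⟨N, hN⟩ := F_small (hΛ := hΛ) (hlam := hlam) (hFD := hFD) (hμQ := hμQ)
        (hb := hb) (hε := hε) (hεc := hεc) (hcc := hcc) (μ := μ)
        (show (0:ℝ) < δ/2 by linarith)
      refine ⟨N, fun n hn => ?_⟩
      have htN : t ∈ lvlSet μ F idx N := Set.mem_iInter.mp ht N
      have htn : t ∈ lvlSet μ F idx n := Set.mem_iInter.mp ht n
      have h1 : gApp μ F idx n t ∈ sqAt μ F idx N t :=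
        sqAt_mono (hΛ := hΛ) (hFD := hFD) (hμQ := hμQ) (hdisj := hdisj) (hF0 := hF0)
          (hb := hb) (hc' := hc') (hε := hε) (hεc := hεc) (hidx := hidx) ht hn
          (gApp_mem (hΛ := hΛ) (hFD := hFD) htn)
      have h2 : gApp μ F idx N t ∈ sqAt μ F idx N t :=
        gApp_mem (hΛ := hΛ) (hFD := hFD) htN
      have h3 := (sqAt_spec (μ := μ) (F := F) (idx := idx) htN).1
      have := hN N le_rfl _ h3 _ h1 _ h2
      linarith
    exact cauchySeq_tendsto_of_complete hcauchy
  · -- eventually 0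
    rw [DSet, Set.mem_iInter] at ht
    push_neg at ht
    obtain ⟨N, hN⟩ := ht
    refine ⟨0, ?_⟩
    apply Tendsto.congr' (f₁ := fun _ => (0:ℂ))
    · rw [EventuallyEq, eventually_atTop]
      refine ⟨N, fun n hn => ?_⟩
      have : t ∉ lvlSet μ F idx n := by
        intro hmem
        apply hN
        -- lvl n ⊆ lvl N for N ≤ n
        have : ∀ m, lvlSet μ F idx (N + m) ⊆ lvlSet μ F idx N := by
          intro m
          induction m with
          | zero => exact subset_rfl
          | succ j ih =>
            exact (lvl_anti (hΛ := hΛ) (hFD := hFD) (hμQ := hμQ) (hdisj := hdisj)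
              (hF0 := hF0) (hb := hb) (hc' := hc') (hε := hε) (hεc := hεc)
              (idx := idx) (N + j)).trans ih
        obtain ⟨m, rfl⟩ := Nat.exists_eq_add_of_le hn
        exact this m hmem
      rw [gApp_zero (μ := μ) (F := F) (idx := idx) this]
    · exact tendsto_const_nhds

end tree4
end Hung

namespace Hung

section tree5

variable {Λ : ℕ → ℝ} {lam : ℝ} {μ : Measure ℂ} {F : ℕ → Set (Set ℂ)} {ε c : ℝ}
variable (hΛ : ∀ n, 1 / 4 ≤ Λ n ∧ Λ n ≤ lam) (hlam : lam < 1 / 2)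
variable (hFD : ∀ n, ∀ Q ∈ F n, ∃ (m : ℕ) (w : ℕ → Bool × Bool), Q = cSquare Λ w m)
variable (hμQ : ∀ (w : ℕ → Bool × Bool) (n : ℕ), μ (cSquare Λ w n) = (4 : ℝ≥0∞)⁻¹ ^ n)
variable (hdisj : ∀ n, (F n).PairwiseDisjoint id)
variable (hF0 : F 0 = {cSquare Λ (fun _ => (false, false)) 0})
variable (hb : ∀ n, ∀ Q ∈ F (n + 1), ∃ Q' ∈ F n, Q ⊆ Q' ∧ μ Q ≤ ENNReal.ofReal ε * μ Q')
variable (hc' : ∀ n, ∀ Q ∈ F n,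
      ENNReal.ofReal c * μ Q ≤ ∑' R : {R : Set ℂ // R ∈ F (n + 1) ∧ R ⊆ Q}, μ R)
variable (hε : 0 < ε) (hεc : ε < c) (hcc : c < 1)

include hΛ hlam hFD hμQ hdisj hF0 hb hc' hε hεc hcc in
theorem exists_nu : ∃ ν : Measure ℂ, IsProbabilityMeasure ν ∧
    (∀ (n : ℕ) (Q : Set ℂ), Q ∈ F n → ν Q = nuVal μ F n Q) ∧
    ν (⋂ n, ⋃ Q ∈ F n, Q) = 1 := by
  classical
  -- index functions
  have hidxex : ∀ n, ∃ f : Set ℂ → ℕ, Set.InjOn f (F n) := by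
    intro n
    obtain ⟨f, hf⟩ := Set.countable_iff_exists_injective.mp (hcnt hFD n)
    refine ⟨fun S => if h : S ∈ F n then f ⟨S, h⟩ else 0, ?_⟩
    intro a ha b hb' hab
    simp only [dif_pos ha, dif_pos hb'] at hab
    have := hf hab
    exact congrArg Subtype.val this
  choose idx hidx using hidxex
  -- the limit map
  have hconv : ∀ t : ℝ, ∃ z : ℂ, Tendsto (fun n => gApp μ F idx n t) atTop (nhds z) :=
    fun t => gApp_conv (hΛ := hΛ) (hlam := hlam) (hFD := hFD) (hμQ := hμQ) (hdisj := hdisj)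
      (hF0 := hF0) (hb := hb) (hc' := hc') (hε := hε) (hεc := hεc) (hcc := hcc)
      (hidx := hidx) t
  set g : ℝ → ℂ := fun t => (hconv t).choose with hg
  have hgt : ∀ t, Tendsto (fun n => gApp μ F idx n t) atTop (nhds (g t)) :=
    fun t => (hconv t).choose_spec
  have hmeas : Measurable g := by
    apply measurable_of_tendsto_metrizable
      (fun n => measurable_gApp (hΛ := hΛ) (hFD := hFD) (hμQ := hμQ) (hdisj := hdisj)
        (hF0 := hF0) (hb := hb) (hc' := hc') (hε := hε) (hεc := hεc) (hidx := hidx) n)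
    rw [tendsto_pi_nhds]
    exact hgt
  set ν := Measure.map g (volume.restrict (Set.Ico (0:ℝ) 1)) with hν
  have hν1 : ν Set.univ = 1 := by
    rw [hν, Measure.map_apply hmeas MeasurableSet.univ]
    simp [Real.volume_Ico]
  have hsub01 : DSet μ F idx ⊆ Set.Ico (0:ℝ) 1 := by
    intro t ht
    have h0 := Set.mem_iInter.mp ht 0
    rw [lvlSet, Set.mem_iUnion] at h0
    obtain ⟨Q, hQ⟩ := h0
    exact Iv_sub01 (hΛ := hΛ) (hFD := hFD) (hμQ := hμQ) (hdisj := hdisj) (hF0 := hF0)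
      (hb := hb) (hc' := hc') (hε := hε) (hεc := hεc) (idx := idx) Q.2 hQ
  have hDmeas : MeasurableSet (DSet μ F idx) :=
    MeasurableSet.iInter (fun n => lvl_meas (hΛ := hΛ) (hFD := hFD) (hμQ := hμQ)
      (hdisj := hdisj) (hF0 := hF0) (hb := hb) (hc' := hc') (hε := hε) (hεc := hεc)
      (idx := idx) n)
  have hvolD : volume (DSet μ F idx) = 1 :=
    vol_DSet (hΛ := hΛ) (hFD := hFD) (hμQ := hμQ) (hdisj := hdisj) (hF0 := hF0)
      (hb := hb) (hc' := hc') (hε := hε) (hεc := hεc) (hidx := hidx)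
  have hIcoD : volume (Set.Ico (0:ℝ) 1 \ DSet μ F idx) = 0 := by
    rw [measure_diff hsub01 hDmeas.nullMeasurableSet (by rw [hvolD]; simp), hvolD,
      Real.volume_Ico]
    simp
  have hgin : ∀ t ∈ DSet μ F idx, ∀ n, g t ∈ sqAt μ F idx n t := by
    intro t ht n
    have htn : t ∈ lvlSet μ F idx n := Set.mem_iInter.mp ht n
    have hQc : IsClosed (sqAt μ F idx n t) :=
      hQclosed hFD (sqAt_spec (μ := μ) (F := F) (idx := idx) htn).1
    apply hQc.mem_of_tendsto (hgt t)
    rw [eventually_atTop]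
    refine ⟨n, fun m hm => ?_⟩
    have htm : t ∈ lvlSet μ F idx m := Set.mem_iInter.mp ht m
    exact sqAt_mono (hΛ := hΛ) (hFD := hFD) (hμQ := hμQ) (hdisj := hdisj) (hF0 := hF0)
      (hb := hb) (hc' := hc') (hε := hε) (hεc := hεc) (hidx := hidx) ht hm
      (gApp_mem (hΛ := hΛ) (hFD := hFD) htm)
  -- lower bound on squares
  have hge : ∀ (n : ℕ) (Q : Set ℂ), Q ∈ F n → nuVal μ F n Q ≤ ν Q := by
    intro n Q hQ
    rw [hν, Measure.map_apply hmeas (hQmeas hFD hQ),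
      Measure.restrict_apply (hmeas (hQmeas hFD hQ))]
    have hsubset : IvT μ F idx n Q ∩ DSet μ F idx ⊆ g ⁻¹' Q ∩ Set.Ico 0 1 := by
      rintro t ⟨ht1, ht2⟩
      refine ⟨?_, hsub01 ht2⟩
      have hmm := hgin t ht2 n
      rwa [sqAt_eq (hΛ := hΛ) (hFD := hFD) (hμQ := hμQ) (hdisj := hdisj) (hF0 := hF0)
        (hb := hb) (hc' := hc') (hε := hε) (hεc := hεc) (hidx := hidx) hQ ht1] at hmm
    refine le_trans ?_ (measure_mono hsubset)
    have hIv : volume (IvT μ F idx n Q) = nuVal μ F n Q :=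
      vol_Iv (hΛ := hΛ) (hFD := hFD) (hμQ := hμQ) (hdisj := hdisj) (hF0 := hF0)
        (hb := hb) (hc' := hc') (hε := hε) (hεc := hεc) (idx := idx) hQ
    have hdiff : volume (IvT μ F idx n Q \ DSet μ F idx) = 0 := by
      apply measure_mono_null _ hIcoD
      exact Set.diff_subset_diff_left (Iv_sub01 (hΛ := hΛ) (hFD := hFD) (hμQ := hμQ)
        (hdisj := hdisj) (hF0 := hF0) (hb := hb) (hc' := hc') (hε := hε) (hεc := hεc)
        (idx := idx) hQ)
    calc nuVal μ F n Q = volume (IvT μ F idx n Q) := hIv.symm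
      _ ≤ volume (IvT μ F idx n Q ∩ DSet μ F idx) +
          volume (IvT μ F idx n Q \ DSet μ F idx) := measure_le_inter_add_diff _ _ _
      _ = volume (IvT μ F idx n Q ∩ DSet μ F idx) := by rw [hdiff, add_zero]
  -- equality on squares
  have hνQ : ∀ (n : ℕ) (Q : Set ℂ), Q ∈ F n → ν Q = nuVal μ F n Q := by
    intro n Q hQ
    haveI := (hcnt hFD n).to_subtype
    by_contra hne
    have hlt : nuVal μ F n Q < ν Q := lt_of_le_of_ne (hge n Q hQ) (fun h => hne h.symm)
    have h1 : ν (⋃ Q : ↥(F n), Q.1) = ∑' Q : ↥(F n), ν Q.1 := by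
      apply measure_iUnion
      · intro Q' Q'' hne'
        exact (hdisj n) Q'.2 Q''.2 (fun h => hne' (Subtype.ext h))
      · exact fun Q' => hQmeas hFD Q'.2
    have h2 : (1:ℝ≥0∞) < ∑' Q' : ↥(F n), ν Q'.1 := by
      rw [show (1:ℝ≥0∞) = ∑' Q' : ↥(F n), nuVal μ F n Q'.1 from
        (total_sum (hΛ := hΛ) (hFD := hFD) (hμQ := hμQ) (hdisj := hdisj) (hF0 := hF0)
          (hb := hb) (hc' := hc') (hε := hε) (hεc := hεc) n).symm]
      apply ENNReal.tsum_lt_tsum (i := ⟨Q, hQ⟩)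
      · rw [total_sum (hΛ := hΛ) (hFD := hFD) (hμQ := hμQ) (hdisj := hdisj) (hF0 := hF0)
          (hb := hb) (hc' := hc') (hε := hε) (hεc := hεc) n]
        exact ENNReal.one_ne_top
      · exact fun Q' => hge n Q'.1 Q'.2
      · exact hlt
    have h3 : ∑' Q' : ↥(F n), ν Q'.1 ≤ 1 := by
      rw [← h1, ← hν1]
      exact measure_mono (Set.subset_univ _)
    exact absurd (h2.trans_le h3) (lt_irrefl _)
  -- full measure of E
  have hEmeas : MeasurableSet (⋂ n, ⋃ Q ∈ F n, Q) :=
    MeasurableSet.iInter (fun n => MeasurableSet.biUnion (hcnt hFD n)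
      (fun Q hQ => hQmeas hFD hQ))
  have hνE : ν (⋂ n, ⋃ Q ∈ F n, Q) = 1 := by
    refine le_antisymm (by rw [← hν1]; exact measure_mono (Set.subset_univ _)) ?_
    rw [hν, Measure.map_apply hmeas hEmeas, Measure.restrict_apply (hmeas hEmeas)]
    rw [← hvolD]
    apply measure_mono
    intro t ht
    refine ⟨?_, hsub01 ht⟩
    rw [Set.mem_preimage, Set.mem_iInter]
    intro n
    have htn : t ∈ lvlSet μ F idx n := Set.mem_iInter.mp ht n
    have h1 := (sqAt_spec (μ := μ) (F := F) (idx := idx) htn).1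
    exact Set.mem_biUnion h1 (hgin t ht n)
  exact ⟨ν, ⟨hν1⟩, hνQ, hνE⟩

end tree5
end Hung

namespace Hung

attribute [local instance] Classical.propDecidable

section stepC

variable {Λ : ℕ → ℝ} {lam : ℝ} {μ : Measure ℂ} {F : ℕ → Set (Set ℂ)} {ε c : ℝ}
variable (hΛ : ∀ n, 1 / 4 ≤ Λ n ∧ Λ n ≤ lam) (hlam : lam < 1 / 2)
variable (hFD : ∀ n, ∀ Q ∈ F n, ∃ (m : ℕ) (w : ℕ → Bool × Bool), Q = cSquare Λ w m)
variable (hμQ : ∀ (w : ℕ → Bool × Bool) (n : ℕ), μ (cSquare Λ w n) = (4 : ℝ≥0∞)⁻¹ ^ n)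
variable (hdisj : ∀ n, (F n).PairwiseDisjoint id)
variable (hF0 : F 0 = {cSquare Λ (fun _ => (false, false)) 0})
variable (hb : ∀ n, ∀ Q ∈ F (n + 1), ∃ Q' ∈ F n, Q ⊆ Q' ∧ μ Q ≤ ENNReal.ofReal ε * μ Q')
variable (hc' : ∀ n, ∀ Q ∈ F n,
      ENNReal.ofReal c * μ Q ≤ ∑' R : {R : Set ℂ // R ∈ F (n + 1) ∧ R ⊆ Q}, μ R)
variable (hε : 0 < ε) (hεc : ε < c) (hcc : c < 1)

include hΛ hlam hFD hμQ hdisj hF0 hb hc' hε hεc hcc in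
theorem nu_P_bound (ν : Measure ℂ) (hν1 : IsProbabilityMeasure ν)
    (hνQ : ∀ (n : ℕ) (Q : Set ℂ), Q ∈ F n → ν Q = nuVal μ F n Q)
    (hνE : ν (⋂ n, ⋃ Q ∈ F n, Q) = 1)
    (m : ℕ) (w : ℕ → Bool × Bool) :
    ∃ n : ℕ, ν (cSquare Λ w m) ≤ (ENNReal.ofReal c)⁻¹ ^ (n + 1) * μ (cSquare Λ w m) ∧
      μ (cSquare Λ w m) ≤ (ENNReal.ofReal ε) ^ n := by
  classical
  have hc0 : 0 < c := hε.trans hεc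
  have hε1 : ε < 1 := hεc.trans hcc
  set P := cSquare Λ w m with hP
  set S := {n : ℕ | ∃ Q ∈ F n, P ⊆ Q} with hS
  -- 0 ∈ S
  have h0S : 0 ∈ S := by
    refine ⟨cSquare Λ (fun _ => (false, false)) 0, by rw [hF0]; exact rfl, ?_⟩
    have h1 : cSquare Λ w m ⊆ cSquare Λ w 0 := cSquare_mono hΛ hlam (Nat.zero_le m)
    have h2 : cSquare Λ w 0 = cSquare Λ (fun _ => (false, false)) 0 :=
      cSquare_congr (fun k hk => absurd hk (Nat.not_lt_zero k))
    rw [← h2]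
    exact h1
  -- S is bounded
  obtain ⟨N, hN⟩ : ∃ N : ℕ, ε ^ N < (1/4:ℝ) ^ m :=
    exists_pow_lt_of_lt_one (by positivity) hε1
  have hSbd : ∀ n ∈ S, n < N := by
    rintro n ⟨Q, hQmem, hPQ⟩
    have h1 : μ P ≤ μ Q := measure_mono hPQ
    have h2 : μ Q ≤ (ENNReal.ofReal ε) ^ n := mu_le_pow hFD hμQ hb hQmem
    have h3 : ((4:ℝ≥0∞)⁻¹ ^ m).toReal ≤ ((ENNReal.ofReal ε) ^ n).toReal := by
      apply ENNReal.toReal_mono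
      · exact ENNReal.pow_ne_top ENNReal.ofReal_ne_top
      · exact le_trans (le_of_eq (hμQ w m).symm) (h1.trans h2)
    have h44 : ((4:ℝ≥0∞)⁻¹).toReal = (1/4:ℝ) := by
      rw [ENNReal.toReal_inv]
      norm_num
    rw [ENNReal.toReal_pow, ENNReal.toReal_pow, h44,
      ENNReal.toReal_ofReal hε.le] at h3
    by_contra hcon
    push_neg at hcon
    have h4 : ε ^ n ≤ ε ^ N := pow_le_pow_of_le_one hε.le hε1.le hcon
    linarith
  set n₀ := Nat.findGreatest (· ∈ S) N with hn₀
  have hn₀S : n₀ ∈ S := Nat.findGreatest_spec (Nat.zero_le N) h0S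
  have hmax : (n₀ + 1) ∉ S := by
    intro hmem
    have hlt : n₀ + 1 ≤ N := (hSbd _ hmem).le
    exact Nat.findGreatest_is_greatest (Nat.lt_succ_self n₀) hlt hmem
  obtain ⟨Q, hQmem, hPQ⟩ := hn₀S
  refine ⟨n₀, ?_, le_trans (measure_mono hPQ) (mu_le_pow hFD hμQ hb hQmem)⟩
  -- the union of F (n₀+1) squares has full ν measure
  haveI := hν1
  haveI := (hcnt hFD (n₀+1)).to_subtype
  have hUm : MeasurableSet (⋃ R ∈ F (n₀+1), R) :=
    MeasurableSet.biUnion (hcnt hFD (n₀+1)) (fun R hR => hQmeas hFD hR)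
  have hU1 : ν (⋃ R ∈ F (n₀+1), R) = 1 := by
    refine le_antisymm prob_le_one ?_
    rw [← hνE]
    exact measure_mono (Set.iInter_subset _ (n₀+1))
  have hUc : ν ((⋃ R ∈ F (n₀+1), R)ᶜ) = 0 := by
    rw [measure_compl hUm (by rw [hU1]; exact ENNReal.one_ne_top), hU1, measure_univ]
    simp
  -- key pointwise bound
  set a : ℝ≥0∞ := nuVal μ F n₀ Q / Wt μ F n₀ Q with ha
  have hpoint : ∀ R : ↥(F (n₀+1)), ν (P ∩ R.1) ≤ a * μ (R.1 ∩ P) := by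
    intro R
    by_cases hne : (R.1 ∩ P).Nonempty
    · obtain ⟨mR, wR, hwR⟩ := hFD (n₀+1) R.1 R.2
      have htri : R.1 ⊆ P ∨ P ⊆ R.1 := by
        rw [hwR] at hne ⊢
        rw [hP] at hne ⊢
        exact cSquare_tri' hΛ hlam hne
      rcases htri with hsub | hsup
      · have hinter : R.1 ∩ P = R.1 := Set.inter_eq_self_of_subset_left hsub
        rw [hinter]
        have hRQ : R.1 ⊆ Q := hsub.trans hPQ
        calc ν (P ∩ R.1) ≤ ν R.1 := measure_mono Set.inter_subset_right
          _ = nuVal μ F (n₀+1) R.1 := hνQ _ _ R.2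
          _ = nuVal μ F n₀ Q * μ R.1 / Wt μ F n₀ Q :=
              nuVal_child (hΛ := hΛ) (hFD := hFD) (hdisj := hdisj) (hb := hb) R.2 hQmem hRQ
          _ = a * μ R.1 := by rw [ha, div_eq_mul_inv, div_eq_mul_inv]; ring
      · exact absurd ⟨R.1, R.2, hsup⟩ hmax
    · rw [Set.not_nonempty_iff_eq_empty] at hne
      rw [Set.inter_comm, hne]
      simp
  -- summing up
  have hsum : ∑' R : ↥(F (n₀+1)), μ (R.1 ∩ P) ≤ μ P := by
    have hmeq : μ (⋃ R : ↥(F (n₀+1)), (R.1 ∩ P)) = ∑' R : ↥(F (n₀+1)), μ (R.1 ∩ P) := by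
      apply measure_iUnion
      · intro R R' hne
        have := (hdisj (n₀+1)) R.2 R'.2 (fun h => hne (Subtype.ext h))
        exact (this.mono Set.inter_subset_left Set.inter_subset_left)
      · exact fun R => (hQmeas hFD R.2).inter (measurableSet_cSquare w m)
    rw [← hmeq]
    exact measure_mono (Set.iUnion_subset (fun R => Set.inter_subset_right))
  have hbound : ν P ≤ a * μ P := by
    calc ν P ≤ ν (P ∩ (⋃ R ∈ F (n₀+1), R)) + ν ((⋃ R ∈ F (n₀+1), R)ᶜ) := by
          refine le_trans (measure_mono ?_) (measure_union_le _ _)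
          intro z hz
          by_cases hzU : z ∈ ⋃ R ∈ F (n₀+1), R
          · exact Set.mem_union_left _ ⟨hz, hzU⟩
          · exact Set.mem_union_right _ hzU
      _ = ν (P ∩ ⋃ R ∈ F (n₀+1), R) := by rw [hUc, add_zero]
      _ = ν (⋃ R : ↥(F (n₀+1)), (P ∩ R.1)) := by
          congr 1
          rw [Set.biUnion_eq_iUnion, Set.inter_iUnion]
      _ ≤ ∑' R : ↥(F (n₀+1)), ν (P ∩ R.1) := measure_iUnion_le _
      _ ≤ ∑' R : ↥(F (n₀+1)), a * μ (R.1 ∩ P) := ENNReal.tsum_le_tsum hpoint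
      _ = a * ∑' R : ↥(F (n₀+1)), μ (R.1 ∩ P) := ENNReal.tsum_mul_left
      _ ≤ a * μ P := mul_le_mul_right hsum _
  -- bound a
  have hQpos' := hQpos hFD hμQ hQmem
  have hQfin' := hQfin hFD hμQ hQmem
  have habound : a ≤ (ENNReal.ofReal c)⁻¹ ^ (n₀ + 1) := by
    rw [ha]
    calc nuVal μ F n₀ Q / Wt μ F n₀ Q
        ≤ ((ENNReal.ofReal c)⁻¹ ^ n₀ * μ Q) / (ENNReal.ofReal c * μ Q) := by
          apply ENNReal.div_le_div
          · exact nuVal_le_pow (hΛ := hΛ) (hFD := hFD) (hμQ := hμQ) (hdisj := hdisj)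
              (hF0 := hF0) (hb := hb) (hc' := hc') (hε := hε) (hεc := hεc) hQmem
          · exact hc' n₀ Q hQmem
      _ = (ENNReal.ofReal c)⁻¹ ^ (n₀ + 1) := by
          rw [show (ENNReal.ofReal c)⁻¹ ^ n₀ * μ Q = μ Q * (ENNReal.ofReal c)⁻¹ ^ n₀ by ring,
            show ENNReal.ofReal c * μ Q = μ Q * ENNReal.ofReal c by ring,
            ENNReal.mul_div_mul_left _ _ hQpos'.ne' hQfin',
            ENNReal.div_eq_inv_mul, pow_succ]
          ring
  calc ν P ≤ a * μ P := hbound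
    _ ≤ (ENNReal.ofReal c)⁻¹ ^ (n₀ + 1) * μ P := mul_le_mul_left habound _

end stepC
end Hung

namespace Hung

theorem frostman_arith {c ε δ r t : ℝ} (hc0 : 0 < c) (hε0 : 0 < ε) (hε1 : ε < 1)
    (hδ : 0 < δ) (hr : 0 < r) (ht : t = Real.log c / Real.log ε)
    (ht0 : 0 ≤ t) (ht1 : t ≤ 1)
    {a : ℝ} (ha0 : 0 < a) {n : ℕ} (haε : a ≤ ε ^ n) (har : a ≤ r / δ) :
    c⁻¹ ^ (n+1) * a ≤ (c⁻¹ * (δ⁻¹) ^ (1 - t)) * r ^ (1 - t) := by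
  have hlε : Real.log ε < 0 := Real.log_neg hε0 hε1
  have htε : t * Real.log ε = Real.log c := by
    rw [ht, div_mul_cancel₀ _ (ne_of_lt hlε)]
  have hloga : Real.log a ≤ (n:ℝ) * Real.log ε := by
    calc Real.log a ≤ Real.log (ε ^ n) := Real.log_le_log ha0 haε
      _ = (n:ℝ) * Real.log ε := by rw [Real.log_pow]
  have h2 : t * Real.log a ≤ (n:ℝ) * Real.log c := by
    calc t * Real.log a ≤ t * ((n:ℝ) * Real.log ε) := mul_le_mul_of_nonneg_left hloga ht0
      _ = (n:ℝ) * (t * Real.log ε) := by ring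
      _ = (n:ℝ) * Real.log c := by rw [htε]
  have hat : a ^ t ≤ c ^ n := by
    have e1 : a ^ t = Real.exp (t * Real.log a) := by
      rw [Real.rpow_def_of_pos ha0]
      ring_nf
    have e2 : (c:ℝ) ^ n = Real.exp ((n:ℝ) * Real.log c) := by
      rw [show ((n:ℝ) * Real.log c) = Real.log (c ^ n) by rw [Real.log_pow],
        Real.exp_log (pow_pos hc0 n)]
    rw [e1, e2]
    exact Real.exp_le_exp.mpr h2
  have hatpos : 0 < a ^ t := Real.rpow_pos_of_pos ha0 t
  have hcn : (c:ℝ) ^ n ≠ 0 := (pow_pos hc0 n).ne'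
  have hinv : ((c:ℝ) ^ n)⁻¹ ≤ (a ^ t)⁻¹ := by
    apply inv_anti₀ hatpos hat
  have hstep2 : c⁻¹ ^ (n+1) * a ≤ c⁻¹ * a ^ (1 - t) := by
    have e3 : c⁻¹ ^ (n+1) * a = c⁻¹ * (((c:ℝ)^n)⁻¹ * a) := by
      rw [pow_succ, inv_pow]
      ring
    have e4 : (a ^ t)⁻¹ * a = a ^ (1 - t) := by
      have : a = a ^ (1:ℝ) := (Real.rpow_one a).symm
      rw [show (1:ℝ) - t = -t + 1 by ring, Real.rpow_add ha0, Real.rpow_one,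
        Real.rpow_neg ha0.le]
    rw [e3, ← e4]
    apply mul_le_mul_of_nonneg_left _ (by positivity)
    apply mul_le_mul_of_nonneg_right hinv ha0.le
  have hstep3 : a ^ (1 - t) ≤ r ^ (1-t) * (δ⁻¹) ^ (1 - t) := by
    have h1 : a ^ (1-t) ≤ (r / δ) ^ (1-t) :=
      Real.rpow_le_rpow ha0.le har (by linarith)
    have h2' : (r / δ) ^ (1-t) = r ^ (1-t) * (δ⁻¹) ^ (1-t) := by
      rw [div_eq_mul_inv, Real.mul_rpow hr.le (by positivity)]
    rw [← h2']
    exact h1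
  calc c⁻¹ ^ (n+1) * a ≤ c⁻¹ * a ^ (1 - t) := hstep2
    _ ≤ c⁻¹ * (r ^ (1-t) * (δ⁻¹) ^ (1 - t)) :=
        mul_le_mul_of_nonneg_left hstep3 (by positivity)
    _ = (c⁻¹ * (δ⁻¹) ^ (1 - t)) * r ^ (1 - t) := by ring

end Hung


/-- The Frostman measure behind Hungerford's lemma: under the stopping-time conditions
(a), (b), (c), with `β = 1 - log c / log ε`, there are a Borel probability measure `ν`
with `ν(E) = 1` and a constant `C` with `ν(B(x,r)) ≤ C rᵝ` for `x ∈ E`, `0 < r ≤ 1`. -/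
theorem hungerford_frostman_measure (Λ : ℕ → ℝ) (lam : ℝ) (hlam : lam < 1 / 2)
    (hΛ : ∀ n, 1 / 4 ≤ Λ n ∧ Λ n ≤ lam)
    (μ : Measure ℂ) [IsProbabilityMeasure μ]
    (hμK : μ (cantorK Λ) = 1)
    (hμQ : ∀ (w : ℕ → Bool × Bool) (n : ℕ), μ (cSquare Λ w n) = (4 : ℝ≥0∞)⁻¹ ^ n)
    (ε c : ℝ) (hε : 0 < ε) (hεc : ε < c) (hc : c < 1)
    (F : ℕ → Set (Set ℂ))
    (hFD : ∀ n, ∀ Q ∈ F n, ∃ (m : ℕ) (w : ℕ → Bool × Bool), Q = cSquare Λ w m)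
    (hdisj : ∀ n, (F n).PairwiseDisjoint id)
    (hF0 : F 0 = {cSquare Λ (fun _ => (false, false)) 0})
    (hb : ∀ n, ∀ Q ∈ F (n + 1), ∃ Q' ∈ F n, Q ⊆ Q' ∧ μ Q ≤ ENNReal.ofReal ε * μ Q')
    (hc' : ∀ n, ∀ Q ∈ F n,
      ENNReal.ofReal c * μ Q ≤ ∑' R : {R : Set ℂ // R ∈ F (n + 1) ∧ R ⊆ Q}, μ R) :
    ∃ ν : Measure ℂ, IsProbabilityMeasure ν ∧ ν (⋂ n, ⋃ Q ∈ F n, Q) = 1 ∧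
      ∃ C : ℝ, ∀ x ∈ ⋂ n, ⋃ Q ∈ F n, Q, ∀ r : ℝ, 0 < r → r ≤ 1 →
        ν (Metric.closedBall x r) ≤
          ENNReal.ofReal (C * r ^ (1 - Real.log c / Real.log ε)) := by
  classical
  have hc0 : 0 < c := hε.trans hεc
  have hε1 : ε < 1 := hεc.trans hc
  have hlam4 : (1/4:ℝ) ≤ lam := le_trans (hΛ 0).1 (hΛ 0).2
  have hδ0 : (0:ℝ) < 1 - 2 * lam := by linarith
  have hlε : Real.log ε < 0 := Real.log_neg hε hε1
  have hlc : Real.log c < 0 := Real.log_neg hc0 hc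
  have hlεc : Real.log ε < Real.log c := Real.log_lt_log hε hεc
  have ht0 : 0 < Real.log c / Real.log ε := div_pos_of_neg_of_neg hlc hlε
  have ht1 : Real.log c / Real.log ε < 1 := by
    have e : Real.log c / Real.log ε - 1 = (Real.log c - Real.log ε) / Real.log ε := by
      rw [eq_div_iff (ne_of_lt hlε)]
      linear_combination div_mul_cancel₀ (Real.log c) (ne_of_lt hlε)
    have h2 : (Real.log c - Real.log ε) / Real.log ε < 0 :=
      div_neg_of_pos_of_neg (by linarith) hlε
    linarith [e ▸ h2]
  set t : ℝ := Real.log c / Real.log ε with htdef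
  set β : ℝ := 1 - t with hβdef
  have hβ0 : 0 < β := by rw [hβdef]; linarith
  set δ : ℝ := 1 - 2 * lam with hδdef
  obtain ⟨ν, hprob, hνQ, hνE⟩ := Hung.exists_nu (hΛ := hΛ) (hlam := hlam) (hFD := hFD)
    (hμQ := hμQ) (hdisj := hdisj) (hF0 := hF0) (hb := hb) (hc' := hc') (hε := hε)
    (hεc := hεc) (hcc := hc)
  haveI := hprob
  refine ⟨ν, hprob, hνE, c⁻¹ * (δ⁻¹) ^ β, ?_⟩
  intro x hx r hr0 hr1
  by_cases hrδ : δ ≤ r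
  · -- large radius
    refine le_trans (prob_le_one) ?_
    rw [show (1:ℝ≥0∞) = ENNReal.ofReal 1 from ENNReal.ofReal_one.symm]
    apply ENNReal.ofReal_le_ofReal
    have hδβ : (δ⁻¹) ^ β * δ ^ β = 1 := by
      rw [← Real.mul_rpow (by positivity) hδ0.le, inv_mul_cancel₀ hδ0.ne', Real.one_rpow]
    have hrβ : δ ^ β ≤ r ^ β := Real.rpow_le_rpow hδ0.le hrδ hβ0.le
    have h1c : 1 ≤ c⁻¹ := by
      have := inv_anti₀ hc0 hc.le
      simpa using this
    calc (1:ℝ) = 1 * ((δ⁻¹) ^ β * δ ^ β) := by rw [hδβ, mul_one]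
      _ ≤ c⁻¹ * ((δ⁻¹) ^ β * r ^ β) := by
          apply mul_le_mul h1c _ (by positivity) (by positivity)
          exact mul_le_mul_of_nonneg_left hrβ (by positivity)
      _ = c⁻¹ * (δ⁻¹) ^ β * r ^ β := by ring
  · push_neg at hrδ
    -- find the generation k₀
    have hs0 : sideLen Λ 0 = 1 := by simp [sideLen]
    have h0Sk : 0 ∈ {k : ℕ | r < δ * sideLen Λ k} := by
      show r < δ * sideLen Λ 0
      rw [hs0, mul_one]
      exact hrδ
    obtain ⟨K, hK⟩ : ∃ K : ℕ, (1/2:ℝ) ^ K < r / δ :=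
      exists_pow_lt_of_lt_one (by positivity) (by norm_num)
    have hbd : ∀ k ∈ {k : ℕ | r < δ * sideLen Λ k}, k < K := by
      intro k hk
      by_contra hcon
      push_neg at hcon
      have h1 : sideLen Λ k ≤ (1/2:ℝ) ^ k := Hung.sideLen_le_pow hΛ hlam k
      have h2 : (1/2:ℝ) ^ k ≤ (1/2:ℝ) ^ K :=
        pow_le_pow_of_le_one (by norm_num) (by norm_num) hcon
      have h3 : r < δ * sideLen Λ k := hk
      have h5 : δ * (r / δ) = r := by field_simp
      have h6 : δ * sideLen Λ k ≤ δ * (1/2:ℝ) ^ K :=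
        mul_le_mul_of_nonneg_left (h1.trans h2) hδ0.le
      have h7 : δ * (1/2:ℝ) ^ K < δ * (r / δ) := mul_lt_mul_of_pos_left hK hδ0
      have h8 : r < r := by
        calc r < δ * sideLen Λ k := h3
          _ ≤ δ * (1/2:ℝ) ^ K := h6
          _ < δ * (r / δ) := h7
          _ = r := h5
      exact absurd h8 (lt_irrefl r)
    set k₀ := Nat.findGreatest (· ∈ {k : ℕ | r < δ * sideLen Λ k}) K with hk₀
    have hk₀S : r < δ * sideLen Λ k₀ := Nat.findGreatest_spec (Nat.zero_le K) h0Sk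
    have hk₀max : ¬ (r < δ * sideLen Λ (k₀ + 1)) := fun hmem =>
      Nat.findGreatest_is_greatest (Nat.lt_succ_self k₀) (hbd _ hmem).le hmem
    have hsm : δ * sideLen Λ (k₀ + 1) ≤ r := not_lt.mp hk₀max
    -- every point of E lies in a generation-(k₀+1) square
    have hEsq : ∀ y ∈ (⋂ n, ⋃ Q ∈ F n, Q), ∃ u : ℕ → Bool × Bool,
        y ∈ cSquare Λ u (k₀ + 1) := by
      intro y hy
      obtain ⟨N', hN'⟩ : ∃ N' : ℕ, ε ^ N' < (1/4:ℝ) ^ (k₀ + 1) :=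
        exists_pow_lt_of_lt_one (by positivity) hε1
      have hyN := Set.mem_iInter.mp hy N'
      simp only [Set.mem_iUnion, exists_prop] at hyN
      obtain ⟨Q, hQF, hyQ⟩ := hyN
      obtain ⟨mq, u, rfl⟩ := hFD N' Q hQF
      have hμq := Hung.mu_le_pow hFD hμQ hb hQF
      have h3 : ((4:ℝ≥0∞)⁻¹ ^ mq).toReal ≤ ((ENNReal.ofReal ε) ^ N').toReal := by
        apply ENNReal.toReal_mono
        · exact ENNReal.pow_ne_top ENNReal.ofReal_ne_top
        · exact le_trans (le_of_eq (hμQ u mq).symm) hμq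
      have h44 : ((4:ℝ≥0∞)⁻¹).toReal = (1/4:ℝ) := by
        rw [ENNReal.toReal_inv]; norm_num
      rw [ENNReal.toReal_pow, ENNReal.toReal_pow, h44, ENNReal.toReal_ofReal hε.le] at h3
      have hm'mq : k₀ + 1 ≤ mq := by
        by_contra hcon
        push_neg at hcon
        have h6 : (1/4:ℝ) ^ (k₀+1) ≤ (1/4:ℝ) ^ mq :=
          pow_le_pow_of_le_one (by norm_num) (by norm_num) hcon.le
        linarith
      exact ⟨u, Hung.cSquare_mono hΛ hlam hm'mq hyQ⟩
    obtain ⟨u, hxu⟩ := hEsq x hx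
    -- the ball meets only this square among generation (k₀+1)
    have hBU : Metric.closedBall x r ∩ (⋃ w, cSquare Λ w (k₀ + 1)) ⊆ cSquare Λ u (k₀ + 1) := by
      rintro z ⟨hzB, hzU⟩
      obtain ⟨v, hzv⟩ := Set.mem_iUnion.mp hzU
      by_cases hvq : cSquare Λ u (k₀ + 1) = cSquare Λ v (k₀ + 1)
      · rw [← hvq] at hzv; exact hzv
      · exfalso
        have hsep := Hung.cSquare_sep hΛ hlam hvq hxu hzv
        have hdist : dist x z ≤ r := by
          rw [dist_comm]
          exact Metric.mem_closedBall.mp hzB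
        have : r < δ * sideLen Λ k₀ := hk₀S
        rw [hδdef] at this
        linarith
    have hUmeas : MeasurableSet (⋃ w, cSquare Λ w (k₀ + 1)) :=
      Hung.measurableSet_unionSquares (k₀ + 1)
    have hU1 : ν (⋃ w, cSquare Λ w (k₀ + 1)) = 1 := by
      refine le_antisymm prob_le_one ?_
      rw [← hνE]
      apply measure_mono
      intro y hy
      obtain ⟨u', hu'⟩ := hEsq y hy
      exact Set.mem_iUnion.mpr ⟨u', hu'⟩
    have hUc : ν ((⋃ w, cSquare Λ w (k₀ + 1))ᶜ) = 0 := by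
      rw [measure_compl hUmeas (by rw [hU1]; exact ENNReal.one_ne_top), hU1, measure_univ]
      simp
    have hνB : ν (Metric.closedBall x r) ≤ ν (cSquare Λ u (k₀ + 1)) := by
      calc ν (Metric.closedBall x r)
          ≤ ν (Metric.closedBall x r ∩ (⋃ w, cSquare Λ w (k₀ + 1))) +
            ν ((⋃ w, cSquare Λ w (k₀ + 1))ᶜ) := by
            refine le_trans (measure_mono ?_) (measure_union_le _ _)
            intro z hz
            by_cases hzU : z ∈ ⋃ w, cSquare Λ w (k₀ + 1)
            · exact Set.mem_union_left _ ⟨hz, hzU⟩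
            · exact Set.mem_union_right _ hzU
        _ = ν (Metric.closedBall x r ∩ (⋃ w, cSquare Λ w (k₀ + 1))) := by
            rw [hUc, add_zero]
        _ ≤ ν (cSquare Λ u (k₀ + 1)) := measure_mono hBU
    obtain ⟨n, hn1, hn2⟩ := Hung.nu_P_bound (hΛ := hΛ) (hlam := hlam) (hFD := hFD)
      (hμQ := hμQ) (hdisj := hdisj) (hF0 := hF0) (hb := hb) (hc' := hc') (hε := hε)
      (hεc := hεc) (hcc := hc) ν hprob hνQ hνE (k₀ + 1) u
    -- real form of the measure bound
    have h3 : ((4:ℝ≥0∞)⁻¹ ^ (k₀+1)).toReal ≤ ((ENNReal.ofReal ε) ^ n).toReal := by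
      apply ENNReal.toReal_mono
      · exact ENNReal.pow_ne_top ENNReal.ofReal_ne_top
      · exact le_trans (le_of_eq (hμQ u (k₀+1)).symm) hn2
    have h44 : ((4:ℝ≥0∞)⁻¹).toReal = (1/4:ℝ) := by
      rw [ENNReal.toReal_inv]; norm_num
    rw [ENNReal.toReal_pow, ENNReal.toReal_pow, h44, ENNReal.toReal_ofReal hε.le] at h3
    have has : (1/4:ℝ) ^ (k₀+1) ≤ r / δ := by
      have h1 : (1/4:ℝ) ^ (k₀+1) ≤ sideLen Λ (k₀+1) := Hung.pow_le_sideLen hΛ (k₀+1)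
      have h2 : sideLen Λ (k₀+1) ≤ r / δ := by
        rw [le_div_iff₀ hδ0]
        linarith
      linarith
    have hreal := Hung.frostman_arith hc0 hε hε1 hδ0 hr0 htdef ht0.le ht1.le
      (show (0:ℝ) < (1/4:ℝ)^(k₀+1) by positivity) h3 has
    calc ν (Metric.closedBall x r) ≤ ν (cSquare Λ u (k₀ + 1)) := hνB
      _ ≤ (ENNReal.ofReal c)⁻¹ ^ (n + 1) * μ (cSquare Λ u (k₀ + 1)) := hn1
      _ = ENNReal.ofReal (c⁻¹ ^ (n+1) * (1/4:ℝ) ^ (k₀+1)) := by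
          rw [hμQ u (k₀+1)]
          rw [← ENNReal.ofReal_inv_of_pos hc0, ← ENNReal.ofReal_pow (by positivity)]
          have h4 : (4:ℝ≥0∞)⁻¹ = ENNReal.ofReal (1/4:ℝ) := by
            rw [show (1/4:ℝ) = (4:ℝ)⁻¹ by norm_num, ENNReal.ofReal_inv_of_pos (by norm_num)]
            norm_num
          rw [h4, ← ENNReal.ofReal_pow (by norm_num), ← ENNReal.ofReal_mul (by positivity)]
      _ ≤ ENNReal.ofReal (c⁻¹ * (δ⁻¹) ^ β * r ^ β) := ENNReal.ofReal_le_ofReal (by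
          rw [hβdef]
          exact hreal)
end
end

section
/- If Σ_n a_n < ∞, then the sequence (S_n(x))_{n=0}^∞ converges for every x ∈ K. -/
open MeasureTheory Filter Set Topology
open scoped ENNReal

noncomputable section

open scoped Classical in
/-- `Q_n(x)`: the generation-`n` square containing `x` (the squares of a given
generation are pairwise disjoint, so it is unique for `x ∈ K`). -/
def Qn (Λ : ℕ → ℝ) (n : ℕ) (x : ℂ) : Set ℂ :=
  if h : ∃ w, x ∈ cSquare Λ w n then cSquare Λ (Classical.choose h) n else ∅

/-- The truncated Cauchy integral at generation `n`:
`T_n(x) = ∫_{K ∖ Q_n(x)} (x-y)⁻¹ dμ(y)`. -/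
def Tn (Λ : ℕ → ℝ) (μ : Measure ℂ) (n : ℕ) (x : ℂ) : ℂ :=
  ∫ y in cantorK Λ \ Qn Λ n x, (x - y)⁻¹ ∂μ

/-- The martingale `S_n(x) = μ(Q_n(x))⁻¹ ∫_{Q_n(x)} T_n dμ`. -/
def Sn (Λ : ℕ → ℝ) (μ : Measure ℂ) (n : ℕ) (x : ℂ) : ℂ :=
  ⨍ z in Qn Λ n x, Tn Λ μ n z ∂μ

set_option linter.unusedSectionVars false

section Geometry
variable {Λ : ℕ → ℝ} {lam : ℝ} (hlam : lam < 1 / 2) (hΛ : ∀ n, 1 / 4 ≤ Λ n ∧ Λ n ≤ lam)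

include hΛ

lemma lam_pos : 0 < lam := lt_of_lt_of_le (by norm_num) (le_trans (hΛ 0).1 (hΛ 0).2)

lemma sideLen_pos (n : ℕ) : 0 < sideLen Λ n :=
  Finset.prod_pos fun k _ => lt_of_lt_of_le (by norm_num) (hΛ k).1

lemma sideLen_succ (n : ℕ) : sideLen Λ (n + 1) = sideLen Λ n * Λ n :=
  Finset.prod_range_succ _ _

lemma sideLen_succ_le (n : ℕ) : sideLen Λ (n + 1) ≤ lam * sideLen Λ n := by
  rw [sideLen_succ hΛ n, mul_comm]
  exact mul_le_mul_of_nonneg_right (hΛ n).2 (le_of_lt (sideLen_pos hΛ n))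

include hlam

lemma sideLen_ratio {m n : ℕ} (h : m ≤ n) :
    sideLen Λ n ≤ lam ^ (n - m) * sideLen Λ m := by
  induction n with
  | zero => simp_all
  | succ n ih =>
    rcases Nat.eq_or_lt_of_le h with rfl | h'
    · simp
    · have hmn : m ≤ n := Nat.lt_succ_iff.mp h'
      have : n + 1 - m = (n - m) + 1 := by omega
      rw [this, pow_succ]
      calc sideLen Λ (n+1) ≤ lam * sideLen Λ n := sideLen_succ_le hΛ n
        _ ≤ lam * (lam ^ (n-m) * sideLen Λ m) := by
            exact mul_le_mul_of_nonneg_left (ih hmn) (le_of_lt (lam_pos hΛ))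
        _ = lam ^ (n-m) * lam * sideLen Λ m := by ring

lemma sideLen_anti {m n : ℕ} (h : m ≤ n) : sideLen Λ n ≤ sideLen Λ m := by
  calc sideLen Λ n ≤ lam ^ (n-m) * sideLen Λ m := sideLen_ratio hlam hΛ h
    _ ≤ 1 * sideLen Λ m := by
        apply mul_le_mul_of_nonneg_right _ (le_of_lt (sideLen_pos hΛ m))
        exact pow_le_one₀ (le_of_lt (lam_pos hΛ)) (by linarith)
    _ = sideLen Λ m := one_mul _

lemma gap_lower (n : ℕ) :
    (1 - 2 * lam) * sideLen Λ n ≤ sideLen Λ n - 2 * sideLen Λ (n + 1) := by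
  have := sideLen_succ_le hΛ n
  nlinarith [sideLen_pos hΛ n]

lemma gap_pos (n : ℕ) : 0 < (1 - 2 * lam) * sideLen Λ n :=
  mul_pos (by linarith) (sideLen_pos hΛ n)

end Geometry

section Squares
variable {Λ : ℕ → ℝ} {lam : ℝ} (hlam : lam < 1 / 2) (hΛ : ∀ n, 1 / 4 ≤ Λ n ∧ Λ n ≤ lam)

lemma cornerPt_re (w : ℕ → Bool × Bool) (n : ℕ) :
    (cornerPt Λ w n).re
      = ∑ k ∈ Finset.range n, (if (w k).1 then sideLen Λ k - sideLen Λ (k+1) else 0) := by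
  unfold cornerPt
  rw [Complex.re_sum]
  refine Finset.sum_congr rfl fun k _ => ?_
  simp [Complex.add_re, Complex.mul_re]

lemma cornerPt_im (w : ℕ → Bool × Bool) (n : ℕ) :
    (cornerPt Λ w n).im
      = ∑ k ∈ Finset.range n, (if (w k).2 then sideLen Λ k - sideLen Λ (k+1) else 0) := by
  unfold cornerPt
  rw [Complex.im_sum]
  refine Finset.sum_congr rfl fun k _ => ?_
  simp [Complex.add_im, Complex.mul_im]

lemma cornerPt_re_succ (w : ℕ → Bool × Bool) (n : ℕ) :
    (cornerPt Λ w (n+1)).re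
      = (cornerPt Λ w n).re + (if (w n).1 then sideLen Λ n - sideLen Λ (n+1) else 0) := by
  rw [cornerPt_re, cornerPt_re, Finset.sum_range_succ]

lemma cornerPt_im_succ (w : ℕ → Bool × Bool) (n : ℕ) :
    (cornerPt Λ w (n+1)).im
      = (cornerPt Λ w n).im + (if (w n).2 then sideLen Λ n - sideLen Λ (n+1) else 0) := by
  rw [cornerPt_im, cornerPt_im, Finset.sum_range_succ]

lemma cornerPt_congr {w w' : ℕ → Bool × Bool} {n : ℕ} (h : ∀ k < n, w k = w' k) :
    cornerPt Λ w n = cornerPt Λ w' n := by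
  unfold cornerPt
  refine Finset.sum_congr rfl fun k hk => ?_
  rw [h k (Finset.mem_range.mp hk)]

lemma cSquare_eq_of_corner {w w' : ℕ → Bool × Bool} {n : ℕ}
    (h : cornerPt Λ w n = cornerPt Λ w' n) : cSquare Λ w n = cSquare Λ w' n := by
  unfold cSquare; rw [h]

lemma cSquare_zero_eq (w w' : ℕ → Bool × Bool) : cSquare Λ w 0 = cSquare Λ w' 0 :=
  cSquare_eq_of_corner (by simp [cornerPt])

include hlam hΛ

lemma offset_nonneg (n : ℕ) : 0 ≤ sideLen Λ n - sideLen Λ (n+1) := by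
  have h1 := sideLen_succ_le hΛ n
  nlinarith [sideLen_pos hΛ n]

lemma cSquare_succ_subset (w : ℕ → Bool × Bool) (n : ℕ) :
    cSquare Λ w (n+1) ⊆ cSquare Λ w n := by
  intro z hz
  obtain ⟨h1, h2, h3, h4⟩ := hz
  have hre := cornerPt_re_succ (Λ := Λ) w n
  have him := cornerPt_im_succ (Λ := Λ) w n
  have hoff := offset_nonneg hlam hΛ n
  have hs : 0 < sideLen Λ (n+1) := sideLen_pos hΛ (n+1)
  constructor
  · rw [hre] at h1; split_ifs at h1 <;> linarith
  constructor
  · rw [hre] at h2; split_ifs at h2 <;> linarith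
  constructor
  · rw [him] at h3; split_ifs at h3 <;> linarith
  · rw [him] at h4; split_ifs at h4 <;> linarith

lemma cSquare_subset_of_le (w : ℕ → Bool × Bool) {m n : ℕ} (h : m ≤ n) :
    cSquare Λ w n ⊆ cSquare Λ w m := by
  induction n with
  | zero => simp_all
  | succ n ih =>
    rcases Nat.eq_or_lt_of_le h with rfl | h'
    · exact subset_rfl
    · exact (cSquare_succ_subset hlam hΛ w n).trans (ih (Nat.lt_succ_iff.mp h'))

lemma cornerPt_mem (w : ℕ → Bool × Bool) (n : ℕ) : cornerPt Λ w n ∈ cSquare Λ w n := by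
  have := le_of_lt (sideLen_pos hΛ n)
  exact ⟨le_refl _, by linarith, le_refl _, by linarith⟩

lemma corner_eq_of_cSquare_eq {w w' : ℕ → Bool × Bool} {n : ℕ}
    (h : cSquare Λ w n = cSquare Λ w' n) : cornerPt Λ w n = cornerPt Λ w' n := by
  have h1 : cornerPt Λ w n ∈ cSquare Λ w' n := h ▸ cornerPt_mem hlam hΛ w n
  have h2 : cornerPt Λ w' n ∈ cSquare Λ w n := h ▸ cornerPt_mem hlam hΛ w' n
  obtain ⟨a1, _, a3, _⟩ := h1
  obtain ⟨b1, _, b3, _⟩ := h2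
  exact Complex.ext (le_antisymm b1 a1) (le_antisymm b3 a3)

omit hlam hΛ in
lemma line_sep {c d s' a b o o' : ℝ} (ho : o = 0 ∨ o = d) (ho' : o' = 0 ∨ o' = d)
    (hne : o ≠ o') (ha : c + o ≤ a) (ha' : a ≤ c + o + s') (hb : c + o' ≤ b)
    (hb' : b ≤ c + o' + s') : d - s' ≤ |a - b| := by
  rcases ho with rfl | rfl <;> rcases ho' with rfl | rfl
  · exact absurd rfl hne
  · rw [abs_sub_comm]; rw [le_abs]; left; linarith
  · rw [le_abs]; left; linarith
  · exact absurd rfl hne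

include hlam hΛ in
/-- Key separation: two distinct children of squares with the same corner are far apart. -/
lemma sep_step {w w' : ℕ → Bool × Bool} {m : ℕ} {z y : ℂ}
    (hc : cornerPt Λ w m = cornerPt Λ w' m)
    (hne : cSquare Λ w (m+1) ≠ cSquare Λ w' (m+1))
    (hz : z ∈ cSquare Λ w (m+1)) (hy : y ∈ cSquare Λ w' (m+1)) :
    (1 - 2 * lam) * sideLen Λ m ≤ ‖z - y‖ := by
  set d := sideLen Λ m - sideLen Λ (m+1) with hd
  have hdpos : 0 < d := by
    have h1 := sideLen_succ hΛ m
    have h2 := sideLen_pos hΛ m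
    have h3 := (hΛ m).2
    rw [hd]; nlinarith
  have hbits : (w m).1 ≠ (w' m).1 ∨ (w m).2 ≠ (w' m).2 := by
    by_contra hcon
    push_neg at hcon
    apply hne
    apply cSquare_eq_of_corner
    apply Complex.ext
    · rw [cornerPt_re_succ, cornerPt_re_succ, hc, hcon.1]
    · rw [cornerPt_im_succ, cornerPt_im_succ, hc, hcon.2]
  have hgap : (1 - 2*lam) * sideLen Λ m ≤ d - sideLen Λ (m+1) := by
    have := gap_lower hlam hΛ m; rw [hd]; linarith
  obtain ⟨z1, z2, z3, z4⟩ := hz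
  obtain ⟨y1, y2, y3, y4⟩ := hy
  rcases hbits with hb | hb
  · have key : d - sideLen Λ (m+1) ≤ |z.re - y.re| := by
      refine line_sep (c := (cornerPt Λ w m).re)
        (o := if (w m).1 then d else 0) (o' := if (w' m).1 then d else 0)
        (by split_ifs <;> simp) (by split_ifs <;> simp) ?_ ?_ ?_ ?_ ?_
      · split_ifs with h1 h2 h2
        · simp [h1, h2] at hb
        · exact ne_of_gt hdpos
        · exact ne_of_lt hdpos
        · simp [h1, h2] at hb
      · rw [cornerPt_re_succ] at z1; exact z1
      · rw [cornerPt_re_succ] at z2; exact z2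
      · rw [cornerPt_re_succ, ← hc] at y1; exact y1
      · rw [cornerPt_re_succ, ← hc] at y2; exact y2
    calc (1 - 2*lam) * sideLen Λ m ≤ |z.re - y.re| := le_trans hgap key
      _ = |(z - y).re| := by rw [Complex.sub_re]
      _ ≤ ‖z - y‖ := Complex.abs_re_le_norm _
  · have key : d - sideLen Λ (m+1) ≤ |z.im - y.im| := by
      refine line_sep (c := (cornerPt Λ w m).im)
        (o := if (w m).2 then d else 0) (o' := if (w' m).2 then d else 0)
        (by split_ifs <;> simp) (by split_ifs <;> simp) ?_ ?_ ?_ ?_ ?_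
      · split_ifs with h1 h2 h2
        · simp [h1, h2] at hb
        · exact ne_of_gt hdpos
        · exact ne_of_lt hdpos
        · simp [h1, h2] at hb
      · rw [cornerPt_im_succ] at z3; exact z3
      · rw [cornerPt_im_succ] at z4; exact z4
      · rw [cornerPt_im_succ, ← hc] at y3; exact y3
      · rw [cornerPt_im_succ, ← hc] at y4; exact y4
    calc (1 - 2*lam) * sideLen Λ m ≤ |z.im - y.im| := le_trans hgap key
      _ = |(z - y).im| := by rw [Complex.sub_im]
      _ ≤ ‖z - y‖ := Complex.abs_im_le_norm _

include hlam hΛ in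
lemma cSquare_unique {w w' : ℕ → Bool × Bool} {n : ℕ} {z : ℂ}
    (h : z ∈ cSquare Λ w n) (h' : z ∈ cSquare Λ w' n) :
    cSquare Λ w n = cSquare Λ w' n := by
  induction n with
  | zero => exact cSquare_zero_eq w w'
  | succ n ih =>
    have hs : cSquare Λ w n = cSquare Λ w' n :=
      ih (cSquare_succ_subset hlam hΛ w n h) (cSquare_succ_subset hlam hΛ w' n h')
    have hc := corner_eq_of_cSquare_eq hlam hΛ hs
    by_contra hne
    have := sep_step hlam hΛ hc hne h h'
    simp only [sub_self, norm_zero] at this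
    have := gap_pos hlam hΛ n
    linarith
end Squares

section SetFacts
variable {Λ : ℕ → ℝ} {lam : ℝ} (hlam : lam < 1 / 2) (hΛ : ∀ n, 1 / 4 ≤ Λ n ∧ Λ n ≤ lam)

include hlam hΛ in
lemma Qn_eq {w : ℕ → Bool × Bool} {n : ℕ} {z : ℂ} (h : z ∈ cSquare Λ w n) :
    Qn Λ n z = cSquare Λ w n := by
  unfold Qn
  rw [dif_pos ⟨w, h⟩]
  exact cSquare_unique hlam hΛ (Classical.choose_spec (⟨w, h⟩ : ∃ w, z ∈ cSquare Λ w n)) h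

lemma cSquare_measurable (w : ℕ → Bool × Bool) (n : ℕ) :
    MeasurableSet (cSquare Λ w n) := by
  have : cSquare Λ w n =
      Complex.re ⁻¹' Icc (cornerPt Λ w n).re ((cornerPt Λ w n).re + sideLen Λ n) ∩
      Complex.im ⁻¹' Icc (cornerPt Λ w n).im ((cornerPt Λ w n).im + sideLen Λ n) := by
    ext z
    simp [cSquare, mem_preimage, mem_Icc, and_assoc]
  rw [this]
  exact (measurableSet_Icc.preimage Complex.measurable_re).inter
    (measurableSet_Icc.preimage Complex.measurable_im)

lemma iUnion_cSquare (n : ℕ) :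
    (⋃ w : ℕ → Bool × Bool, cSquare Λ w n)
      = ⋃ v : Fin n → Bool × Bool,
          cSquare Λ (fun k => if h : k < n then v ⟨k, h⟩ else (false, false)) n := by
  apply Set.Subset.antisymm
  · rintro z hz
    obtain ⟨_, ⟨w, rfl⟩, hw⟩ := hz
    refine mem_iUnion.mpr ⟨fun k => w k.1, ?_⟩
    have : cSquare Λ (fun k => if h : k < n then w k else (false, false)) n
        = cSquare Λ w n := by
      apply cSquare_eq_of_corner
      apply cornerPt_congr
      intro k hk
      simp [hk]
    rw [this]
    exact hw
  · rintro z hz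
    obtain ⟨_, ⟨v, rfl⟩, hv⟩ := hz
    exact mem_iUnion.mpr ⟨_, hv⟩

lemma cantorK_measurable : MeasurableSet (cantorK Λ) := by
  unfold cantorK
  refine MeasurableSet.iInter fun n => ?_
  rw [iUnion_cSquare]
  exact MeasurableSet.iUnion fun v => cSquare_measurable _ _

lemma cantorK_subset_sq0 (w : ℕ → Bool × Bool) : cantorK Λ ⊆ cSquare Λ w 0 := by
  intro z hz
  have := mem_iInter.mp hz 0
  obtain ⟨_, ⟨w', rfl⟩, hw'⟩ := this
  rw [cSquare_zero_eq w w']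
  exact hw'

lemma mem_sq_of_mem_K {x : ℂ} (hx : x ∈ cantorK Λ) (n : ℕ) :
    ∃ w, x ∈ cSquare Λ w n := by
  have := mem_iInter.mp hx n
  obtain ⟨_, ⟨w, rfl⟩, hw⟩ := this
  exact ⟨w, hw⟩

end SetFacts

section MeasureFacts
variable {Λ : ℕ → ℝ} {lam : ℝ} (hlam : lam < 1 / 2) (hΛ : ∀ n, 1 / 4 ≤ Λ n ∧ Λ n ≤ lam)
variable {μ : Measure ℂ} [IsProbabilityMeasure μ]
variable (hμK : μ (cantorK Λ) = 1)
variable (hμQ : ∀ (w : ℕ → Bool × Bool) (n : ℕ), μ (cSquare Λ w n) = (4 : ℝ≥0∞)⁻¹ ^ n)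

include hμQ in
lemma sq_ne_top (w : ℕ → Bool × Bool) (n : ℕ) : μ (cSquare Λ w n) ≠ ⊤ := by
  rw [hμQ]
  exact ENNReal.pow_ne_top (by simp)

include hμQ in
lemma sq_toReal (w : ℕ → Bool × Bool) (n : ℕ) :
    (μ (cSquare Λ w n)).toReal = (4 : ℝ)⁻¹ ^ n := by
  rw [hμQ]
  simp [ENNReal.toReal_pow, ENNReal.toReal_inv]

include hμK in
lemma ae_mem_K : ∀ᵐ y ∂μ, y ∈ cantorK Λ := by
  rw [ae_iff]
  have h1 : {y : ℂ | ¬ y ∈ cantorK Λ} = (cantorK Λ)ᶜ := rfl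
  rw [h1, measure_compl cantorK_measurable (measure_ne_top μ _), measure_univ, hμK]
  simp

lemma meas_inv_sub (z : ℂ) : Measurable (fun y : ℂ => (z - y)⁻¹) :=
  (measurable_const.sub measurable_id).inv

lemma F_strongly_meas (S : Set ℂ) :
    StronglyMeasurable (fun z : ℂ => ∫ y in S, (z - y)⁻¹ ∂μ) := by
  have h : StronglyMeasurable (fun p : ℂ × ℂ => (p.1 - p.2)⁻¹) :=
    ((measurable_fst.sub measurable_snd).inv).stronglyMeasurable
  exact h.integral_prod_right'

include hlam hΛ in
/-- Separation of a point of a child square from points leaving at generation `j`. -/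
lemma sep_piece {u : ℕ → Bool × Bool} {j : ℕ} {z y : ℂ}
    (hz : z ∈ cSquare Λ u (j+1))
    (hy : y ∈ (cantorK Λ ∩ cSquare Λ u j) \ cSquare Λ u (j+1)) :
    (1 - 2 * lam) * sideLen Λ j ≤ ‖z - y‖ := by
  obtain ⟨⟨hyK, hyQ⟩, hyQ'⟩ := hy
  obtain ⟨v, hv⟩ := mem_sq_of_mem_K hyK (j+1)
  have hne : cSquare Λ u (j+1) ≠ cSquare Λ v (j+1) := fun he => hyQ' (he ▸ hv)
  have hsq : cSquare Λ v j = cSquare Λ u j :=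
    cSquare_unique hlam hΛ (cSquare_succ_subset hlam hΛ v j hv) hyQ
  have hc : cornerPt Λ u j = cornerPt Λ v j :=
    (corner_eq_of_cSquare_eq hlam hΛ hsq).symm
  exact sep_step hlam hΛ hc hne hz hv

include hlam hΛ in
lemma norm_inv_le {u : ℕ → Bool × Bool} {j : ℕ} {z y : ℂ}
    (hz : z ∈ cSquare Λ u (j+1))
    (hy : y ∈ (cantorK Λ ∩ cSquare Λ u j) \ cSquare Λ u (j+1)) :
    ‖(z - y)⁻¹‖ ≤ ((1 - 2 * lam) * sideLen Λ j)⁻¹ := by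
  rw [norm_inv]
  exact inv_anti₀ (gap_pos hlam hΛ j) (sep_piece hlam hΛ hz hy)

include hlam hΛ hμQ in
/-- Master estimate: integrability and norm bound for integrals over `K ∖ Qₙ`. -/
lemma master (u : ℕ → Bool × Bool) {h : ℂ → ℂ} (hmeas : Measurable h) (M : ℕ → ℝ)
    (hM : ∀ j, 0 ≤ M j) (n : ℕ)
    (hb : ∀ j < n, ∀ y ∈ (cantorK Λ ∩ cSquare Λ u j) \ cSquare Λ u (j+1), ‖h y‖ ≤ M j) :
    IntegrableOn h (cantorK Λ \ cSquare Λ u n) μ ∧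
      ‖∫ y in cantorK Λ \ cSquare Λ u n, h y ∂μ‖
        ≤ ∑ j ∈ Finset.range n, M j * (4 : ℝ)⁻¹ ^ j := by
  induction n with
  | zero =>
    have he : cantorK Λ \ cSquare Λ u 0 = ∅ :=
      diff_eq_empty.mpr (cantorK_subset_sq0 u)
    rw [he]
    simp [integrableOn_empty]
  | succ n ih =>
    obtain ⟨ihInt, ihBound⟩ := ih (fun j hj => hb j (Nat.lt_succ_of_lt hj))
    set B := cantorK Λ \ cSquare Λ u n with hB
    set C := (cantorK Λ ∩ cSquare Λ u n) \ cSquare Λ u (n+1) with hCdef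
    have hsub := cSquare_succ_subset hlam hΛ u n
    have hAB : cantorK Λ \ cSquare Λ u (n+1) = B ∪ C := by
      ext y
      simp only [hB, hCdef, mem_diff, mem_union, mem_inter_iff]
      constructor
      · rintro ⟨hK, hn1⟩
        by_cases hQ : y ∈ cSquare Λ u n
        · exact Or.inr ⟨⟨hK, hQ⟩, hn1⟩
        · exact Or.inl ⟨hK, hQ⟩
      · rintro (⟨hK, hn⟩ | ⟨⟨hK, _⟩, hn1⟩)
        · exact ⟨hK, fun hq => hn (hsub hq)⟩
        · exact ⟨hK, hn1⟩
    have hCmeas : MeasurableSet C :=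
      ((cantorK_measurable.inter (cSquare_measurable u n)).diff (cSquare_measurable u (n+1)))
    have hdisj : Disjoint B C := by
      rw [Set.disjoint_left]
      rintro y ⟨_, hyn⟩ ⟨⟨_, hyn'⟩, _⟩
      exact hyn hyn'
    have intC : IntegrableOn h C μ := by
      refine Integrable.mono' (integrable_const (M n)) hmeas.aestronglyMeasurable.restrict ?_
      exact (ae_restrict_iff' hCmeas).mpr (ae_of_all _ (fun y hy => hb n (Nat.lt_succ_self n) y hy))
    have hCb : ‖∫ y in C, h y ∂μ‖ ≤ M n * (4 : ℝ)⁻¹ ^ n := by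
      have hle : μ C ≤ μ (cSquare Λ u n) := by
        apply measure_mono
        intro y hy
        exact hy.1.2
      have h1 : ‖∫ y in C, h y ∂μ‖ ≤ M n * (μ C).toReal :=
        norm_setIntegral_le_of_norm_le_const_ae (lt_of_le_of_lt hle
          (lt_of_le_of_ne le_top (sq_ne_top hμQ u n)))
          ((ae_restrict_iff' hCmeas).mpr (ae_of_all _ (fun y hy => hb n (Nat.lt_succ_self n) y hy)))
      refine h1.trans ?_
      apply mul_le_mul_of_nonneg_left _ (hM n)
      calc (μ C).toReal ≤ (μ (cSquare Λ u n)).toReal :=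
            ENNReal.toReal_mono (sq_ne_top hμQ u n) hle
        _ = (4 : ℝ)⁻¹ ^ n := sq_toReal hμQ u n
    constructor
    · rw [hAB]
      exact ihInt.union intC
    · rw [hAB, setIntegral_union hdisj hCmeas ihInt intC, Finset.sum_range_succ]
      exact le_trans (norm_add_le _ _) (add_le_add ihBound hCb)

end MeasureFacts

/-- Uniform bound for `‖Tₙ‖` on `K`. -/
def Mtot (Λ : ℕ → ℝ) (lam : ℝ) (n : ℕ) : ℝ :=
  ∑ j ∈ Finset.range n, ((1 - 2 * lam) * sideLen Λ j)⁻¹ * (4 : ℝ)⁻¹ ^ j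

/-- Bound for the oscillation of `Tₙ` on a generation-`n` square. -/
def oscB (Λ : ℕ → ℝ) (lam : ℝ) (n : ℕ) : ℝ :=
  ∑ j ∈ Finset.range n,
    2 * sideLen Λ n * (((1 - 2 * lam) * sideLen Λ j)⁻¹) ^ 2 * (4 : ℝ)⁻¹ ^ j

section Estimates
variable {Λ : ℕ → ℝ} {lam : ℝ} (hlam : lam < 1 / 2) (hΛ : ∀ n, 1 / 4 ≤ Λ n ∧ Λ n ≤ lam)
variable {μ : Measure ℂ} [IsProbabilityMeasure μ]
variable (hμK : μ (cantorK Λ) = 1)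
variable (hμQ : ∀ (w : ℕ → Bool × Bool) (n : ℕ), μ (cSquare Λ w n) = (4 : ℝ≥0∞)⁻¹ ^ n)

include hlam hΛ in
lemma Tn_eq_F {u : ℕ → Bool × Bool} {n : ℕ} {z : ℂ}
    (hz : z ∈ cSquare Λ u n) :
    Tn Λ μ n z = ∫ y in cantorK Λ \ cSquare Λ u n, (z - y)⁻¹ ∂μ := by
  unfold Tn
  rw [Qn_eq hlam hΛ hz]

include hlam hΛ hμQ in
lemma Tn_master {u : ℕ → Bool × Bool} {n : ℕ} {z : ℂ}
    (hz : z ∈ cSquare Λ u n) :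
    IntegrableOn (fun y => (z - y)⁻¹) (cantorK Λ \ cSquare Λ u n) μ ∧
      ‖∫ y in cantorK Λ \ cSquare Λ u n, (z - y)⁻¹ ∂μ‖ ≤ Mtot Λ lam n := by
  refine master hlam hΛ hμQ u (meas_inv_sub z)
    (fun j => ((1 - 2 * lam) * sideLen Λ j)⁻¹) (fun j => inv_nonneg.mpr (gap_pos hlam hΛ j).le)
    n (fun j hj y hy => ?_)
  exact norm_inv_le hlam hΛ (cSquare_subset_of_le hlam hΛ u hj hz) hy

include hlam hΛ in
lemma diam_bound {w : ℕ → Bool × Bool} {n : ℕ} {z z' : ℂ}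
    (hz : z ∈ cSquare Λ w n) (hz' : z' ∈ cSquare Λ w n) :
    ‖z - z'‖ ≤ 2 * sideLen Λ n := by
  obtain ⟨a1, a2, a3, a4⟩ := hz
  obtain ⟨b1, b2, b3, b4⟩ := hz'
  calc ‖z - z'‖ ≤ |(z - z').re| + |(z - z').im| :=
        Complex.norm_le_abs_re_add_abs_im _
    _ ≤ sideLen Λ n + sideLen Λ n := by
        rw [Complex.sub_re, Complex.sub_im]
        gcongr <;> rw [abs_le] <;> constructor <;> linarith
    _ = 2 * sideLen Λ n := by ring

include hlam hΛ hμQ in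
/-- Oscillation of `Tₙ` on a generation-`n` square. -/
lemma Tn_osc {u : ℕ → Bool × Bool} {n : ℕ} {z z' : ℂ}
    (hzK : z ∈ cantorK Λ) (hz : z ∈ cSquare Λ u n)
    (hz'K : z' ∈ cantorK Λ) (hz' : z' ∈ cSquare Λ u n) :
    ‖Tn Λ μ n z - Tn Λ μ n z'‖ ≤ oscB Λ lam n := by
  rw [Tn_eq_F hlam hΛ hz, Tn_eq_F hlam hΛ hz',
    ← integral_sub (Tn_master hlam hΛ hμQ hz).1 (Tn_master hlam hΛ hμQ hz').1]
  refine (master hlam hΛ hμQ u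
    ((meas_inv_sub z).sub (meas_inv_sub z'))
    (fun j => 2 * sideLen Λ n * (((1 - 2 * lam) * sideLen Λ j)⁻¹) ^ 2)
    (fun j => mul_nonneg (mul_nonneg (by norm_num) (sideLen_pos hΛ n).le) (sq_nonneg _))
    n (fun j hj y hy => ?_)).2
  have hzj : z ∈ cSquare Λ u (j+1) := cSquare_subset_of_le hlam hΛ u hj hz
  have hz'j : z' ∈ cSquare Λ u (j+1) := cSquare_subset_of_le hlam hΛ u hj hz'
  have h1 : (1 - 2 * lam) * sideLen Λ j ≤ ‖z - y‖ := sep_piece hlam hΛ hzj hy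
  have h2 : (1 - 2 * lam) * sideLen Λ j ≤ ‖z' - y‖ := sep_piece hlam hΛ hz'j hy
  have hgp := gap_pos hlam hΛ j
  have hzy : z - y ≠ 0 := by
    intro h; rw [h] at h1; simp at h1; linarith
  have hz'y : z' - y ≠ 0 := by
    intro h; rw [h] at h2; simp at h2; linarith
  have halg : (z - y)⁻¹ - (z' - y)⁻¹ = (z' - z) * ((z - y)⁻¹ * (z' - y)⁻¹) := by
    rw [inv_sub_inv hzy hz'y]
    have he : z' - y - (z - y) = z' - z := by ring
    rw [he, div_eq_mul_inv, mul_inv]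
  simp only [Pi.sub_apply]
  rw [halg, norm_mul, norm_mul, norm_inv, norm_inv]
  have hd : ‖z' - z‖ ≤ 2 * sideLen Λ n := diam_bound hlam hΛ hz' hz
  have i1 : ‖z - y‖⁻¹ ≤ ((1 - 2 * lam) * sideLen Λ j)⁻¹ := inv_anti₀ hgp h1
  have i2 : ‖z' - y‖⁻¹ ≤ ((1 - 2 * lam) * sideLen Λ j)⁻¹ := inv_anti₀ hgp h2
  have hprod : ‖z - y‖⁻¹ * ‖z' - y‖⁻¹
      ≤ ((1 - 2*lam) * sideLen Λ j)⁻¹ * ((1 - 2*lam) * sideLen Λ j)⁻¹ :=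
    mul_le_mul i1 i2 (inv_nonneg.2 (norm_nonneg _)) (inv_nonneg.2 hgp.le)
  calc ‖z' - z‖ * (‖z - y‖⁻¹ * ‖z' - y‖⁻¹)
      ≤ (2 * sideLen Λ n) * (((1 - 2*lam) * sideLen Λ j)⁻¹ * ((1 - 2*lam) * sideLen Λ j)⁻¹) :=
        mul_le_mul hd hprod
          (mul_nonneg (inv_nonneg.2 (norm_nonneg _)) (inv_nonneg.2 (norm_nonneg _)))
          (mul_nonneg (by norm_num) (sideLen_pos hΛ n).le)
    _ = 2 * sideLen Λ n * (((1 - 2 * lam) * sideLen Λ j)⁻¹) ^ 2 := by ring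

include hlam hΛ hμQ in
/-- The martingale increment of `Tₙ` at a point of a child square. -/
lemma Tn_diff {u : ℕ → Bool × Bool} {n : ℕ} {z : ℂ}
    (hz : z ∈ cSquare Λ u (n+1)) :
    ‖Tn Λ μ (n+1) z - Tn Λ μ n z‖ ≤ ((1 - 2 * lam) * sideLen Λ n)⁻¹ * (4 : ℝ)⁻¹ ^ n := by
  have hzn : z ∈ cSquare Λ u n := cSquare_succ_subset hlam hΛ u n hz
  rw [Tn_eq_F hlam hΛ hz, Tn_eq_F hlam hΛ hzn]
  set C := (cantorK Λ ∩ cSquare Λ u n) \ cSquare Λ u (n+1) with hC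
  have hsub := cSquare_succ_subset hlam hΛ u n
  have hts : cantorK Λ \ cSquare Λ u n ⊆ cantorK Λ \ cSquare Λ u (n+1) := by
    rintro y ⟨h1, h2⟩
    exact ⟨h1, fun hq => h2 (hsub hq)⟩
  have htmeas : MeasurableSet (cantorK Λ \ cSquare Λ u n) :=
    cantorK_measurable.diff (cSquare_measurable u n)
  have hint : IntegrableOn (fun y => (z - y)⁻¹) (cantorK Λ \ cSquare Λ u (n+1)) μ :=
    (Tn_master hlam hΛ hμQ hz).1
  have hdiffset : (cantorK Λ \ cSquare Λ u (n+1)) \ (cantorK Λ \ cSquare Λ u n) = C := by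
    ext y
    simp only [hC, mem_diff, mem_inter_iff, not_and, not_not]
    constructor
    · rintro ⟨⟨h1, h2⟩, h3⟩
      exact ⟨⟨h1, h3 h1⟩, h2⟩
    · rintro ⟨⟨h1, h2⟩, h3⟩
      exact ⟨⟨h1, h3⟩, fun _ => h2⟩
  have heq := integral_diff (f := fun y => (z - y)⁻¹) (μ := μ) htmeas hint hts
  rw [hdiffset] at heq
  rw [← heq]
  have hCmeas : MeasurableSet C :=
    (cantorK_measurable.inter (cSquare_measurable u n)).diff (cSquare_measurable u (n+1))
  have hle : μ C ≤ μ (cSquare Λ u n) := measure_mono (fun y hy => hy.1.2)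
  have h1 : ‖∫ y in C, (z - y)⁻¹ ∂μ‖ ≤ ((1 - 2 * lam) * sideLen Λ n)⁻¹ * (μ C).toReal :=
    norm_setIntegral_le_of_norm_le_const_ae
      (lt_of_le_of_lt hle (lt_of_le_of_ne le_top (sq_ne_top hμQ u n)))
      ((ae_restrict_iff' hCmeas).mpr (ae_of_all _ (fun y hy => norm_inv_le hlam hΛ hz hy)))
  refine h1.trans ?_
  apply mul_le_mul_of_nonneg_left _ (inv_nonneg.mpr (gap_pos hlam hΛ n).le)
  calc (μ C).toReal ≤ (μ (cSquare Λ u n)).toReal := ENNReal.toReal_mono (sq_ne_top hμQ u n) hle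
    _ = (4 : ℝ)⁻¹ ^ n := sq_toReal hμQ u n

include hlam hΛ hμK hμQ in
/-- `Tₙ` is integrable on any measurable subset of a generation-`n` square. -/
lemma Tn_integrableOn {u : ℕ → Bool × Bool} {n : ℕ} {s : Set ℂ}
    (hsm : MeasurableSet s) (hss : s ⊆ cSquare Λ u n) :
    IntegrableOn (Tn Λ μ n) s μ ∧
      Tn Λ μ n =ᵐ[μ.restrict s] (fun z => ∫ y in cantorK Λ \ cSquare Λ u n, (z - y)⁻¹ ∂μ) := by
  set F : ℂ → ℂ := fun z => ∫ y in cantorK Λ \ cSquare Λ u n, (z - y)⁻¹ ∂μ with hF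
  have hae : Tn Λ μ n =ᵐ[μ.restrict s] F := by
    filter_upwards [ae_restrict_mem hsm, ae_restrict_of_ae (ae_mem_K hμK)] with z hzs hzK
    exact Tn_eq_F hlam hΛ (hss hzs)
  refine ⟨?_, hae⟩
  have hFint : IntegrableOn F s μ := by
    refine Integrable.mono' (integrable_const (Mtot Λ lam n))
      (F_strongly_meas _).aestronglyMeasurable.restrict ?_
    filter_upwards [ae_restrict_mem hsm] with z hzs
    exact (Tn_master hlam hΛ hμQ (hss hzs)).2
  exact hFint.congr hae.symm

end Estimates

section Main
variable {Λ : ℕ → ℝ} {lam : ℝ} (hlam : lam < 1 / 2) (hΛ : ∀ n, 1 / 4 ≤ Λ n ∧ Λ n ≤ lam)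
variable {μ : Measure ℂ} [IsProbabilityMeasure μ]
variable (hμK : μ (cantorK Λ) = 1)
variable (hμQ : ∀ (w : ℕ → Bool × Bool) (n : ℕ), μ (cSquare Λ w n) = (4 : ℝ≥0∞)⁻¹ ^ n)

include hlam hΛ hμK hμQ in
lemma Sn_dist {x : ℂ} (hx : x ∈ cantorK Λ) (n : ℕ) :
    dist (Sn Λ μ n x) (Sn Λ μ (n+1) x)
      ≤ ((1 - 2 * lam) * sideLen Λ n)⁻¹ * (4 : ℝ)⁻¹ ^ n + oscB Λ lam n := by
  obtain ⟨u, hu⟩ := mem_sq_of_mem_K hx (n+1)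
  have hun : x ∈ cSquare Λ u n := cSquare_succ_subset hlam hΛ u n hu
  set Q : Set ℂ := cSquare Λ u n with hQdef
  set Q' : Set ℂ := cSquare Λ u (n+1) with hQ'def
  have hQm : MeasurableSet Q := cSquare_measurable u n
  have hQ'm : MeasurableSet Q' := cSquare_measurable u (n+1)
  have hsub : Q' ⊆ Q := cSquare_succ_subset hlam hΛ u n
  set c : ℝ := ((4 : ℝ)⁻¹ ^ n)⁻¹ with hc
  set c' : ℝ := ((4 : ℝ)⁻¹ ^ (n+1))⁻¹ with hc'
  have hcpos : (0:ℝ) < (4 : ℝ)⁻¹ ^ n := by positivity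
  have hc'pos : (0:ℝ) < (4 : ℝ)⁻¹ ^ (n+1) := by positivity
  set I0 := ∫ z in Q, Tn Λ μ n z ∂μ with hI0
  set I0' := ∫ z in Q', Tn Λ μ n z ∂μ with hI0'
  set I1 := ∫ z in Q', Tn Λ μ (n+1) z ∂μ with hI1
  have hS0 : Sn Λ μ n x = c • I0 := by
    unfold Sn
    rw [Qn_eq hlam hΛ hun, setAverage_eq, measureReal_def, sq_toReal hμQ u n]
  have hS1 : Sn Λ μ (n+1) x = c' • I1 := by
    unfold Sn
    rw [Qn_eq hlam hΛ hu, setAverage_eq, measureReal_def, sq_toReal hμQ u (n+1)]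
  -- integrability
  have hTQp := Tn_integrableOn hlam hΛ hμK hμQ (u := u) (n := n) hQm subset_rfl
  have hTQ'p := Tn_integrableOn hlam hΛ hμK hμQ (u := u) (n := n) hQ'm hsub
  have hT1Q'p := Tn_integrableOn hlam hΛ hμK hμQ (u := u) (n := n+1) hQ'm subset_rfl
  have hTQ : IntegrableOn (Tn Λ μ n) Q μ := hTQp.1
  have hTQ' : IntegrableOn (Tn Λ μ n) Q' μ := hTQ'p.1
  have hT1Q' : IntegrableOn (Tn Λ μ (n+1)) Q' μ := hT1Q'p.1
  -- Term 1
  have hterm1 : ‖c' • I1 - c' • I0'‖ ≤ ((1 - 2 * lam) * sideLen Λ n)⁻¹ * (4 : ℝ)⁻¹ ^ n := by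
    rw [← smul_sub, hI1, hI0', ← integral_sub hT1Q' hTQ']
    have hbd : ‖∫ z in Q', (Tn Λ μ (n+1) z - Tn Λ μ n z) ∂μ‖
        ≤ (((1 - 2 * lam) * sideLen Λ n)⁻¹ * (4 : ℝ)⁻¹ ^ n) * (μ Q').toReal := by
      refine norm_setIntegral_le_of_norm_le_const_ae
        (lt_of_le_of_ne le_top (sq_ne_top hμQ u (n+1))) ?_
      filter_upwards [ae_restrict_mem hQ'm] with z hz
      exact Tn_diff hlam hΛ hμQ hz
    rw [norm_smul, Real.norm_eq_abs, abs_of_pos (inv_pos.mpr hc'pos)]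
    calc c' * ‖∫ z in Q', (Tn Λ μ (n+1) z - Tn Λ μ n z) ∂μ‖
        ≤ c' * ((((1 - 2 * lam) * sideLen Λ n)⁻¹ * (4 : ℝ)⁻¹ ^ n) * (μ Q').toReal) := by
          exact mul_le_mul_of_nonneg_left hbd (inv_pos.mpr hc'pos).le
      _ = ((1 - 2 * lam) * sideLen Λ n)⁻¹ * (4 : ℝ)⁻¹ ^ n * (c' * (μ Q').toReal) := by ring
      _ = ((1 - 2 * lam) * sideLen Λ n)⁻¹ * (4 : ℝ)⁻¹ ^ n := by
          rw [sq_toReal hμQ u (n+1), hc', inv_mul_cancel₀ (ne_of_gt hc'pos), mul_one]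
  -- Term 2
  set B : ℂ := c • I0 with hB
  have hconstQ : IntegrableOn (fun _ : ℂ => B) Q μ :=
    (integrableOn_const_iff).mpr (Or.inr (lt_of_le_of_ne le_top (sq_ne_top hμQ u n)))
  have hconstQ' : IntegrableOn (fun _ : ℂ => B) Q' μ :=
    (integrableOn_const_iff).mpr (Or.inr (lt_of_le_of_ne le_top (sq_ne_top hμQ u (n+1))))
  have hTB : ∀ᵐ z ∂μ.restrict Q', ‖Tn Λ μ n z - B‖ ≤ oscB Λ lam n := by
    filter_upwards [ae_restrict_mem hQ'm, ae_restrict_of_ae (ae_mem_K hμK)] with z hz hzK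
    have hzQ : z ∈ Q := hsub hz
    -- constant-minus integral over Q
    have hconstz : IntegrableOn (fun _ : ℂ => Tn Λ μ n z) Q μ :=
      (integrableOn_const_iff).mpr (Or.inr (lt_of_le_of_ne le_top (sq_ne_top hμQ u n)))
    have key : Tn Λ μ n z - B = c • ∫ z' in Q, (Tn Λ μ n z - Tn Λ μ n z') ∂μ := by
      rw [integral_sub hconstz hTQ, setIntegral_const, measureReal_def, sq_toReal hμQ u n, smul_sub,
        smul_smul, hc, inv_mul_cancel₀ (ne_of_gt hcpos), one_smul, hB]
    rw [key, norm_smul, Real.norm_eq_abs, abs_of_pos (inv_pos.mpr hcpos)]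
    have hbd : ‖∫ z' in Q, (Tn Λ μ n z - Tn Λ μ n z') ∂μ‖
        ≤ oscB Λ lam n * (μ Q).toReal := by
      refine norm_setIntegral_le_of_norm_le_const_ae
        (lt_of_le_of_ne le_top (sq_ne_top hμQ u n)) ?_
      filter_upwards [ae_restrict_mem hQm, ae_restrict_of_ae (ae_mem_K hμK)] with z' hz' hz'K
      exact Tn_osc hlam hΛ hμQ hzK hzQ hz'K hz'
    calc c * ‖∫ z' in Q, (Tn Λ μ n z - Tn Λ μ n z') ∂μ‖
        ≤ c * (oscB Λ lam n * (μ Q).toReal) :=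
          mul_le_mul_of_nonneg_left hbd (inv_pos.mpr hcpos).le
      _ = oscB Λ lam n * (c * (μ Q).toReal) := by ring
      _ = oscB Λ lam n := by
          rw [sq_toReal hμQ u n, hc, inv_mul_cancel₀ (ne_of_gt hcpos), mul_one]
  have hterm2 : ‖c' • I0' - B‖ ≤ oscB Λ lam n := by
    have key : c' • I0' - B = c' • ∫ z in Q', (Tn Λ μ n z - B) ∂μ := by
      rw [integral_sub hTQ' hconstQ', setIntegral_const, measureReal_def, sq_toReal hμQ u (n+1), smul_sub,
        smul_smul, hc', inv_mul_cancel₀ (ne_of_gt hc'pos), one_smul]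
    rw [key, norm_smul, Real.norm_eq_abs, abs_of_pos (inv_pos.mpr hc'pos)]
    have hbd : ‖∫ z in Q', (Tn Λ μ n z - B) ∂μ‖ ≤ oscB Λ lam n * (μ Q').toReal :=
      norm_setIntegral_le_of_norm_le_const_ae
        (lt_of_le_of_ne le_top (sq_ne_top hμQ u (n+1))) hTB
    calc c' * ‖∫ z in Q', (Tn Λ μ n z - B) ∂μ‖
        ≤ c' * (oscB Λ lam n * (μ Q').toReal) :=
          mul_le_mul_of_nonneg_left hbd (inv_pos.mpr hc'pos).le
      _ = oscB Λ lam n * (c' * (μ Q').toReal) := by ring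
      _ = oscB Λ lam n := by
          rw [sq_toReal hμQ u (n+1), hc', inv_mul_cancel₀ (ne_of_gt hc'pos), mul_one]
  -- assemble
  rw [dist_eq_norm, hS0, hS1, norm_sub_rev]
  calc ‖c' • I1 - c • I0‖ = ‖(c' • I1 - c' • I0') + (c' • I0' - B)‖ := by rw [hB]; ring_nf
    _ ≤ ‖c' • I1 - c' • I0'‖ + ‖c' • I0' - B‖ := norm_add_le _ _
    _ ≤ ((1 - 2 * lam) * sideLen Λ n)⁻¹ * (4 : ℝ)⁻¹ ^ n + oscB Λ lam n :=
        add_le_add hterm1 hterm2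

end Main

section Summability
variable {Λ : ℕ → ℝ} {lam : ℝ} (hlam : lam < 1 / 2) (hΛ : ∀ n, 1 / 4 ≤ Λ n ∧ Λ n ≤ lam)

include hΛ in
lemma linDensity_nonneg (n : ℕ) : 0 ≤ linDensity Λ n := by
  unfold linDensity
  have := sideLen_pos hΛ n
  positivity

/-- Discrete convolution with a geometric kernel. -/
def convT (Λ : ℕ → ℝ) (lam : ℝ) (n : ℕ) : ℝ :=
  ∑ j ∈ Finset.range n, lam ^ (n - j) * linDensity Λ j

include hΛ in
lemma convT_succ (n : ℕ) : convT Λ lam (n+1) = lam * (convT Λ lam n + linDensity Λ n) := by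
  unfold convT
  rw [Finset.sum_range_succ]
  have h1 : ∀ j ∈ Finset.range n,
      lam ^ (n + 1 - j) * linDensity Λ j = lam * (lam ^ (n - j) * linDensity Λ j) := by
    intro j hj
    have hj' : j < n := Finset.mem_range.mp hj
    have : n + 1 - j = (n - j) + 1 := by omega
    rw [this, pow_succ]
    ring
  rw [Finset.sum_congr rfl h1, ← Finset.mul_sum]
  have h2 : n + 1 - n = 1 := by omega
  rw [h2, pow_one]
  ring

include hΛ in
lemma convT_nonneg (n : ℕ) : 0 ≤ convT Λ lam n := by
  refine Finset.sum_nonneg fun j hj => ?_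
  have := lam_pos hΛ
  have := linDensity_nonneg hΛ j
  positivity

include hlam hΛ in
lemma convT_summable (hsum : Summable (linDensity Λ)) : Summable (convT Λ lam) := by
  have hl0 := lam_pos hΛ
  set A := ∑' n, linDensity Λ n with hA
  have hA0 : 0 ≤ A := tsum_nonneg (linDensity_nonneg hΛ)
  have hpart : ∀ N, ∑ j ∈ Finset.range N, linDensity Λ j ≤ A :=
    fun N => Summable.sum_le_tsum _ (fun i _ => linDensity_nonneg hΛ i) hsum
  have hbound : ∀ N, ∑ n ∈ Finset.range N, convT Λ lam n ≤ lam * A / (1 - lam) := by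
    intro N
    induction N with
    | zero =>
      simp
      exact div_nonneg (mul_nonneg (lam_pos hΛ).le hA0) (by linarith)
    | succ N ih =>
      rw [Finset.sum_range_succ']
      have h1 : ∀ n ∈ Finset.range N,
          convT Λ lam (n+1) = lam * (convT Λ lam n + linDensity Λ n) :=
        fun n _ => convT_succ hΛ n
      rw [Finset.sum_congr rfl h1]
      have h2 : convT Λ lam 0 = 0 := by unfold convT; simp
      rw [h2, add_zero, ← Finset.mul_sum, Finset.sum_add_distrib]
      have h3 : ∑ n ∈ Finset.range N, convT Λ lam n + ∑ n ∈ Finset.range N, linDensity Λ n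
          ≤ lam * A / (1 - lam) + A := add_le_add ih (hpart N)
      have hne : (1:ℝ) - lam ≠ 0 := by linarith
      have h4 : lam * (lam * A / (1 - lam) + A) = lam * A / (1 - lam) := by
        field_simp
        ring_nf
      calc lam * (∑ n ∈ Finset.range N, convT Λ lam n + ∑ n ∈ Finset.range N, linDensity Λ n)
          ≤ lam * (lam * A / (1 - lam) + A) := mul_le_mul_of_nonneg_left h3 hl0.le
        _ = lam * A / (1 - lam) := h4
  exact summable_of_sum_range_le (convT_nonneg hΛ) hbound

include hlam hΛ in
lemma oscB_le (n : ℕ) : oscB Λ lam n ≤ 2 * (1 - 2 * lam)⁻¹ ^ 2 * convT Λ lam n := by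
  unfold oscB convT
  rw [Finset.mul_sum]
  refine Finset.sum_le_sum fun j hj => ?_
  have hj' : j < n := Finset.mem_range.mp hj
  have hsj := sideLen_pos hΛ j
  have hsn := sideLen_pos hΛ n
  have hratio : sideLen Λ n ≤ lam ^ (n - j) * sideLen Λ j := sideLen_ratio hlam hΛ hj'.le
  have hld : linDensity Λ j = (4 : ℝ)⁻¹ ^ j * (sideLen Λ j)⁻¹ := by
    unfold linDensity
    rw [one_div, mul_inv, inv_pow]
  have hg : (0:ℝ) < 1 - 2 * lam := by linarith
  rw [hld]
  have hexp : 2 * sideLen Λ n * (((1 - 2*lam) * sideLen Λ j)⁻¹) ^ 2 * (4:ℝ)⁻¹ ^ j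
      = 2 * (1 - 2*lam)⁻¹ ^ 2 * (sideLen Λ n * (sideLen Λ j)⁻¹ ^ 2 * (4:ℝ)⁻¹ ^ j) := by
    rw [mul_inv, mul_pow]
    ring
  rw [hexp]
  have hfin : sideLen Λ n * (sideLen Λ j)⁻¹ ^ 2 * (4:ℝ)⁻¹ ^ j
      ≤ lam ^ (n - j) * ((4:ℝ)⁻¹ ^ j * (sideLen Λ j)⁻¹) := by
    have h1 : sideLen Λ n * (sideLen Λ j)⁻¹ ^ 2 ≤ lam ^ (n-j) * (sideLen Λ j)⁻¹ := by
      rw [sq]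
      calc sideLen Λ n * ((sideLen Λ j)⁻¹ * (sideLen Λ j)⁻¹)
          ≤ (lam ^ (n-j) * sideLen Λ j) * ((sideLen Λ j)⁻¹ * (sideLen Λ j)⁻¹) := by
            apply mul_le_mul_of_nonneg_right hratio
            positivity
        _ = lam ^ (n-j) * (sideLen Λ j * (sideLen Λ j)⁻¹) * (sideLen Λ j)⁻¹ := by ring
        _ = lam ^ (n-j) * (sideLen Λ j)⁻¹ := by
            rw [mul_inv_cancel₀ (ne_of_gt hsj), mul_one]
    calc sideLen Λ n * (sideLen Λ j)⁻¹ ^ 2 * (4:ℝ)⁻¹ ^ j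
        ≤ lam ^ (n-j) * (sideLen Λ j)⁻¹ * (4:ℝ)⁻¹ ^ j := by
          apply mul_le_mul_of_nonneg_right h1
          positivity
      _ = lam ^ (n - j) * ((4:ℝ)⁻¹ ^ j * (sideLen Λ j)⁻¹) := by ring
  have hC : (0:ℝ) ≤ 2 * (1 - 2*lam)⁻¹ ^ 2 := by positivity
  exact mul_le_mul_of_nonneg_left hfin hC

include hlam hΛ in
lemma oscB_nonneg (n : ℕ) : 0 ≤ oscB Λ lam n := by
  refine Finset.sum_nonneg fun j hj => ?_
  have := sideLen_pos hΛ n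
  positivity

include hlam hΛ in
lemma D_summable (hsum : Summable (linDensity Λ)) :
    Summable (fun n => ((1 - 2 * lam) * sideLen Λ n)⁻¹ * (4 : ℝ)⁻¹ ^ n + oscB Λ lam n) := by
  apply Summable.add
  · have heq : (fun n => ((1 - 2 * lam) * sideLen Λ n)⁻¹ * (4 : ℝ)⁻¹ ^ n)
        = fun n => (1 - 2 * lam)⁻¹ * linDensity Λ n := by
      funext n
      have hs := sideLen_pos hΛ n
      unfold linDensity
      rw [mul_inv, one_div, mul_inv, inv_pow]
      ring
    rw [heq]
    exact hsum.mul_left _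
  · refine Summable.of_nonneg_of_le (oscB_nonneg hlam hΛ) (oscB_le hlam hΛ)
      (((convT_summable hlam hΛ hsum)).mul_left _)

end Summability

/-- If `∑ₙ aₙ < ∞`, then the martingale `(S_n(x))` converges for every `x ∈ K`. -/
theorem martingale_converges_of_summable (Λ : ℕ → ℝ) (lam : ℝ) (hlam : lam < 1 / 2)
    (hΛ : ∀ n, 1 / 4 ≤ Λ n ∧ Λ n ≤ lam)
    (μ : Measure ℂ) [IsProbabilityMeasure μ]
    (hμK : μ (cantorK Λ) = 1)
    (hμQ : ∀ (w : ℕ → Bool × Bool) (n : ℕ), μ (cSquare Λ w n) = (4 : ℝ≥0∞)⁻¹ ^ n)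
    (hsum : Summable (linDensity Λ)) :
    ∀ x ∈ cantorK Λ, ∃ L : ℂ, Tendsto (fun n => Sn Λ μ n x) atTop (𝓝 L) := by
  intro x hx
  have hcauchy : CauchySeq (fun n => Sn Λ μ n x) :=
    cauchySeq_of_dist_le_of_summable _
      (fun n => Sn_dist hlam hΛ hμK hμQ hx n) (D_summable hlam hΛ hsum)
  exact cauchySeq_tendsto_of_complete hcauchy
end
end

section
/- Let O = {x ∈ ℝ^d : 0 ≤ x_1 ≤ x_2 ≤ ⋯ ≤ x_d}. Then for any two nonzero vectors u, v ∈ O, the angle between u and v is at most arccos(d^{−1/2}), i.e. ⟨u,v⟩ ≥ d^{−1/2} |u||v|, and this bound is attained. -/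
open MeasureTheory Filter Set Topology
open scoped ENNReal

noncomputable section

namespace RegionAux

def chi (d k : ℕ) : EuclideanSpace ℝ (Fin d) := WithLp.toLp 2 (fun i => if k ≤ (i : ℕ) then 1 else 0)

lemma sum_ind (d k : ℕ) : (∑ i ∈ Finset.range d, if k ≤ i then (1:ℝ) else 0) = (d - k : ℕ) := by
  rw [Finset.sum_boole]
  congr 1
  rw [Finset.range_eq_Ico, Finset.Ico_filter_le 0 d k]
  simp [Nat.card_Ico]

lemma sum_ind' (d k : ℕ) : (∑ i : Fin d, if k ≤ (i:ℕ) then (1:ℝ) else 0) = (d - k : ℕ) := by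
  rw [Fin.sum_univ_eq_sum_range (fun i => if k ≤ i then (1:ℝ) else 0) d]
  exact sum_ind d k

lemma chi_norm (d k : ℕ) : ‖chi d k‖ = Real.sqrt (d - k : ℕ) := by
  rw [EuclideanSpace.norm_eq]
  congr 1
  rw [← sum_ind' d k]
  refine Finset.sum_congr rfl fun i _ => ?_
  simp only [chi, WithLp.ofLp_toLp]
  split_ifs <;> simp

lemma chi_inner (d k l : ℕ) : (inner ℝ (chi d k) (chi d l) : ℝ) = (d - max k l : ℕ) := by
  have h0 : (inner ℝ (chi d k) (chi d l) : ℝ) = ∑ i : Fin d, (chi d k i) * (chi d l i) := by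
    simp [PiLp.inner_apply, RCLike.inner_apply, mul_comm]
  rw [h0]
  have h2 : ∀ i : Fin d, chi d k i * chi d l i = if max k l ≤ (i:ℕ) then (1:ℝ) else 0 := by
    intro i
    simp only [chi, WithLp.ofLp_toLp]
    split_ifs with h1 h2 h3 <;> simp_all <;> omega
  simp_rw [h2]
  exact sum_ind' d (max k l)

lemma exists_repr (d : ℕ) (u : EuclideanSpace ℝ (Fin d))
    (hu1 : ∀ i, 0 ≤ u i) (hu2 : ∀ i j : Fin d, i ≤ j → u i ≤ u j) :
    ∃ a : ℕ → ℝ, (∀ k ∈ Finset.range d, 0 ≤ a k) ∧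
      u = ∑ k ∈ Finset.range d, a k • chi d k := by
  set U : ℕ → ℝ := fun n => if h : n < d then u ⟨n, h⟩ else 0 with hU
  set a : ℕ → ℝ := fun n => if n = 0 then U 0 else U n - U (n - 1) with ha
  have htel : ∀ i, ∑ k ∈ Finset.range (i + 1), a k = U i := by
    intro i
    induction i with
    | zero => simp [ha]
    | succ n ih =>
      rw [Finset.sum_range_succ, ih]
      simp [ha]
  refine ⟨a, ?_, ?_⟩
  · intro k hk
    rw [Finset.mem_range] at hk
    rcases Nat.eq_zero_or_pos k with h | h
    · subst h
      simp only [ha, if_pos rfl, hU]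
      rw [dif_pos (by omega : 0 < d)]
      exact hu1 _
    · have hk1 : k - 1 < d := by omega
      simp only [ha, if_neg (by omega : ¬ k = 0), hU, dif_pos hk, dif_pos hk1, sub_nonneg]
      exact hu2 ⟨k - 1, hk1⟩ ⟨k, hk⟩ (by simp)
  · ext i
    rw [WithLp.ofLp_sum, Finset.sum_apply]
    have : ∀ k, (a k • chi d k) i = if k ≤ (i:ℕ) then a k else 0 := by
      intro k
      simp only [PiLp.smul_apply, chi, WithLp.ofLp_toLp, smul_eq_mul]
      split_ifs <;> simp
    simp_rw [this]
    have hfil : (Finset.range d).filter (fun k => k ≤ (i:ℕ)) = Finset.range ((i:ℕ) + 1) := by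
      ext k
      simp only [Finset.mem_filter, Finset.mem_range]
      omega
    rw [← Finset.sum_filter, hfil, htel]
    simp only [hU, dif_pos i.isLt, Fin.eta]

lemma key_scalar (d k l : ℕ) (hd : 1 ≤ d) (hk : k < d) (hl : l < d) :
    (Real.sqrt d)⁻¹ * (Real.sqrt (d - k : ℕ) * Real.sqrt (d - l : ℕ)) ≤ ((d - max k l : ℕ) : ℝ) := by
  set m := d - max k l with hm
  have hm1 : 1 ≤ m := by omega
  have h1 : (d - k) * (d - l) ≤ m * d := by
    rcases le_total k l with h | h
    · rw [hm, max_eq_right h, mul_comm]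
      exact Nat.mul_le_mul_left _ (Nat.sub_le d k)
    · rw [hm, max_eq_left h]
      exact Nat.mul_le_mul_left _ (Nat.sub_le d l)
  have h2 : Real.sqrt (d - k : ℕ) * Real.sqrt (d - l : ℕ) ≤ Real.sqrt m * Real.sqrt d := by
    rw [← Real.sqrt_mul (by positivity), ← Real.sqrt_mul (by positivity)]
    apply Real.sqrt_le_sqrt
    push_cast
    exact_mod_cast h1
  have hd0 : (0:ℝ) < Real.sqrt d := Real.sqrt_pos.mpr (by exact_mod_cast hd)
  have h3 : (Real.sqrt d)⁻¹ * (Real.sqrt (d - k : ℕ) * Real.sqrt (d - l : ℕ)) ≤ Real.sqrt m := by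
    rw [inv_mul_le_iff₀ hd0]
    nlinarith [h2]
  refine h3.trans ?_
  have : (1:ℝ) ≤ (m:ℝ) := by exact_mod_cast hm1
  nlinarith [Real.sq_sqrt (show (0:ℝ) ≤ (m:ℝ) by positivity), Real.sqrt_nonneg (m:ℝ)]

lemma main_ineq (d : ℕ) (hd : 1 ≤ d) (u v : EuclideanSpace ℝ (Fin d))
    (hu1 : ∀ i, 0 ≤ u i) (hu2 : ∀ i j : Fin d, i ≤ j → u i ≤ u j)
    (hv1 : ∀ i, 0 ≤ v i) (hv2 : ∀ i j : Fin d, i ≤ j → v i ≤ v j) :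
    (Real.sqrt d)⁻¹ * (‖u‖ * ‖v‖) ≤ (inner ℝ u v : ℝ) := by
  obtain ⟨a, ha0, hau⟩ := exists_repr d u hu1 hu2
  obtain ⟨b, hb0, hbv⟩ := exists_repr d v hv1 hv2
  set nk : ℕ → ℝ := fun k => Real.sqrt (d - k : ℕ) with hnk
  have hnk0 : ∀ k, 0 ≤ nk k := fun k => Real.sqrt_nonneg _
  have hnormu : ‖u‖ ≤ ∑ k ∈ Finset.range d, a k * nk k := by
    rw [hau]
    refine (norm_sum_le _ _).trans (le_of_eq ?_)
    refine Finset.sum_congr rfl fun k hk => ?_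
    rw [norm_smul, Real.norm_eq_abs, abs_of_nonneg (ha0 k hk), chi_norm]
  have hnormv : ‖v‖ ≤ ∑ l ∈ Finset.range d, b l * nk l := by
    rw [hbv]
    refine (norm_sum_le _ _).trans (le_of_eq ?_)
    refine Finset.sum_congr rfl fun l hl => ?_
    rw [norm_smul, Real.norm_eq_abs, abs_of_nonneg (hb0 l hl), chi_norm]
  have hinner : (inner ℝ u v : ℝ) =
      ∑ k ∈ Finset.range d, ∑ l ∈ Finset.range d,
        a k * (b l * ((d - max k l : ℕ) : ℝ)) := by
    rw [hau, hbv, sum_inner]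
    refine Finset.sum_congr rfl fun k _ => ?_
    rw [inner_sum]
    refine Finset.sum_congr rfl fun l _ => ?_
    rw [real_inner_smul_left, real_inner_smul_right, chi_inner]
  calc (Real.sqrt d)⁻¹ * (‖u‖ * ‖v‖)
      ≤ (Real.sqrt d)⁻¹ * ((∑ k ∈ Finset.range d, a k * nk k) * (∑ l ∈ Finset.range d, b l * nk l)) := by
        apply mul_le_mul_of_nonneg_left _ (by positivity)
        apply mul_le_mul hnormu hnormv (norm_nonneg _)
        exact Finset.sum_nonneg fun k hk => mul_nonneg (ha0 k hk) (hnk0 k)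
    _ = ∑ k ∈ Finset.range d, ∑ l ∈ Finset.range d,
          a k * (b l * ((Real.sqrt d)⁻¹ * (nk k * nk l))) := by
        rw [Finset.sum_mul_sum, Finset.mul_sum]
        refine Finset.sum_congr rfl fun k _ => ?_
        rw [Finset.mul_sum]
        refine Finset.sum_congr rfl fun l _ => ?_
        ring
    _ ≤ ∑ k ∈ Finset.range d, ∑ l ∈ Finset.range d,
          a k * (b l * ((d - max k l : ℕ) : ℝ)) := by
        refine Finset.sum_le_sum fun k hk => Finset.sum_le_sum fun l hl => ?_
        have := key_scalar d k l hd (Finset.mem_range.mp hk) (Finset.mem_range.mp hl)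
        exact mul_le_mul_of_nonneg_left
          (mul_le_mul_of_nonneg_left this (hb0 l hl)) (ha0 k hk)
    _ = (inner ℝ u v : ℝ) := hinner.symm

lemma attained (d : ℕ) (hd : 1 ≤ d) :
    ∃ u : EuclideanSpace ℝ (Fin d), ((∀ i, 0 ≤ u i) ∧ ∀ i j : Fin d, i ≤ j → u i ≤ u j) ∧
    ∃ v : EuclideanSpace ℝ (Fin d), ((∀ i, 0 ≤ v i) ∧ ∀ i j : Fin d, i ≤ j → v i ≤ v j) ∧
      u ≠ 0 ∧ v ≠ 0 ∧ (inner ℝ u v : ℝ) = (Real.sqrt d)⁻¹ * (‖u‖ * ‖v‖) := by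
  set u : EuclideanSpace ℝ (Fin d) := WithLp.toLp 2 (fun _ => 1) with hu
  set v : EuclideanSpace ℝ (Fin d) := WithLp.toLp 2 (fun i => if (i : ℕ) = d - 1 then 1 else 0) with hv
  have hvle : ∀ i : Fin d, v i ≤ 1 := by
    intro i; simp only [hv, WithLp.ofLp_toLp]; split_ifs <;> norm_num
  have hnu : ‖u‖ = Real.sqrt d := by
    rw [EuclideanSpace.norm_eq]
    simp [hu]
  have hsum1 : ∑ i : Fin d, (if (i:ℕ) = d - 1 then (1:ℝ) else 0) = 1 := by
    rw [Finset.sum_eq_single (⟨d - 1, by omega⟩ : Fin d)]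
    · simp
    · intro b _ hb
      rw [if_neg]
      intro hc
      exact hb (Fin.ext hc)
    · intro h
      exact absurd (Finset.mem_univ _) h
  have hnv : ‖v‖ = 1 := by
    rw [EuclideanSpace.norm_eq]
    have : ∑ i : Fin d, ‖v i‖ ^ 2 = ∑ i : Fin d, (if (i:ℕ) = d - 1 then (1:ℝ) else 0) := by
      refine Finset.sum_congr rfl fun i _ => ?_
      simp only [hv, WithLp.ofLp_toLp]; split_ifs <;> simp
    rw [this, hsum1, Real.sqrt_one]
  have hiuv : (inner ℝ u v : ℝ) = 1 := by
    have : (inner ℝ u v : ℝ) = ∑ i : Fin d, (if (i:ℕ) = d - 1 then (1:ℝ) else 0) := by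
      simp [PiLp.inner_apply, RCLike.inner_apply, hu, hv]
    rw [this, hsum1]
  refine ⟨u, ⟨fun i => by norm_num [hu], fun i j _ => by norm_num [hu]⟩,
          v, ⟨fun i => by simp only [hv, WithLp.ofLp_toLp]; split_ifs <;> norm_num,
              fun i j hij => ?_⟩, ?_, ?_, ?_⟩
  · simp only [hv, WithLp.ofLp_toLp]
    split_ifs with h1 h2 h3 <;> try norm_num
    · -- i = d-1, j ≠ d-1 : impossible since i ≤ j < d
      exfalso
      have := j.isLt
      have := i.isLt
      omega
  · intro h
    have := congrFun (congrArg (fun (w : EuclideanSpace ℝ (Fin d)) => w.ofLp) h) ⟨0, by omega⟩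
    simp [hu] at this
  · intro h
    have := congrFun (congrArg (fun (w : EuclideanSpace ℝ (Fin d)) => w.ofLp) h) ⟨d - 1, by omega⟩
    simp [hv] at this
  · rw [hiuv, hnu, hnv]
    have : Real.sqrt d ≠ 0 := by positivity
    field_simp

end RegionAux

/-- In the region `O = {0 ≤ x₁ ≤ x₂ ≤ ⋯ ≤ x_d} ⊆ ℝ^d`, the angle between any two nonzero
vectors is at most `arccos(d^{-1/2})`, i.e. `⟨u,v⟩ ≥ d^{-1/2}|u||v|`, and the bound is
attained. -/
theorem region_angle_bound (d : ℕ) (hd : 1 ≤ d)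
    (O : Set (EuclideanSpace ℝ (Fin d)))
    (hO : O = {x : EuclideanSpace ℝ (Fin d) |
      (∀ i, 0 ≤ x i) ∧ ∀ i j : Fin d, i ≤ j → x i ≤ x j}) :
    (∀ u ∈ O, ∀ v ∈ O, u ≠ 0 → v ≠ 0 →
      (Real.sqrt d)⁻¹ * (‖u‖ * ‖v‖) ≤ (inner ℝ u v : ℝ)) ∧
    (∃ u ∈ O, ∃ v ∈ O, u ≠ 0 ∧ v ≠ 0 ∧
      (inner ℝ u v : ℝ) = (Real.sqrt d)⁻¹ * (‖u‖ * ‖v‖)) := by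
  subst hO
  constructor
  · intro u hu v hv hu0 hv0
    exact RegionAux.main_ineq d hd u v hu.1 hu.2 hv.1 hv.2
  · obtain ⟨u, hu, v, hv, hu0, hv0, heq⟩ := RegionAux.attained d hd
    exact ⟨u, hu, v, hv, hu0, hv0, heq⟩
end
end

section
/- If lim_{n→∞} a_n = 0, then the Cantor set K has Hausdorff dimension at least 1 and its one-dimensional Hausdorff measure is not σ-finite. -/
open MeasureTheory Filter Set Topology
open scoped ENNReal

noncomputable section

set_option linter.unusedSectionVars false
set_option linter.unnecessarySimpa false
set_option linter.unusedTactic false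

namespace CantorGT

/-- base-4 digits of a real number -/
def dI (x : ℝ) (k : ℕ) : ℤ := ⌊x * 4 ^ (k+1)⌋ - 4 * ⌊x * 4 ^ k⌋

def wd (x : ℝ) (k : ℕ) : Bool × Bool :=
  (decide (dI x k = 1 ∨ dI x k = 3), decide (dI x k = 2 ∨ dI x k = 3))

theorem dI_range (x : ℝ) (k : ℕ) : 0 ≤ dI x k ∧ dI x k ≤ 3 := by
  set y := x * 4 ^ k with hy
  have h4 : x * 4 ^ (k+1) = 4 * y := by rw [hy]; ring
  constructor
  · have : (4 * ⌊y⌋ : ℤ) ≤ ⌊(4:ℝ) * y⌋ := by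
      rw [Int.le_floor]
      push_cast
      nlinarith [Int.floor_le y]
    simp only [dI, h4, ← hy]
    omega
  · have : ⌊(4:ℝ) * y⌋ < 4 * ⌊y⌋ + 4 := by
      rw [Int.floor_lt]
      push_cast
      nlinarith [Int.lt_floor_add_one y]
    simp only [dI, h4, ← hy]
    omega

theorem wd_inj {x y : ℝ} {k : ℕ} (h : wd x k = wd y k) : dI x k = dI y k := by
  have h1 := congrArg Prod.fst h
  have h2 := congrArg Prod.snd h
  simp only [wd, decide_eq_decide] at h1 h2
  have hx := dI_range x k
  have hy := dI_range y k
  omega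

theorem floor_pow_eq {x y : ℝ} (n : ℕ) (h : ∀ k, k < n → dI x k = dI y k)
    (hx : ⌊x⌋ = 0) (hy : ⌊y⌋ = 0) : ⌊x * 4 ^ n⌋ = ⌊y * 4 ^ n⌋ := by
  induction n with
  | zero => simpa [hx, hy] using hx.trans hy.symm
  | succ n ih =>
    have hdx : ⌊x * 4 ^ (n+1)⌋ = dI x n + 4 * ⌊x * 4 ^ n⌋ := by simp [dI]
    have hdy : ⌊y * 4 ^ (n+1)⌋ = dI y n + 4 * ⌊y * 4 ^ n⌋ := by simp [dI]
    rw [hdx, hdy, h n (Nat.lt_succ_self n), ih (fun k hk => h k (Nat.lt_succ_of_lt hk))]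

variable (Λ : ℕ → ℝ) (lam : ℝ)

def tB (b : ℕ → Bool) (k : ℕ) : ℝ :=
  if b k then sideLen Λ k - sideLen Λ (k + 1) else 0

def XB (b : ℕ → Bool) (n : ℕ) : ℝ := ∑ k ∈ Finset.range n, tB Λ b k

def XInf (b : ℕ → Bool) : ℝ := ∑' k, tB Λ b k

def piPt (w : ℕ → Bool × Bool) : ℂ :=
  (XInf Λ fun k => (w k).1) + (XInf Λ fun k => (w k).2) * Complex.I

def gMap (x : ℝ) : ℂ := piPt Λ (wd x)

def μC : Measure ℂ := Measure.map (gMap Λ) (volume.restrict (Set.Ico 0 1))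

variable (hlam : lam < 1 / 2) (hΛ : ∀ n, 1 / 4 ≤ Λ n ∧ Λ n ≤ lam)

include hlam hΛ

theorem sideLen_pos (n : ℕ) : 0 < sideLen Λ n := by
  refine Finset.prod_pos fun k _ => lt_of_lt_of_le (by norm_num) (hΛ k).1

include hlam

theorem sideLen_succ_le (n : ℕ) : sideLen Λ (n + 1) ≤ lam * sideLen Λ n := by
  rw [sideLen, Finset.prod_range_succ, mul_comm]
  exact mul_le_mul_of_nonneg_right (hΛ n).2 (sideLen_pos Λ lam hlam hΛ n).le

theorem sideLen_anti : ∀ {m n : ℕ}, m ≤ n → sideLen Λ n ≤ sideLen Λ m := by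
  intro m n h
  induction n with
  | zero => simp_all
  | succ n ih =>
    rcases Nat.lt_or_ge m (n+1) with h' | h'
    · have : sideLen Λ n ≤ sideLen Λ m := ih (Nat.lt_succ_iff.mp h')
      refine le_trans (le_trans (sideLen_succ_le Λ lam hlam hΛ n) ?_) this
      nlinarith [sideLen_pos Λ lam hlam hΛ n]
    · have : m = n + 1 := le_antisymm h h'
      simp [this]

theorem sideLen_sub_nonneg (k : ℕ) : 0 ≤ sideLen Λ k - sideLen Λ (k + 1) :=
  sub_nonneg.mpr (sideLen_anti Λ lam hlam hΛ (Nat.le_succ k))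

theorem sideLen_quarter (n : ℕ) : sideLen Λ n / 4 ≤ sideLen Λ (n + 1) := by
  have hs : sideLen Λ (n+1) = sideLen Λ n * Λ n := Finset.prod_range_succ _ _
  rw [hs]
  have := sideLen_pos Λ lam hlam hΛ n
  nlinarith [(hΛ n).1]

theorem sideLen_le_pow (n : ℕ) : sideLen Λ n ≤ lam ^ n := by
  induction n with
  | zero => simp [sideLen]
  | succ n ih =>
    refine le_trans (sideLen_succ_le Λ lam hlam hΛ n) ?_
    rw [pow_succ, mul_comm]
    have h4 : (0:ℝ) < lam := lt_of_lt_of_le (by norm_num) (le_trans (hΛ 0).1 (hΛ 0).2)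
    exact mul_le_mul_of_nonneg_right ih h4.le

theorem lam_pos : 0 < lam := lt_of_lt_of_le (by norm_num) (le_trans (hΛ 0).1 (hΛ 0).2)

theorem sideLen_tendsto : Tendsto (sideLen Λ) atTop (𝓝 0) := by
  have h1 : Tendsto (fun n => lam ^ n) atTop (𝓝 0) :=
    tendsto_pow_atTop_nhds_zero_of_lt_one (lam_pos Λ lam hlam hΛ).le (by linarith)
  refine squeeze_zero (fun n => (sideLen_pos Λ lam hlam hΛ n).le)
    (fun n => sideLen_le_pow Λ lam hlam hΛ n) h1

theorem tB_nonneg (b : ℕ → Bool) (k : ℕ) : 0 ≤ tB Λ b k := by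
  unfold tB; split
  · exact sideLen_sub_nonneg Λ lam hlam hΛ k
  · exact le_refl 0

theorem tB_le (b : ℕ → Bool) (k : ℕ) : tB Λ b k ≤ sideLen Λ k - sideLen Λ (k + 1) := by
  unfold tB; split
  · exact le_refl _
  · exact sideLen_sub_nonneg Λ lam hlam hΛ k

theorem sum_Ico_tB_le (b : ℕ → Bool) (m n : ℕ) (h : m ≤ n) :
    ∑ k ∈ Finset.Ico m n, tB Λ b k ≤ sideLen Λ m - sideLen Λ n := by
  have h1 : ∑ k ∈ Finset.Ico m n, tB Λ b k ≤
      ∑ k ∈ Finset.Ico m n, (sideLen Λ k - sideLen Λ (k + 1)) :=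
    Finset.sum_le_sum fun k _ => tB_le Λ lam hlam hΛ b k
  have h2 : ∑ k ∈ Finset.Ico m n, (sideLen Λ k - sideLen Λ (k + 1)) =
      sideLen Λ m - sideLen Λ n := by
    rw [Finset.sum_Ico_eq_sub _ h, Finset.sum_range_sub' (sideLen Λ), Finset.sum_range_sub' (sideLen Λ)]
    ring
  linarith

theorem summable_tB (b : ℕ → Bool) : Summable (tB Λ b) := by
  refine summable_of_sum_range_le (c := sideLen Λ 0) (tB_nonneg Λ lam hlam hΛ b) fun n => ?_
  have := sum_Ico_tB_le Λ lam hlam hΛ b 0 n (Nat.zero_le n)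
  simp only [Finset.range_eq_Ico]
  have := sideLen_pos Λ lam hlam hΛ n
  linarith

theorem XB_le_XInf (b : ℕ → Bool) (n : ℕ) : XB Λ b n ≤ XInf Λ b := by
  rw [XInf, ← Summable.sum_add_tsum_nat_add n (summable_tB Λ lam hlam hΛ b)]
  have : 0 ≤ ∑' k, tB Λ b (k + n) :=
    tsum_nonneg fun k => tB_nonneg Λ lam hlam hΛ b _
  rw [XB]
  have he : ∑' (i : ℕ), tB Λ b (n + i) = ∑' (i : ℕ), tB Λ b (i + n) := by
    congr 1; funext i; rw [Nat.add_comm]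
  linarith [le_of_eq he.symm]

theorem XInf_le_XB_add (b : ℕ → Bool) (n : ℕ) : XInf Λ b ≤ XB Λ b n + sideLen Λ n := by
  rw [XInf, ← Summable.sum_add_tsum_nat_add n (summable_tB Λ lam hlam hΛ b), XB]
  have : ∑' (i : ℕ), tB Λ b (n + i) ≤ sideLen Λ n := by
    refine Real.tsum_le_of_sum_range_le (fun i => tB_nonneg Λ lam hlam hΛ b _) fun m => ?_
    have h1 : ∑ i ∈ Finset.range m, tB Λ b (n + i) = ∑ k ∈ Finset.Ico n (n + m), tB Λ b k := by
      rw [Finset.sum_Ico_eq_sum_range]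
      simp
    rw [h1]
    have := sum_Ico_tB_le Λ lam hlam hΛ b n (n + m) (Nat.le_add_right n m)
    have := sideLen_pos Λ lam hlam hΛ (n + m)
    linarith
  have he : ∑' (i : ℕ), tB Λ b (i + n) = ∑' (i : ℕ), tB Λ b (n + i) := by
    congr 1; funext i; rw [Nat.add_comm]
  rw [he]
  linarith


omit hlam hΛ in
theorem cornerPt_re (w : ℕ → Bool × Bool) (n : ℕ) :
    (cornerPt Λ w n).re = XB Λ (fun k => (w k).1) n := by
  rw [cornerPt, Complex.re_sum, XB]
  refine Finset.sum_congr rfl fun k _ => ?_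
  simp [tB, Complex.add_re, Complex.ofReal_re, Complex.mul_re]

omit hlam hΛ in
theorem cornerPt_im (w : ℕ → Bool × Bool) (n : ℕ) :
    (cornerPt Λ w n).im = XB Λ (fun k => (w k).2) n := by
  rw [cornerPt, Complex.im_sum, XB]
  refine Finset.sum_congr rfl fun k _ => ?_
  simp [tB, Complex.add_im, Complex.ofReal_im, Complex.mul_im]

omit hlam hΛ in
theorem piPt_re (w : ℕ → Bool × Bool) : (piPt Λ w).re = XInf Λ fun k => (w k).1 := by
  simp [piPt]

omit hlam hΛ in
theorem piPt_im (w : ℕ → Bool × Bool) : (piPt Λ w).im = XInf Λ fun k => (w k).2 := by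
  simp [piPt]

theorem piPt_mem (w : ℕ → Bool × Bool) (n : ℕ) : piPt Λ w ∈ cSquare Λ w n := by
  refine ⟨?_, ?_, ?_, ?_⟩
  · rw [piPt_re, cornerPt_re]; exact XB_le_XInf Λ lam hlam hΛ _ n
  · rw [piPt_re, cornerPt_re]; exact XInf_le_XB_add Λ lam hlam hΛ _ n
  · rw [piPt_im, cornerPt_im]; exact XB_le_XInf Λ lam hlam hΛ _ n
  · rw [piPt_im, cornerPt_im]; exact XInf_le_XB_add Λ lam hlam hΛ _ n

-- 1-D separation core
theorem sep1D {b c : ℕ → Bool} {k n : ℕ} (hk : k < n) (hagree : ∀ j, j < k → b j = c j)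
    (hb : b k = true) (hc : c k = false) :
    XB Λ c n + sideLen Λ n + (1 - 2 * lam) * sideLen Λ n ≤ XB Λ b n := by
  have hsplit : ∀ (d : ℕ → Bool), XB Λ d n = XB Λ d k + ∑ j ∈ Finset.Ico k n, tB Λ d j := by
    intro d
    simp only [XB, Finset.range_eq_Ico]
    exact (Finset.sum_Ico_consecutive _ (Nat.zero_le k) hk.le).symm
  have hXk : XB Λ b k = XB Λ c k := by
    rw [XB, XB]
    exact Finset.sum_congr rfl fun j hj => by
      rw [tB, tB, hagree j (Finset.mem_range.mp hj)]
  have hbot : ∀ (d : ℕ → Bool), ∑ j ∈ Finset.Ico k n, tB Λ d j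
      = tB Λ d k + ∑ j ∈ Finset.Ico (k+1) n, tB Λ d j := by
    intro d; exact Finset.sum_eq_sum_Ico_succ_bot hk _
  have h1 : tB Λ b k = sideLen Λ k - sideLen Λ (k+1) := by rw [tB, hb]; simp
  have h2 : tB Λ c k = 0 := by rw [tB, hc]; simp
  have h3 : ∑ j ∈ Finset.Ico (k+1) n, tB Λ c j ≤ sideLen Λ (k+1) - sideLen Λ n :=
    sum_Ico_tB_le Λ lam hlam hΛ c (k+1) n hk
  have h4 : 0 ≤ ∑ j ∈ Finset.Ico (k+1) n, tB Λ b j :=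
    Finset.sum_nonneg fun j _ => tB_nonneg Λ lam hlam hΛ b j
  -- side length inequalities
  have h5 : sideLen Λ (k+1) ≤ lam * sideLen Λ k := sideLen_succ_le Λ lam hlam hΛ k
  have h6 : sideLen Λ n ≤ sideLen Λ k := sideLen_anti Λ lam hlam hΛ hk.le
  have h7 : (0:ℝ) < 1 - 2 * lam := by linarith
  have h8 : (1 - 2*lam) * sideLen Λ n ≤ (1 - 2*lam) * sideLen Λ k :=
    mul_le_mul_of_nonneg_left h6 h7.le
  rw [hsplit b, hsplit c, hbot b, hbot c, hXk, h1, h2]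
  nlinarith [sideLen_pos Λ lam hlam hΛ k]

-- squares with different words in the first n letters are far apart
theorem sepSquares {v w : ℕ → Bool × Bool} {n : ℕ} (hne : ∃ k, k < n ∧ v k ≠ w k)
    {z z' : ℂ} (hz : z ∈ cSquare Λ v n) (hz' : z' ∈ cSquare Λ w n) :
    (1 - 2 * lam) * sideLen Λ n ≤ dist z z' := by
  classical
  have hex : ∃ k, v k ≠ w k := ⟨hne.choose, hne.choose_spec.2⟩
  set k := Nat.find hex with hkdef
  have hkne : v k ≠ w k := Nat.find_spec hex
  have hkmin : ∀ j, j < k → v j = w j := fun j hj => by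
    by_contra h; exact absurd (Nat.find_le h) (not_le.mpr hj)
  have hkn : k < n := lt_of_le_of_lt (Nat.find_min' hex hne.choose_spec.2)
    (by exact hne.choose_spec.1)
  -- the 1-D bound in one coordinate gives the distance bound
  have hS : 0 < sideLen Λ n := sideLen_pos Λ lam hlam hΛ n
  have h7 : (0:ℝ) < 1 - 2 * lam := by linarith
  have core : ∀ (b c : ℕ → Bool) (x y : ℝ), (∀ j, j < k → b j = c j) → b k ≠ c k →
      XB Λ b n ≤ x → x ≤ XB Λ b n + sideLen Λ n →
      XB Λ c n ≤ y → y ≤ XB Λ c n + sideLen Λ n →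
      (1 - 2 * lam) * sideLen Λ n ≤ |x - y| := by
    intro b c x y hag hbc hx1 hx2 hy1 hy2
    cases hb : b k <;> cases hc : c k
    · exact absurd (hb.trans hc.symm) hbc
    · have := sep1D Λ lam hlam hΛ hkn (fun j hj => (hag j hj).symm) hc hb
      rw [abs_sub_comm, abs_of_nonneg (by nlinarith)]
      linarith
    · have := sep1D Λ lam hlam hΛ hkn hag hb hc
      rw [abs_of_nonneg (by nlinarith)]
      linarith
    · exact absurd (hb.trans hc.symm) hbc
  obtain ⟨hz1, hz2, hz3, hz4⟩ := hz
  obtain ⟨hw1, hw2, hw3, hw4⟩ := hz'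
  rw [cornerPt_re] at hz1 hz2 hw1 hw2
  rw [cornerPt_im] at hz3 hz4 hw3 hw4
  have hcases : (v k).1 ≠ (w k).1 ∨ (v k).2 ≠ (w k).2 := by
    by_contra h
    push_neg at h
    exact hkne (Prod.ext h.1 h.2)
  rcases hcases with h | h
  · have := core (fun j => (v j).1) (fun j => (w j).1) z.re z'.re
      (fun j hj => congrArg Prod.fst (hkmin j hj)) h hz1 hz2 hw1 hw2
    calc (1 - 2*lam) * sideLen Λ n ≤ |z.re - z'.re| := this
      _ = |(z - z').re| := by rw [Complex.sub_re]
      _ ≤ ‖z - z'‖ := Complex.abs_re_le_norm _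
      _ = dist z z' := (Complex.dist_eq z z').symm
  · have := core (fun j => (v j).2) (fun j => (w j).2) z.im z'.im
      (fun j hj => congrArg Prod.snd (hkmin j hj)) h hz3 hz4 hw3 hw4
    calc (1 - 2*lam) * sideLen Λ n ≤ |z.im - z'.im| := this
      _ = |(z - z').im| := by rw [Complex.sub_im]
      _ ≤ ‖z - z'‖ := Complex.abs_im_le_norm _
      _ = dist z z' := (Complex.dist_eq z z').symm

theorem cSquare_congr {v w : ℕ → Bool × Bool} {n : ℕ} (h : ∀ k, k < n → v k = w k) :
    cSquare Λ v n = cSquare Λ w n := by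
  have : cornerPt Λ v n = cornerPt Λ w n := by
    rw [cornerPt, cornerPt]
    exact Finset.sum_congr rfl fun k hk => by rw [h k (Finset.mem_range.mp hk)]
  rw [cSquare, cSquare, this]

theorem gMap_mem (x : ℝ) (n : ℕ) : gMap Λ x ∈ cSquare Λ (wd x) n :=
  piPt_mem Λ lam hlam hΛ (wd x) n

theorem gMap_mem_K (x : ℝ) : gMap Λ x ∈ cantorK Λ := by
  refine Set.mem_iInter.mpr fun n => Set.mem_iUnion.mpr ⟨wd x, gMap_mem Λ lam hlam hΛ x n⟩

-- measurability
theorem measurable_gMap : Measurable (gMap Λ) := by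
  have hd : ∀ k, Measurable fun x => dI x k := by
    intro k
    exact ((Int.measurable_floor.comp (measurable_id.mul_const _)).sub
      (((Int.measurable_floor.comp (measurable_id.mul_const _))).const_mul 4))
  have hw1 : ∀ k, Measurable fun x => (wd x k).1 := fun k =>
    (measurable_from_top (f := fun d : ℤ => decide (d = 1 ∨ d = 3))).comp (hd k)
  have hw2 : ∀ k, Measurable fun x => (wd x k).2 := fun k =>
    (measurable_from_top (f := fun d : ℤ => decide (d = 2 ∨ d = 3))).comp (hd k)
  have ht : ∀ (p : ℝ → ℕ → Bool), (∀ k, Measurable fun x => p x k) →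
      Measurable fun x => XInf Λ (p x) := by
    intro p hp
    have hterm : ∀ j, Measurable fun x => tB Λ (p x) j := by
      intro j
      have : (fun x => tB Λ (p x) j) =
          (fun b : Bool => if b then sideLen Λ j - sideLen Λ (j+1) else 0) ∘ fun x => p x j := by
        funext x; simp [tB]
      rw [this]
      exact (measurable_from_top).comp (hp j)
    have hpart : ∀ m, Measurable fun x => ∑ j ∈ Finset.range m, tB Λ (p x) j := by
      intro m; exact Finset.measurable_sum _ fun j _ => hterm j
    apply measurable_of_tendsto_metrizable hpart
    rw [tendsto_pi_nhds]
    intro x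
    exact (summable_tB Λ lam hlam hΛ (p x)).hasSum.tendsto_sum_nat
  have h1 := ht (fun x k => (wd x k).1) hw1
  have h2 := ht (fun x k => (wd x k).2) hw2
  have : gMap Λ = fun x => Complex.ofReal (XInf Λ fun k => (wd x k).1) +
      Complex.ofReal (XInf Λ fun k => (wd x k).2) * Complex.I := by
    funext x; rfl
  rw [this]
  exact (Complex.measurable_ofReal.comp h1).add
    ((Complex.measurable_ofReal.comp h2).mul_const Complex.I)

theorem isClosed_cSquare (w : ℕ → Bool × Bool) (n : ℕ) : IsClosed (cSquare Λ w n) := by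
  apply IsClosed.inter (isClosed_le continuous_const Complex.continuous_re)
  apply IsClosed.inter (isClosed_le Complex.continuous_re continuous_const)
  exact IsClosed.inter (isClosed_le continuous_const Complex.continuous_im)
    (isClosed_le Complex.continuous_im continuous_const)

def linDensity (n : ℕ) : ℝ := 1 / (4 ^ n * sideLen Λ n)

theorem isClosed_unionSq (n : ℕ) : IsClosed (⋃ w : ℕ → Bool × Bool, cSquare Λ w n) := by
  have hrw : (⋃ w : ℕ → Bool × Bool, cSquare Λ w n) =
      ⋃ v : Fin n → Bool × Bool,
        cSquare Λ (fun k => if h : k < n then v ⟨k, h⟩ else (false, false)) n := by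
    apply subset_antisymm
    · rintro z hz
      obtain ⟨w, hw⟩ := Set.mem_iUnion.mp hz
      refine Set.mem_iUnion.mpr ⟨fun i => w i, ?_⟩
      have : cSquare Λ w n =
          cSquare Λ (fun k => if h : k < n then w k else (false, false)) n :=
        cSquare_congr Λ lam hlam hΛ fun k hk => by simp [hk]
      rwa [← this]
    · rintro z hz
      obtain ⟨v, hv⟩ := Set.mem_iUnion.mp hz
      exact Set.mem_iUnion.mpr ⟨_, hv⟩
  rw [hrw]
  exact isClosed_iUnion_of_finite fun v => isClosed_cSquare Λ lam hlam hΛ _ n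

theorem isClosed_K : IsClosed (cantorK Λ) :=
  isClosed_iInter fun n => isClosed_unionSq Λ lam hlam hΛ n

theorem μC_apply {s : Set ℂ} (hs : MeasurableSet s) :
    μC Λ s = volume ((gMap Λ) ⁻¹' s ∩ Set.Ico 0 1) := by
  rw [μC, Measure.map_apply (measurable_gMap Λ lam hlam hΛ) hs,
    Measure.restrict_apply (measurable_gMap Λ lam hlam hΛ hs)]

theorem μC_K : μC Λ (cantorK Λ) = 1 := by
  rw [μC_apply Λ lam hlam hΛ (isClosed_K Λ lam hlam hΛ).measurableSet]
  have : (gMap Λ) ⁻¹' (cantorK Λ) = Set.univ :=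
    Set.eq_univ_of_forall fun x => gMap_mem_K Λ lam hlam hΛ x
  rw [this, Set.univ_inter, Real.volume_Ico]
  norm_num

theorem μC_square_le (v : ℕ → Bool × Bool) (n : ℕ) :
    μC Λ (cSquare Λ v n) ≤ ENNReal.ofReal ((4:ℝ) ^ n)⁻¹ := by
  rw [μC_apply Λ lam hlam hΛ (isClosed_cSquare Λ lam hlam hΛ v n).measurableSet]
  set T := (gMap Λ) ⁻¹' (cSquare Λ v n) ∩ Set.Ico 0 1 with hT
  rcases T.eq_empty_or_nonempty with h | ⟨x₀, hx₀⟩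
  · simp [h]
  · have hsame : ∀ u, u ∈ T → ∀ k, k < n → wd u k = v k := by
      rintro u ⟨hu1, _⟩ k hk
      by_contra hne
      have hd := sepSquares Λ lam hlam hΛ (v := wd u) (w := v) ⟨k, hk, hne⟩
        (gMap_mem Λ lam hlam hΛ u n) hu1
      simp only [dist_self] at hd
      have h1 : (0:ℝ) < 1 - 2 * lam := by linarith
      nlinarith [sideLen_pos Λ lam hlam hΛ n]
    have key : ∀ x, x ∈ T → ⌊x * 4 ^ n⌋ = ⌊x₀ * 4 ^ n⌋ := by
      intro x hx
      have hfx : ⌊x⌋ = 0 := Int.floor_eq_zero_iff.mpr hx.2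
      have hfx₀ : ⌊x₀⌋ = 0 := Int.floor_eq_zero_iff.mpr hx₀.2
      refine floor_pow_eq n (fun k hk => ?_) hfx hfx₀
      exact wd_inj ((hsame x hx k hk).trans (hsame x₀ hx₀ k hk).symm)
    set m := ⌊x₀ * 4 ^ n⌋ with hm
    have hsub : T ⊆ Set.Ico ((m : ℝ) / 4 ^ n) (((m : ℝ) + 1) / 4 ^ n) := by
      intro x hx
      have h := key x hx
      have h4 : (0:ℝ) < 4 ^ n := by positivity
      constructor
      · rw [div_le_iff₀ h4]
        have := Int.floor_le (x * 4 ^ n)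
        rw [h] at this
        exact this
      · rw [lt_div_iff₀ h4]
        have := Int.lt_floor_add_one (x * 4 ^ n)
        rw [h] at this
        push_cast at this ⊢
        linarith
    calc volume T ≤ volume (Set.Ico ((m : ℝ) / 4 ^ n) (((m : ℝ) + 1) / 4 ^ n)) :=
          measure_mono hsub
      _ = ENNReal.ofReal (((m : ℝ) + 1) / 4 ^ n - (m : ℝ) / 4 ^ n) := Real.volume_Ico
      _ = ENNReal.ofReal ((4 : ℝ) ^ n)⁻¹ := by
          congr 1
          field_simp
          ring

theorem μC_unionSq_compl (n : ℕ) :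
    μC Λ ((⋃ w : ℕ → Bool × Bool, cSquare Λ w n)ᶜ) = 0 := by
  rw [μC_apply Λ lam hlam hΛ (isClosed_unionSq Λ lam hlam hΛ n).measurableSet.compl]
  have : (gMap Λ) ⁻¹' ((⋃ w : ℕ → Bool × Bool, cSquare Λ w n)ᶜ) = ∅ := by
    apply Set.eq_empty_of_forall_notMem
    intro x hx
    exact hx (Set.mem_iUnion.mpr ⟨wd x, gMap_mem Λ lam hlam hΛ x n⟩)
  rw [this]
  simp

theorem μC_small_diam {n : ℕ} {E : Set ℂ}
    (hE : EMetric.diam E < ENNReal.ofReal ((1 - 2 * lam) * sideLen Λ n)) :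
    μC Λ E ≤ ENNReal.ofReal ((4:ℝ) ^ n)⁻¹ := by
  set U := ⋃ w : ℕ → Bool × Bool, cSquare Λ w n with hU
  have hsub0 : E ⊆ (E ∩ U) ∪ Uᶜ := by
    intro z hz
    by_cases h : z ∈ U
    · exact Or.inl ⟨hz, h⟩
    · exact Or.inr h
  have hsplit : μC Λ E ≤ μC Λ (E ∩ U) + μC Λ Uᶜ :=
    le_trans (measure_mono hsub0) (measure_union_le _ _)
  rw [μC_unionSq_compl Λ lam hlam hΛ n, add_zero] at hsplit
  rcases (E ∩ U).eq_empty_or_nonempty with h | ⟨z₀, hz₀E, hz₀U⟩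
  · rw [h] at hsplit
    exact le_trans hsplit (by simp)
  · obtain ⟨w₀, hw₀⟩ := Set.mem_iUnion.mp hz₀U
    have hsub : E ∩ U ⊆ cSquare Λ w₀ n := by
      rintro z ⟨hzE, hzU⟩
      obtain ⟨w, hw⟩ := Set.mem_iUnion.mp hzU
      by_cases hc : ∀ k, k < n → w k = w₀ k
      · rw [← cSquare_congr Λ lam hlam hΛ hc]; exact hw
      · push_neg at hc
        obtain ⟨k, hk, hne⟩ := hc
        have hd := sepSquares Λ lam hlam hΛ ⟨k, hk, hne⟩ hw hw₀
        have hdiam : edist z z₀ ≤ EMetric.diam E := EMetric.edist_le_diam_of_mem hzE hz₀E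
        have : (ENNReal.ofReal ((1 - 2*lam) * sideLen Λ n)) ≤ edist z z₀ := by
          rw [edist_dist]
          exact ENNReal.ofReal_le_ofReal hd
        exact absurd (lt_of_le_of_lt (this.trans hdiam) hE) (lt_irrefl _)
    exact hsplit.trans ((measure_mono hsub).trans (μC_square_le Λ lam hlam hΛ w₀ n))


theorem exists_cover_bound (hden : Tendsto (linDensity Λ) atTop (𝓝 0)) {ε : ℝ} (hε : 0 < ε) :
    ∃ δ : ℝ≥0∞, 0 < δ ∧ ∀ E : Set ℂ, EMetric.diam E ≤ δ →
      μC Λ E ≤ ENNReal.ofReal (4 * ε / (1 - 2 * lam)) * EMetric.diam E := by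
  classical
  have hpos : (0:ℝ) < 1 - 2 * lam := by linarith
  obtain ⟨N, hN⟩ : ∃ N, ∀ m, N ≤ m → linDensity Λ m ≤ ε := by
    have := (hden.eventually_lt_const hε).exists_forall_of_atTop
    obtain ⟨N, hN⟩ := this
    exact ⟨N, fun m hm => (hN m hm).le⟩
  have hSN := sideLen_pos Λ lam hlam hΛ N
  refine ⟨ENNReal.ofReal ((1 - 2 * lam) * sideLen Λ N / 2),
    ENNReal.ofReal_pos.mpr (by positivity), ?_⟩
  intro E hdiamE
  have hDne : EMetric.diam E ≠ ∞ := ne_top_of_le_ne_top ENNReal.ofReal_ne_top hdiamE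
  set D := (EMetric.diam E).toReal with hD
  have hdiam_eq : EMetric.diam E = ENNReal.ofReal D := (ENNReal.ofReal_toReal hDne).symm
  have hDnonneg : (0:ℝ) ≤ D := ENNReal.toReal_nonneg
  have hDle : D ≤ (1 - 2 * lam) * sideLen Λ N / 2 := by
    rw [hdiam_eq] at hdiamE
    exact (ENNReal.ofReal_le_ofReal_iff (by positivity)).mp hdiamE
  have hcnonneg : (0:ℝ) ≤ 4 * ε / (1 - 2 * lam) := by positivity
  rcases eq_or_lt_of_le hDnonneg with h0 | hDpos
  · -- D = 0 : μC E = 0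
    have hall : ∀ m : ℕ, μC Λ E ≤ ENNReal.ofReal ((4:ℝ) ^ m)⁻¹ := by
      intro m
      refine μC_small_diam Λ lam hlam hΛ ?_
      rw [hdiam_eq, ← h0]
      have := sideLen_pos Λ lam hlam hΛ m
      simp only [ENNReal.ofReal_zero]
      exact ENNReal.ofReal_pos.mpr (by positivity)
    have hlim : Tendsto (fun m : ℕ => ENNReal.ofReal ((4:ℝ) ^ m)⁻¹) atTop (𝓝 0) := by
      have h1 : Tendsto (fun m : ℕ => ((4:ℝ) ^ m)⁻¹) atTop (𝓝 0) := by
        simp only [← inv_pow]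
        exact tendsto_pow_atTop_nhds_zero_of_lt_one (by norm_num) (by norm_num)
      have := ENNReal.tendsto_ofReal h1
      simpa using this
    have : μC Λ E ≤ 0 := ge_of_tendsto' hlim hall
    exact le_trans this zero_le
  · -- D > 0
    have hex : ∃ j : ℕ, ¬ D < (1 - 2 * lam) * sideLen Λ (N + j) := by
      have h1 : Tendsto (fun j : ℕ => (1 - 2 * lam) * sideLen Λ (N + j)) atTop (𝓝 0) := by
        have h2 : Tendsto (fun j : ℕ => sideLen Λ (N + j)) atTop (𝓝 0) := by
          have := (sideLen_tendsto Λ lam hlam hΛ).comp (tendsto_add_atTop_nat N)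
          simpa [Function.comp_def, Nat.add_comm] using this
        simpa using h2.const_mul (1 - 2 * lam)
      obtain ⟨j, hj⟩ := (h1.eventually_lt_const hDpos).exists
      exact ⟨j, not_lt.mpr hj.le⟩
    have hP : D < (1 - 2 * lam) * sideLen Λ (N + 0) := by
      rw [Nat.add_zero]
      nlinarith
    set j₀ := Nat.find hex with hj₀def
    have hj₀ : ¬ D < (1 - 2 * lam) * sideLen Λ (N + j₀) := Nat.find_spec hex
    have hj₀pos : j₀ ≠ 0 := by
      intro h
      rw [h] at hj₀
      exact hj₀ hP
    obtain ⟨j₁, hj₁⟩ : ∃ j₁, j₀ = j₁ + 1 := ⟨j₀ - 1, by omega⟩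
    set m := N + j₁ with hm
    have hPm : D < (1 - 2 * lam) * sideLen Λ m := by
      have := Nat.find_min hex (m := j₁) (by omega)
      exact not_not.mp this
    have hm1 : (1 - 2 * lam) * sideLen Λ (m + 1) ≤ D := by
      have : N + j₀ = m + 1 := by omega
      rw [this] at hj₀
      exact not_lt.mp hj₀
    have hmN : N ≤ m := Nat.le_add_right N j₁
    have hq := sideLen_quarter Λ lam hlam hΛ m
    have hS := sideLen_pos Λ lam hlam hΛ m
    have hμ : μC Λ E ≤ ENNReal.ofReal ((4:ℝ) ^ m)⁻¹ := by
      refine μC_small_diam Λ lam hlam hΛ ?_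
      rw [hdiam_eq]
      exact (ENNReal.ofReal_lt_ofReal_iff (by positivity)).mpr hPm
    have hreal : ((4:ℝ) ^ m)⁻¹ ≤ (4 * ε / (1 - 2 * lam)) * D := by
      have hden_m : linDensity Λ m ≤ ε := hN m hmN
      have h1 : ((4:ℝ) ^ m)⁻¹ = linDensity Λ m * sideLen Λ m := by
        rw [linDensity]
        field_simp
      have h2 : sideLen Λ m ≤ 4 * D / (1 - 2 * lam) := by
        rw [le_div_iff₀ hpos]
        nlinarith
      have hdpos : 0 < linDensity Λ m := by
        rw [linDensity]
        have : (0:ℝ) < 4 ^ m * sideLen Λ m := mul_pos (by positivity) hS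
        positivity
      calc ((4:ℝ) ^ m)⁻¹ = linDensity Λ m * sideLen Λ m := h1
        _ ≤ ε * (4 * D / (1 - 2 * lam)) :=
            mul_le_mul hden_m h2 hS.le hε.le
        _ = (4 * ε / (1 - 2 * lam)) * D := by field_simp
    calc μC Λ E ≤ ENNReal.ofReal ((4:ℝ) ^ m)⁻¹ := hμ
      _ ≤ ENNReal.ofReal ((4 * ε / (1 - 2 * lam)) * D) := ENNReal.ofReal_le_ofReal hreal
      _ = ENNReal.ofReal (4 * ε / (1 - 2 * lam)) * ENNReal.ofReal D :=
          ENNReal.ofReal_mul hcnonneg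
      _ = ENNReal.ofReal (4 * ε / (1 - 2 * lam)) * EMetric.diam E := by rw [← hdiam_eq]

theorem mass_dist (hden : Tendsto (linDensity Λ) atTop (𝓝 0)) {ε : ℝ} (hε : 0 < ε)
    (A : Set ℂ) :
    μC Λ A ≤ ENNReal.ofReal (4 * ε / (1 - 2 * lam)) * μH[(1:ℝ)] A := by
  have hpos : (0:ℝ) < 1 - 2 * lam := by linarith
  set c := ENNReal.ofReal (4 * ε / (1 - 2 * lam)) with hc
  have hc0 : c ≠ 0 := by
    rw [hc]
    exact (ENNReal.ofReal_pos.mpr (by positivity)).ne'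
  have hctop : c ≠ ∞ := ENNReal.ofReal_ne_top
  obtain ⟨δ, hδ, hbound⟩ := exists_cover_bound Λ lam hlam hΛ hden hε
  have hν : (c⁻¹ • μC Λ) ≤ μH[(1:ℝ)] := by
    refine Measure.le_hausdorffMeasure 1 _ δ hδ fun s hs => ?_
    rw [Measure.smul_apply, smul_eq_mul, ENNReal.rpow_one]
    calc c⁻¹ * μC Λ s ≤ c⁻¹ * (c * EMetric.diam s) :=
          mul_le_mul_right (hbound s hs) _
      _ = EMetric.diam s := by
          rw [← mul_assoc, ENNReal.inv_mul_cancel hc0 hctop, one_mul]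
  have h1 : c⁻¹ * μC Λ A ≤ μH[(1:ℝ)] A := by
    have := Measure.le_iff'.mp hν A
    rwa [Measure.smul_apply, smul_eq_mul] at this
  calc μC Λ A = c * (c⁻¹ * μC Λ A) := by
        rw [← mul_assoc, ENNReal.mul_inv_cancel hc0 hctop, one_mul]
    _ ≤ c * μH[(1:ℝ)] A := mul_le_mul_right h1 _

theorem hausdorff_infinite (hden : Tendsto (linDensity Λ) atTop (𝓝 0)) {A : Set ℂ}
    (hA : μC Λ A ≠ 0) : μH[(1:ℝ)] A = ∞ := by
  by_contra hfin
  have hpos : (0:ℝ) < 1 - 2 * lam := by linarith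
  have key : ∀ n : ℕ, μC Λ A ≤
      ENNReal.ofReal (4 * (1 / (n + 1)) / (1 - 2 * lam)) * μH[(1:ℝ)] A := by
    intro n
    exact mass_dist Λ lam hlam hΛ hden (by positivity) A
  have hlim : Tendsto
      (fun n : ℕ => ENNReal.ofReal (4 * (1 / (n + 1)) / (1 - 2 * lam)) * μH[(1:ℝ)] A)
      atTop (𝓝 0) := by
    have h1 : Tendsto (fun n : ℕ => 4 * (1 / ((n:ℝ) + 1)) / (1 - 2 * lam)) atTop (𝓝 0) := by
      have h2 := tendsto_one_div_add_atTop_nhds_zero_nat (𝕜 := ℝ)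
      have := (h2.const_mul 4).div_const (1 - 2 * lam)
      simpa using this
    have h3 : Tendsto (fun n : ℕ => ENNReal.ofReal (4 * (1 / ((n:ℝ) + 1)) / (1 - 2 * lam)))
        atTop (𝓝 0) := by
      have := ENNReal.tendsto_ofReal h1
      simpa using this
    have h4 := ENNReal.Tendsto.mul_const h3 (Or.inr hfin)
    simpa using h4
  have : μC Λ A ≤ 0 := ge_of_tendsto' hlim key
  exact hA (le_antisymm this zero_le)

end CantorGT


/-- If `aₙ → 0`, then the Cantor set `K` has Hausdorff dimension at least `1` and its
one-dimensional Hausdorff measure is not `σ`-finite. -/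
theorem dimH_ge_one_and_not_sigmaFinite (Λ : ℕ → ℝ) (lam : ℝ) (hlam : lam < 1 / 2)
    (hΛ : ∀ n, 1 / 4 ≤ Λ n ∧ Λ n ≤ lam)
    (ha : Tendsto (linDensity Λ) atTop (𝓝 0)) :
    1 ≤ dimH (cantorK Λ) ∧
      ¬ SigmaFinite ((MeasureTheory.Measure.hausdorffMeasure 1 : Measure ℂ).restrict
        (cantorK Λ)) := by
  have hden : Tendsto (linDensity Λ) atTop (𝓝 0) := ha
  have hK0 : CantorGT.μC Λ (cantorK Λ) = 1 := CantorGT.μC_K Λ lam hlam hΛ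
  have hKinf : μH[(1:ℝ)] (cantorK Λ) = ∞ :=
    CantorGT.hausdorff_infinite Λ lam hlam hΛ hden (by rw [hK0]; exact one_ne_zero)
  have hKmeas : MeasurableSet (cantorK Λ) := (CantorGT.isClosed_K Λ lam hlam hΛ).measurableSet
  constructor
  · have h : ((1:NNReal) : ℝ≥0∞) ≤ dimH (cantorK Λ) := by
      apply le_dimH_of_hausdorffMeasure_eq_top
      rw [show ((1:NNReal) : ℝ) = (1:ℝ) by norm_num]
      exact hKinf
    simpa using h
  · intro hσ
    set ν := (MeasureTheory.Measure.hausdorffMeasure 1 : Measure ℂ).restrict (cantorK Λ)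
      with hν
    have hzero : ∀ n : ℕ, CantorGT.μC Λ (spanningSets ν n ∩ cantorK Λ) = 0 := by
      intro n
      by_contra h
      have hfin : μH[(1:ℝ)] (spanningSets ν n ∩ cantorK Λ) < ∞ := by
        have h1 : ν (spanningSets ν n) = μH[(1:ℝ)] (spanningSets ν n ∩ cantorK Λ) :=
          Measure.restrict_apply (measurableSet_spanningSets ν n)
        rw [← h1]
        exact measure_spanningSets_lt_top ν n
      exact hfin.ne (CantorGT.hausdorff_infinite Λ lam hlam hΛ hden h)
    have hcover : cantorK Λ = ⋃ n, spanningSets ν n ∩ cantorK Λ := by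
      rw [← Set.iUnion_inter, iUnion_spanningSets, Set.univ_inter]
    have : CantorGT.μC Λ (cantorK Λ) = 0 := by
      rw [hcover]
      exact le_antisymm (le_trans (measure_iUnion_le _) (by simp [hzero])) zero_le
    rw [hK0] at this
    exact one_ne_zero this
end
end
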